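/- arXiv:1604.04766 — 7 statements merged into one kernel-verified Lean document; each statement's English description precedes it below -/
import Mathlib

section
/- For every permutation π of {1,…,n}, the minimum number of prefix exchanges (transpositions of the form (1,i) with 2 ≤ i ≤ n) needed to transform π into the identity equals n + c₂(π) − c₁(π) − d, where c₁(π) is the number of fixed points of π, c₂(π) is the number of cycles of π of length at least 2, and d = 0 if π(1) = 1 and d = 2 otherwise. -/
open Equiv Finset
open scoped Classical

set_option linter.unusedSectionVars false
set_option linter.unusedVariables false
set_option maxHeartbeats 1000000

noncomputable section

/-- Number of fixed points of a permutation. -/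
def c1 {n : ℕ} (π : Equiv.Perm (Fin n)) : ℕ :=
  (Finset.univ.filter fun i => π i = i).card

/-- Number of cycles of length at least 2 of a permutation. -/
def c2 {n : ℕ} (π : Equiv.Perm (Fin n)) : ℕ := π.cycleType.card

/-- The prefix exchange distance: the minimum number of prefix exchanges
(right-composition with a transposition `(1, i)`, `i ≠ 1`) sorting `π`. -/
def pexcDist {n : ℕ} (π : Equiv.Perm (Fin (n + 1))) : ℕ :=
  sInf {m : ℕ | ∃ l : List (Equiv.Perm (Fin (n + 1))), l.length = m ∧
    (∀ g ∈ l, ∃ i : Fin (n + 1), i ≠ 0 ∧ g = Equiv.swap 0 i) ∧ π * l.prod = 1}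

namespace PexcAux

open Equiv.Perm

variable {α : Type*} [Fintype α] [DecidableEq α]

def c2' (π : Equiv.Perm α) : ℕ := π.cycleType.card

def c1' (π : Equiv.Perm α) : ℕ := (Finset.univ.filter fun i => π i = i).card

theorem not_sameCycle_fixed (π : Equiv.Perm α) {t x : α} (ht : π t ≠ t) (hx : π x = x) :
    ¬ π.SameCycle t x := by
  intro h
  obtain ⟨k, hk⟩ := h.symm
  rw [Equiv.Perm.zpow_apply_eq_self_of_apply_eq_self hx k] at hk
  rw [← hk] at ht
  exact ht hx

theorem decomp (π : Equiv.Perm α) (t : α) :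
    ∃ ρ : Equiv.Perm α, π = π.cycleOf t * ρ ∧ (π.cycleOf t).Disjoint ρ ∧
      (∀ z, π.SameCycle t z → ρ z = z) ∧ (∀ z, ¬ π.SameCycle t z → ρ z = π z) := by
  refine ⟨(π.cycleOf t)⁻¹ * π, (mul_inv_cancel_left _ _).symm, ?_, ?_, ?_⟩
  · rw [Equiv.Perm.disjoint_iff_eq_or_eq]
    intro z
    by_cases h : π.SameCycle t z
    · right
      have h1 : π.cycleOf t z = π z := h.cycleOf_apply
      simp only [Equiv.Perm.mul_apply]
      rw [Equiv.Perm.inv_eq_iff_eq, h1]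
    · exact Or.inl (Equiv.Perm.cycleOf_apply_of_not_sameCycle h)
  · intro z h
    have h1 : π.cycleOf t z = π z := h.cycleOf_apply
    simp only [Equiv.Perm.mul_apply]
    rw [Equiv.Perm.inv_eq_iff_eq, h1]
  · intro z h
    have h2 : ¬ π.SameCycle t (π z) := by rwa [Equiv.Perm.sameCycle_apply_right]
    have h1 : π.cycleOf t (π z) = π z := Equiv.Perm.cycleOf_apply_of_not_sameCycle h2
    simp only [Equiv.Perm.mul_apply]
    rw [Equiv.Perm.inv_eq_iff_eq, h1]

theorem key (π : Equiv.Perm α) {x y t : α} (hxy : x ≠ y) (ht : π t ≠ t)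
    (hx : π.SameCycle t x ∨ π x = x) (hy : π.SameCycle t y ∨ π y = y) :
    ∃ ρ : Equiv.Perm α,
      c2' π = 1 + c2' ρ ∧
      c2' (π * Equiv.swap x y) = (π.cycleOf t * Equiv.swap x y).cycleType.card + c2' ρ := by
  obtain ⟨ρ, hdec, hdisj, hsc, hnsc⟩ := decomp π t
  have hρfix : ∀ z, π.SameCycle t z ∨ π z = z → ρ z = z := by
    intro z hz
    rcases hz with h | h
    · exact hsc z h
    · by_cases hs : π.SameCycle t z
      · exact hsc z hs
      · rw [hnsc z hs, h]
  have hρx : ρ x = x := hρfix x hx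
  have hρy : ρ y = y := hρfix y hy
  have hds : ρ.Disjoint (Equiv.swap x y) := by
    rw [Equiv.Perm.disjoint_iff_eq_or_eq]
    intro z
    by_cases hzx : z = x
    · exact Or.inl (hzx ▸ hρx)
    by_cases hzy : z = y
    · exact Or.inl (hzy ▸ hρy)
    · exact Or.inr (Equiv.swap_apply_of_ne_of_ne hzx hzy)
  have hcomm : ρ * Equiv.swap x y = Equiv.swap x y * ρ := hds.commute.eq
  have hfact : π * Equiv.swap x y = (π.cycleOf t * Equiv.swap x y) * ρ := by
    conv_lhs => rw [hdec]
    simp only [mul_assoc]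
    rw [hcomm]
  have hdisj2 : (π.cycleOf t * Equiv.swap x y).Disjoint ρ := by
    rw [Equiv.Perm.disjoint_iff_eq_or_eq]
    intro z
    by_cases hz : ρ z = z
    · exact Or.inr hz
    · left
      have hzx : z ≠ x := fun h => hz (h ▸ hρx)
      have hzy : z ≠ y := fun h => hz (h ▸ hρy)
      have hcz : π.cycleOf t z = z := by
        rcases (Equiv.Perm.disjoint_iff_eq_or_eq.mp hdisj) z with h | h
        · exact h
        · exact absurd h hz
      simp [Equiv.Perm.mul_apply, Equiv.swap_apply_of_ne_of_ne hzx hzy, hcz]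
  have hct : (π.cycleOf t).IsCycle := Equiv.Perm.isCycle_cycleOf π ht
  refine ⟨ρ, ?_, ?_⟩
  · rw [c2']
    conv_lhs => rw [hdec]
    rw [Equiv.Perm.Disjoint.cycleType_mul hdisj, Multiset.card_add, hct.cycleType]
    simp [c2']
  · rw [c2', hfact, Equiv.Perm.Disjoint.cycleType_mul hdisj2, Multiset.card_add]
    rfl

theorem isCycle_mul_swap_fixed {c : Equiv.Perm α} (hc : c.IsCycle) {x y : α} (hxy : x ≠ y)
    (hx : c x = x) (hy : c y ≠ y) : (c * Equiv.swap x y).IsCycle := by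
  set g := c * Equiv.swap x y with hg
  have hgy : g y = x := by
    simp [hg, Equiv.Perm.mul_apply, Equiv.swap_apply_right, hx]
  have hgx : g x = c y := by
    simp [hg, Equiv.Perm.mul_apply, Equiv.swap_apply_left]
  have hgz : ∀ z, z ≠ x → z ≠ y → g z = c z := fun z h1 h2 => by
    simp [hg, Equiv.Perm.mul_apply, Equiv.swap_apply_of_ne_of_ne h1 h2]
  have hxsupp : ∀ k : ℕ, (c ^ k) y ≠ x := by
    intro k h
    have h1 : (c ^ k) y ∈ c.support :=
      Equiv.Perm.pow_apply_mem_support.mpr (Equiv.Perm.mem_support.mpr hy)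
    rw [h, Equiv.Perm.mem_support] at h1
    exact h1 hx
  have claim : ∀ k : ℕ, g.SameCycle y ((c ^ k) y) := by
    intro k
    induction k with
    | zero => simpa using Equiv.Perm.SameCycle.refl g y
    | succ k ih =>
      have hk : (c ^ (k + 1)) y = c ((c ^ k) y) := by
        rw [pow_succ']
        rfl
      by_cases hky : (c ^ k) y = y
      · have h1 : g.SameCycle y x := ⟨1, by simpa using hgy⟩
        have h2 : g.SameCycle x (g x) := ⟨1, by simp⟩
        rw [hk, hky, ← hgx]
        exact h1.trans h2
      · have h3 : g ((c ^ k) y) = (c ^ (k + 1)) y := by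
          rw [hgz _ (hxsupp k) hky, hk]
        rw [← h3]
        exact ih.trans ⟨1, by simp⟩
  refine ⟨y, by rw [hgy]; exact hxy, fun b hb => ?_⟩
  by_cases hbx : b = x
  · exact ⟨1, by simpa [hbx] using hgy⟩
  by_cases hby : b = y
  · exact hby ▸ Equiv.Perm.SameCycle.refl g y
  · have hcb : c b ≠ b := by
      rw [← hgz b hbx hby]
      exact hb
    obtain ⟨i, _, _, hi⟩ := (hc.sameCycle hy hcb).exists_pow_eq c
    rw [← hi]
    exact claim i

-- Case B : merge a fixed point x into the cycle of y.
theorem c2_fix_merge (π : Equiv.Perm α) {x y : α} (hxy : x ≠ y) (hx : π x = x) (hy : π y ≠ y) :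
    c2' (π * Equiv.swap x y) = c2' π := by
  obtain ⟨ρ, h1, h2⟩ := key π hxy hy (Or.inr hx) (Or.inl (Equiv.Perm.SameCycle.refl _ _))
  have hc : (π.cycleOf y).IsCycle := Equiv.Perm.isCycle_cycleOf π hy
  have hcx : π.cycleOf y x = x :=
    Equiv.Perm.cycleOf_apply_of_not_sameCycle (not_sameCycle_fixed π hy hx)
  have hcy : π.cycleOf y y ≠ y := by
    rw [Equiv.Perm.cycleOf_apply_self]; exact hy
  have hcyc : (π.cycleOf y * Equiv.swap x y).IsCycle := isCycle_mul_swap_fixed hc hxy hcx hcy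
  have hcard : (π.cycleOf y * Equiv.swap x y).cycleType.card = 1 :=
    Equiv.Perm.card_cycleType_eq_one.mpr hcyc
  omega

-- Case A : both x and y fixed.
theorem c2_A (π : Equiv.Perm α) {x y : α} (hxy : x ≠ y) (hx : π x = x) (hy : π y = y) :
    c2' (π * Equiv.swap x y) = c2' π + 1 := by
  have hd : π.Disjoint (Equiv.swap x y) := by
    rw [Equiv.Perm.disjoint_iff_eq_or_eq]
    intro z
    by_cases hzx : z = x
    · exact Or.inl (hzx ▸ hx)
    by_cases hzy : z = y
    · exact Or.inl (hzy ▸ hy)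
    · exact Or.inr (Equiv.swap_apply_of_ne_of_ne hzx hzy)
  rw [c2', Equiv.Perm.Disjoint.cycleType_mul hd, Multiset.card_add, (Equiv.Perm.isCycle_swap hxy).cycleType]
  simp [c2']

-- Case 4a : π x = y, π y = x (a 2-cycle is removed).
theorem c2_two (π : Equiv.Perm α) {x y : α} (hxy : x ≠ y) (hπx : π x = y) (hπy : π y = x) :
    c2' π = c2' (π * Equiv.swap x y) + 1 := by
  set σ := π * Equiv.swap x y with hσ
  have hσx : σ x = x := by simp [hσ, Equiv.Perm.mul_apply, Equiv.swap_apply_left, hπy]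
  have hσy : σ y = y := by simp [hσ, Equiv.Perm.mul_apply, Equiv.swap_apply_right, hπx]
  have hπeq : π = σ * Equiv.swap x y := by
    rw [hσ, mul_assoc, Equiv.swap_mul_self, mul_one]
  have hd : σ.Disjoint (Equiv.swap x y) := by
    rw [Equiv.Perm.disjoint_iff_eq_or_eq]
    intro z
    by_cases hzx : z = x
    · exact Or.inl (hzx ▸ hσx)
    by_cases hzy : z = y
    · exact Or.inl (hzy ▸ hσy)
    · exact Or.inr (Equiv.swap_apply_of_ne_of_ne hzx hzy)
  conv_lhs => rw [c2', hπeq]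
  rw [Equiv.Perm.Disjoint.cycleType_mul hd, Multiset.card_add, (Equiv.Perm.isCycle_swap hxy).cycleType]
  simp [c2']

-- Case 4b : π x = y, π y ≠ x : excise y from the cycle of x.
theorem c2_excise (π : Equiv.Perm α) {x y : α} (hxy : x ≠ y) (hπx : π x = y) (hπy : π y ≠ x) :
    c2' (π * Equiv.swap x y) = c2' π := by
  have hπxx : π x ≠ x := by rw [hπx]; exact fun h => hxy h.symm
  have hπyy : π y ≠ y := fun h => hxy (π.injective (hπx.trans h.symm))
  have hsxy : π.SameCycle x y := ⟨1, by simpa using hπx⟩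
  obtain ⟨ρ, h1, h2⟩ := key π hxy hπxx (Or.inl (Equiv.Perm.SameCycle.refl _ _)) (Or.inl hsxy)
  set c := π.cycleOf x with hc
  have hcx : c x = y := by rw [hc, Equiv.Perm.cycleOf_apply_self, hπx]
  have hcy : c y = π y := hsxy.cycleOf_apply
  have hccyc : c.IsCycle := Equiv.Perm.isCycle_cycleOf π hπxx
  have hinvy : c⁻¹ y = x := by rw [Equiv.Perm.inv_eq_iff_eq, hcx]
  have hicyc : (Equiv.swap y (c⁻¹ y) * c⁻¹).IsCycle := by
    refine Equiv.Perm.IsCycle.swap_mul hccyc.inv ?_ ?_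
    · rw [hinvy]; exact fun h => hxy h
    · rw [hinvy]
      intro h
      rw [Equiv.Perm.inv_eq_iff_eq, hcy] at h
      exact hπy h.symm
  have hgcyc : (c * Equiv.swap x y).IsCycle := by
    rw [← Equiv.Perm.isCycle_inv]
    have : (c * Equiv.swap x y)⁻¹ = Equiv.swap y (c⁻¹ y) * c⁻¹ := by
      rw [mul_inv_rev, Equiv.swap_inv, hinvy, Equiv.swap_comm]
    rw [this]
    exact hicyc
  have hcard : (c * Equiv.swap x y).cycleType.card = 1 :=
    Equiv.Perm.card_cycleType_eq_one.mpr hgcyc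
  omega

-- Same-cycle case : c2 drops by at most one.
theorem c2_same (π : Equiv.Perm α) {x y : α} (hxy : x ≠ y) (hx : π x ≠ x)
    (hs : π.SameCycle x y) : c2' π ≤ c2' (π * Equiv.swap x y) + 1 := by
  obtain ⟨ρ, h1, h2⟩ := key π hxy hx (Or.inl (Equiv.Perm.SameCycle.refl _ _)) (Or.inl hs)
  omega

-- Different nontrivial cycles : c2 drops by at most one (in fact exactly one).
theorem c2_diff (π : Equiv.Perm α) {x y : α} (hxy : x ≠ y) (hx : π x ≠ x) (hy : π y ≠ y)
    (hns : ¬ π.SameCycle x y) : c2' π ≤ c2' (π * Equiv.swap x y) + 1 := by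
  obtain ⟨ρ, hdec, hdisj, hsc, hnsc⟩ := decomp π x
  have hρy : ρ y = π y := hnsc y hns
  have hρyy : ρ y ≠ y := by rw [hρy]; exact hy
  obtain ⟨ρ₂, hdec2, hdisj2, hsc2, hnsc2⟩ := decomp ρ y
  have hρx : ρ x = x := hsc x (Equiv.Perm.SameCycle.refl _ _)
  have hρ₂x : ρ₂ x = x := by
    rw [hnsc2 x (not_sameCycle_fixed ρ hρyy hρx), hρx]
  have hρ₂y : ρ₂ y = y := hsc2 y (Equiv.Perm.SameCycle.refl _ _)
  set c0 := π.cycleOf x with hc0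
  set ci := ρ.cycleOf y with hci
  have hρ₂ne : ∀ z, ρ₂ z ≠ z → z ≠ x ∧ z ≠ y ∧ ci z = z ∧ c0 z = z := by
    intro z hz
    have hzx : z ≠ x := fun h => hz (h ▸ hρ₂x)
    have hzy : z ≠ y := fun h => hz (h ▸ hρ₂y)
    have hciz : ci z = z := by
      rcases (Equiv.Perm.disjoint_iff_eq_or_eq.mp hdisj2) z with h | h
      · exact h
      · exact absurd h hz
    have hρz : ρ z ≠ z := by
      have hnsz : ¬ ρ.SameCycle y z := fun h => hz (hsc2 z h)
      rw [hnsc2 z hnsz] at hz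
      exact hz
    have hc0z : c0 z = z := by
      rcases (Equiv.Perm.disjoint_iff_eq_or_eq.mp hdisj) z with h | h
      · exact h
      · exact absurd h hρz
    exact ⟨hzx, hzy, hciz, hc0z⟩
  have hds : ρ₂.Disjoint (Equiv.swap x y) := by
    rw [Equiv.Perm.disjoint_iff_eq_or_eq]
    intro z
    by_cases hz : ρ₂ z = z
    · exact Or.inl hz
    · obtain ⟨h1, h2, _, _⟩ := hρ₂ne z hz
      exact Or.inr (Equiv.swap_apply_of_ne_of_ne h1 h2)
  have hfact : π * Equiv.swap x y = (c0 * ci * Equiv.swap x y) * ρ₂ := by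
    conv_lhs => rw [hdec, hdec2]
    simp only [mul_assoc]
    rw [hds.commute.eq]
  have hdisj3 : (c0 * ci * Equiv.swap x y).Disjoint ρ₂ := by
    rw [Equiv.Perm.disjoint_iff_eq_or_eq]
    intro z
    by_cases hz : ρ₂ z = z
    · exact Or.inr hz
    · obtain ⟨h1, h2, h3, h4⟩ := hρ₂ne z hz
      left
      simp [Equiv.Perm.mul_apply, Equiv.swap_apply_of_ne_of_ne h1 h2, h3, h4]
  have hc0cyc : c0.IsCycle := Equiv.Perm.isCycle_cycleOf π hx
  have hcicyc : ci.IsCycle := Equiv.Perm.isCycle_cycleOf ρ hρyy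
  have hπcount : c2' π = 2 + c2' ρ₂ := by
    have hdisj' : c0.Disjoint (ci * ρ₂) := by rw [← hdec2]; exact hdisj
    rw [c2']
    conv_lhs => rw [hdec, hdec2]
    rw [Equiv.Perm.Disjoint.cycleType_mul hdisj', Multiset.card_add, Equiv.Perm.Disjoint.cycleType_mul hdisj2, Multiset.card_add,
      hc0cyc.cycleType, hcicyc.cycleType]
    simp [c2']
    omega
  have hne : c0 * ci * Equiv.swap x y ≠ 1 := by
    intro h
    have hax : π x ≠ x := hx
    have hay : π x ≠ y := fun h' => hns ⟨1, by simpa using h'⟩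
    have hρa : ρ (π x) = π x := hsc (π x) ⟨1, by simp⟩
    have hcia : ci (π x) = π x :=
      Equiv.Perm.cycleOf_apply_of_not_sameCycle (not_sameCycle_fixed ρ hρyy hρa)
    have hsa : π.SameCycle x (π x) := ⟨1, by simp⟩
    have hc0a : c0 (π x) = π (π x) := hsa.cycleOf_apply
    have hπa : π (π x) ≠ π x := fun h' => hx (π.injective h')
    have happ : (c0 * ci * Equiv.swap x y) (π x) = π (π x) := by
      simp [Equiv.Perm.mul_apply, Equiv.swap_apply_of_ne_of_ne hax hay, hcia, hc0a]
    rw [h] at happ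
    simp at happ
    exact hx happ.symm
  have hσcount : c2' (π * Equiv.swap x y) = (c0 * ci * Equiv.swap x y).cycleType.card + c2' ρ₂ := by
    rw [c2', hfact, Equiv.Perm.Disjoint.cycleType_mul hdisj3, Multiset.card_add]
    rfl
  have hpos : 1 ≤ (c0 * ci * Equiv.swap x y).cycleType.card := by
    have := Equiv.Perm.card_cycleType_pos.mpr hne
    omega
  omega

theorem c1_diff (π : Equiv.Perm α) {x y : α} (hxy : x ≠ y) :
    (c1' (π * Equiv.swap x y) : ℤ) - c1' π =
      (((if π y = x then 1 else 0) - (if π x = x then 1 else 0)) +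
       ((if π x = y then 1 else 0) - (if π y = y then 1 else 0)) : ℤ) := by
  have hcard : ∀ ν : Equiv.Perm α, (c1' ν : ℤ) = ∑ z : α, (if ν z = z then (1 : ℤ) else 0) := by
    intro ν
    rw [c1', Finset.card_filter]
    push_cast
    rfl
  rw [hcard, hcard, ← Finset.sum_sub_distrib]
  have hvan : ∀ z ∈ Finset.univ, z ∉ ({x, y} : Finset α) →
      (if (π * Equiv.swap x y) z = z then (1 : ℤ) else 0) - (if π z = z then 1 else 0) = 0 := by
    intro z _ hz
    simp only [Finset.mem_insert, Finset.mem_singleton] at hz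
    push_neg at hz
    rw [Equiv.Perm.mul_apply, Equiv.swap_apply_of_ne_of_ne hz.1 hz.2]
    ring
  rw [← Finset.sum_subset (Finset.subset_univ ({x, y} : Finset α)) hvan,
    Finset.sum_pair hxy]
  rw [Equiv.Perm.mul_apply, Equiv.Perm.mul_apply, Equiv.swap_apply_left, Equiv.swap_apply_right]

end PexcAux

section Main
open PexcAux
variable {n : ℕ}

def Phi (π : Equiv.Perm (Fin (n + 1))) : ℤ :=
  (n + 1 : ℤ) + c2 π - c1 π - (if π 0 = 0 then 0 else 2)

theorem c2_eq (π : Equiv.Perm (Fin (n + 1))) : c2 π = c2' π := rfl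
theorem c1_eq (π : Equiv.Perm (Fin (n + 1))) : c1 π = c1' π := rfl

theorem c1_support (π : Equiv.Perm (Fin (n + 1))) :
    c1 π + π.support.card = n + 1 := by
  have h := Finset.card_filter_add_card_filter_not
    (s := (Finset.univ : Finset (Fin (n + 1)))) (p := fun z => π z = z)
  rw [Finset.card_univ, Fintype.card_fin] at h
  rw [c1]
  convert h using 2
  congr 1

theorem two_c2_le (π : Equiv.Perm (Fin (n + 1))) : 2 * c2 π ≤ π.support.card := by
  rw [← Equiv.Perm.sum_cycleType, c2]
  have h := Multiset.card_nsmul_le_sum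
    (fun x hx => Equiv.Perm.two_le_of_mem_cycleType (σ := π) hx)
  simpa [mul_comm, smul_eq_mul] using h

theorem Phi_one : Phi (1 : Equiv.Perm (Fin (n + 1))) = 0 := by
  have h1 : c1 (1 : Equiv.Perm (Fin (n + 1))) = n + 1 := by
    rw [c1]
    simp
  have h2 : c2 (1 : Equiv.Perm (Fin (n + 1))) = 0 := by
    rw [c2, Equiv.Perm.cycleType_one]
    rfl
  rw [Phi, h1, h2]
  norm_num

theorem Phi_pos {π : Equiv.Perm (Fin (n + 1))} (h : π ≠ 1) : 1 ≤ Phi π := by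
  have h1 := c1_support π
  have h2 := two_c2_le π
  have h3 : 1 ≤ c2 π := Equiv.Perm.card_cycleType_pos.mpr h
  rw [Phi]
  split_ifs with h0 <;> omega

theorem Phi_nonneg (π : Equiv.Perm (Fin (n + 1))) : 0 ≤ Phi π := by
  by_cases h : π = 1
  · rw [h, Phi_one]
  · linarith [Phi_pos h]

theorem sigma_zero (π : Equiv.Perm (Fin (n + 1))) (i : Fin (n + 1)) :
    (π * Equiv.swap 0 i) 0 = π i := by
  rw [Equiv.Perm.mul_apply, Equiv.swap_apply_left]

theorem Phi_move_fix (π : Equiv.Perm (Fin (n + 1))) {i : Fin (n + 1)} (hi : i ≠ 0)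
    (h0 : π 0 = 0) (hii : π i ≠ i) : Phi (π * Equiv.swap 0 i) = Phi π - 1 := by
  have hxy : (0 : Fin (n + 1)) ≠ i := Ne.symm hi
  have hc1 := c1_diff π hxy
  have hπi0 : π i ≠ 0 := fun h => hi (π.injective (h.trans h0.symm))
  have h0i : π 0 ≠ i := by rw [h0]; exact hxy
  rw [if_neg hπi0, if_pos h0, if_neg h0i, if_neg hii] at hc1
  have hc2 : (c2' (π * Equiv.swap 0 i) : ℤ) = c2' π := by
    exact_mod_cast c2_fix_merge π hxy h0 hii
  have hd : (π * Equiv.swap 0 i) 0 ≠ 0 := by rw [sigma_zero]; exact hπi0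
  rw [Phi, Phi, if_pos h0, if_neg hd, c2_eq, c2_eq, c1_eq, c1_eq]
  linarith

theorem Phi_move_two (π : Equiv.Perm (Fin (n + 1))) {i : Fin (n + 1)} (hi : i ≠ 0)
    (hπ0 : π 0 = i) (hπi : π i = 0) : Phi (π * Equiv.swap 0 i) = Phi π - 1 := by
  have hxy : (0 : Fin (n + 1)) ≠ i := Ne.symm hi
  have hc1 := c1_diff π hxy
  have h00 : π 0 ≠ 0 := by rw [hπ0]; exact hi
  have hii : π i ≠ i := by rw [hπi]; exact hxy
  rw [if_pos hπi, if_neg h00, if_pos hπ0, if_neg hii] at hc1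
  have hc2 : (c2' π : ℤ) = c2' (π * Equiv.swap 0 i) + 1 := by
    exact_mod_cast c2_two π hxy hπ0 hπi
  have hd : (π * Equiv.swap 0 i) 0 = 0 := by rw [sigma_zero]; exact hπi
  rw [Phi, Phi, if_neg h00, if_pos hd, c2_eq, c2_eq, c1_eq, c1_eq]
  linarith

theorem Phi_move_exc (π : Equiv.Perm (Fin (n + 1))) {i : Fin (n + 1)} (hi : i ≠ 0)
    (hπ0 : π 0 = i) (hπi : π i ≠ 0) : Phi (π * Equiv.swap 0 i) = Phi π - 1 := by
  have hxy : (0 : Fin (n + 1)) ≠ i := Ne.symm hi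
  have hc1 := c1_diff π hxy
  have h00 : π 0 ≠ 0 := by rw [hπ0]; exact hi
  have hii : π i ≠ i := fun h => hxy (π.injective (hπ0.trans h.symm))
  rw [if_neg hπi, if_neg h00, if_pos hπ0, if_neg hii] at hc1
  have hc2 : (c2' (π * Equiv.swap 0 i) : ℤ) = c2' π := by
    exact_mod_cast c2_excise π hxy hπ0 hπi
  have hd : (π * Equiv.swap 0 i) 0 ≠ 0 := by rw [sigma_zero]; exact hπi
  rw [Phi, Phi, if_neg h00, if_neg hd, c2_eq, c2_eq, c1_eq, c1_eq]
  linarith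

theorem Phi_step (π : Equiv.Perm (Fin (n + 1))) {i : Fin (n + 1)} (hi : i ≠ 0) :
    Phi π ≤ Phi (π * Equiv.swap 0 i) + 1 := by
  have hxy : (0 : Fin (n + 1)) ≠ i := Ne.symm hi
  by_cases h0 : π 0 = 0
  · by_cases hii : π i = i
    · -- both fixed
      have hc1 := c1_diff π hxy
      have hπi0 : π i ≠ 0 := by rw [hii]; exact hi
      have h0i : π 0 ≠ i := by rw [h0]; exact hxy
      rw [if_neg hπi0, if_pos h0, if_neg h0i, if_pos hii] at hc1
      have hc2 : (c2' (π * Equiv.swap 0 i) : ℤ) = c2' π + 1 := by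
        exact_mod_cast c2_A π hxy h0 hii
      have hd : (π * Equiv.swap 0 i) 0 ≠ 0 := by rw [sigma_zero]; exact hπi0
      rw [Phi, Phi, if_pos h0, if_neg hd, c2_eq, c2_eq, c1_eq, c1_eq]
      linarith
    · rw [Phi_move_fix π hi h0 hii]; linarith
  · by_cases h0i : π 0 = i
    · by_cases hπi : π i = 0
      · rw [Phi_move_two π hi h0i hπi]; linarith
      · rw [Phi_move_exc π hi h0i hπi]; linarith
    · by_cases hπi : π i = 0
      · -- same cycle through π i = 0
        have hc1 := c1_diff π hxy
        have hii : π i ≠ i := by rw [hπi]; exact hxy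
        rw [if_pos hπi, if_neg h0, if_neg h0i, if_neg hii] at hc1
        have hs0 : π.SameCycle i 0 := ⟨1, by simpa using hπi⟩
        have hs : π.SameCycle 0 i := hs0.symm
        have hc2 : (c2' π : ℤ) ≤ c2' (π * Equiv.swap 0 i) + 1 := by
          exact_mod_cast c2_same π hxy h0 hs
        have hd : (π * Equiv.swap 0 i) 0 = 0 := by rw [sigma_zero]; exact hπi
        rw [Phi, Phi, if_neg h0, if_pos hd, c2_eq, c2_eq, c1_eq, c1_eq]
        linarith
      · by_cases hii : π i = i
        · -- i fixed, 0 not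
          have hc1 := c1_diff π hxy
          rw [if_neg hπi, if_neg h0, if_neg h0i, if_pos hii] at hc1
          have hc2n : c2' (π * Equiv.swap 0 i) = c2' π := by
            rw [Equiv.swap_comm]
            exact c2_fix_merge π hi hii h0
          have hc2 : (c2' (π * Equiv.swap 0 i) : ℤ) = c2' π := by exact_mod_cast hc2n
          have hd : (π * Equiv.swap 0 i) 0 ≠ 0 := by rw [sigma_zero, hii]; exact hi
          rw [Phi, Phi, if_neg h0, if_neg hd, c2_eq, c2_eq, c1_eq, c1_eq]
          linarith
        · -- generic case
          have hc1 := c1_diff π hxy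
          rw [if_neg hπi, if_neg h0, if_neg h0i, if_neg hii] at hc1
          have hc2 : (c2' π : ℤ) ≤ c2' (π * Equiv.swap 0 i) + 1 := by
            by_cases hs : π.SameCycle 0 i
            · exact_mod_cast c2_same π hxy h0 hs
            · exact_mod_cast c2_diff π hxy h0 hii hs
          have hd : (π * Equiv.swap 0 i) 0 ≠ 0 := by rw [sigma_zero]; exact hπi
          rw [Phi, Phi, if_neg h0, if_neg hd, c2_eq, c2_eq, c1_eq, c1_eq]
          linarith

theorem move_exists (π : Equiv.Perm (Fin (n + 1))) (h1 : π ≠ 1) :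
    ∃ i : Fin (n + 1), i ≠ 0 ∧ Phi (π * Equiv.swap 0 i) = Phi π - 1 := by
  by_cases h0 : π 0 = 0
  · have hex : ∃ i, π i ≠ i := by
      by_contra hall
      push_neg at hall
      exact h1 (Equiv.ext fun z => by rw [hall z, Equiv.Perm.one_apply])
    obtain ⟨i, hii⟩ := hex
    have hi : i ≠ 0 := fun h => hii (by rw [h, h0])
    exact ⟨i, hi, Phi_move_fix π hi h0 hii⟩
  · refine ⟨π 0, h0, ?_⟩
    by_cases hb : π (π 0) = 0
    · exact Phi_move_two π h0 rfl hb
    · exact Phi_move_exc π h0 rfl hb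

theorem Phi_le_length :
    ∀ l : List (Equiv.Perm (Fin (n + 1))),
      (∀ g ∈ l, ∃ i : Fin (n + 1), i ≠ 0 ∧ g = Equiv.swap 0 i) →
      ∀ π : Equiv.Perm (Fin (n + 1)), π * l.prod = 1 → Phi π ≤ l.length := by
  intro l
  induction l with
  | nil =>
    intro _ π h
    rw [List.prod_nil, mul_one] at h
    rw [h, Phi_one]
    simp
  | cons g l ih =>
    intro hval π h
    obtain ⟨i, hi, rfl⟩ := hval g List.mem_cons_self
    rw [List.prod_cons, ← mul_assoc] at h
    have h2 := ih (fun g hg => hval g (List.mem_cons_of_mem _ hg)) _ h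
    have h3 := Phi_step π hi
    rw [List.length_cons]
    push_cast
    linarith

theorem exists_list :
    ∀ (k : ℕ) (π : Equiv.Perm (Fin (n + 1))), Phi π = k →
      ∃ l : List (Equiv.Perm (Fin (n + 1))), l.length = k ∧
        (∀ g ∈ l, ∃ i : Fin (n + 1), i ≠ 0 ∧ g = Equiv.swap 0 i) ∧ π * l.prod = 1 := by
  intro k
  induction k using Nat.strong_induction_on with
  | _ k ih =>
    intro π hk
    by_cases h1 : π = 1
    · have hk0 : k = 0 := by
        have : ((k : ℤ)) = 0 := by rw [← hk, h1, Phi_one]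
        exact_mod_cast this
      subst hk0
      exact ⟨[], rfl, by simp, by simp [h1]⟩
    · obtain ⟨i, hi, hmove⟩ := move_exists π h1
      have hpos : 1 ≤ Phi π := Phi_pos h1
      have hk1 : 1 ≤ k := by
        rw [hk] at hpos
        exact_mod_cast hpos
      have hk' : Phi (π * Equiv.swap 0 i) = ((k - 1 : ℕ) : ℤ) := by
        rw [hmove, hk]
        push_cast [hk1]
        ring
      obtain ⟨l, hlen, hval, hprod⟩ := ih (k - 1) (by omega) _ hk'
      refine ⟨Equiv.swap 0 i :: l, ?_, ?_, ?_⟩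
      · rw [List.length_cons, hlen]; omega
      · intro g hg
        rcases List.mem_cons.mp hg with h | h
        · exact ⟨i, hi, h⟩
        · exact hval g h
      · rw [List.prod_cons, ← mul_assoc, hprod]

theorem pexc_eq_Phi (π : Equiv.Perm (Fin (n + 1))) : (pexcDist π : ℤ) = Phi π := by
  obtain ⟨l, hlen, hval, hprod⟩ :=
    exists_list (Phi π).toNat π (Int.toNat_of_nonneg (Phi_nonneg π)).symm
  have hub : pexcDist π ≤ (Phi π).toNat := Nat.sInf_le ⟨l, hlen, hval, hprod⟩
  have hne : {m : ℕ | ∃ l : List (Equiv.Perm (Fin (n + 1))), l.length = m ∧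
      (∀ g ∈ l, ∃ i : Fin (n + 1), i ≠ 0 ∧ g = Equiv.swap 0 i) ∧ π * l.prod = 1}.Nonempty :=
    ⟨(Phi π).toNat, l, hlen, hval, hprod⟩
  obtain ⟨l₀, hlen₀, hval₀, hprod₀⟩ := Nat.sInf_mem hne
  have hlb : Phi π ≤ (pexcDist π : ℤ) := by
    have := Phi_le_length l₀ hval₀ π hprod₀
    rw [hlen₀] at this
    exact this
  have hub' : (pexcDist π : ℤ) ≤ Phi π := by
    calc (pexcDist π : ℤ) ≤ ((Phi π).toNat : ℤ) := by exact_mod_cast hub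
    _ = Phi π := Int.toNat_of_nonneg (Phi_nonneg π)
  linarith

end Main

/-- The prefix exchange distance formula. -/
theorem stmt0 (n : ℕ) (π : Equiv.Perm (Fin (n + 1))) :
    (pexcDist π : ℤ) = (n + 1 : ℤ) + c2 π - c1 π -
      (if π 0 = 0 then 0 else 2) := pexc_eq_Phi π
end
end

section
/- For n ≥ 1 and 3 ≤ k ≤ ⌊3(n−1)/2⌋, the Whitney numbers of the star poset satisfy W_{n,k} = W_{n−1,k} + (n−1)·W_{n−1,k−1} − (n−2)·W_{n−2,k−1} + (n−2)·W_{n−2,k−3}. -/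
open Equiv Finset Filter
open scoped Classical

noncomputable section

/-- The prefix exchange distance, given by the Akers–Krishnamurthy formula. -/
def pexc {n : ℕ} (π : Equiv.Perm (Fin n)) : ℕ :=
  n + c2 π - c1 π - (if ∀ i : Fin n, (i : ℕ) = 0 → π i = i then 0 else 2)

/-- Whitney numbers of the second kind for the star poset. -/
def W (n k : ℕ) : ℕ :=
  (Finset.univ.filter fun π : Equiv.Perm (Fin n) => pexc π = k).card

namespace StarAux

set_option linter.unusedVariables false

/-- Inserting a new point `a` into the cycle of `b` preserves the number of nontrivial
cycles and enlarges the support by the point `a`. -/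
theorem insert_point {α : Type*} [Fintype α] [DecidableEq α]
    (σ : Perm α) (a b : α) (ha : σ a = a) (hb : σ b ≠ b) (hab : a ≠ b) :
    (swap a b * σ).cycleType.card = σ.cycleType.card ∧
      (swap a b * σ).support = insert a σ.support := by
  classical
  set c := σ.cycleOf b with hc_def
  have hc : c.IsCycle := Equiv.Perm.isCycle_cycleOf σ hb
  set τ : Perm α := c⁻¹ * σ with hτ_def
  have hστ : σ = c * τ := by rw [hτ_def, mul_inv_cancel_left]
  have hdisj : Equiv.Perm.Disjoint c τ := by
    intro x
    by_cases hx : σ.SameCycle b x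
    · right
      have hcx : c x = σ x := by rw [hc_def, Equiv.Perm.cycleOf_apply]; simp [hx]
      show c⁻¹ (σ x) = x
      rw [← hcx]; simp
    · left
      exact Equiv.Perm.cycleOf_apply_of_not_sameCycle hx
  have hsuppσ : σ.support = c.support ∪ τ.support := by
    rw [hστ]; exact hdisj.support_mul
  have haσ : a ∉ σ.support := by simp [Equiv.Perm.notMem_support, ha]
  have hac : a ∉ c.support := fun h => haσ (hsuppσ ▸ Finset.mem_union_left _ h)
  have haτ : a ∉ τ.support := fun h => haσ (hsuppσ ▸ Finset.mem_union_right _ h)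
  have hbc : b ∈ c.support := by
    rw [hc_def, Equiv.Perm.mem_support_cycleOf_iff]
    exact ⟨Equiv.Perm.SameCycle.refl _ _, Equiv.Perm.mem_support.2 hb⟩
  have hca : c a = a := Equiv.Perm.notMem_support.1 hac
  set g : Perm α := swap a b * c with hg_def
  have hba : b ≠ a := Ne.symm hab
  have hsuppg : g.support = insert a c.support := by
    ext x
    rw [Equiv.Perm.mem_support, Finset.mem_insert]
    constructor
    · intro hx
      by_cases hxa : x = a
      · exact Or.inl hxa
      · right
        by_contra hxc
        have h1 : c x = x := Equiv.Perm.notMem_support.1 hxc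
        have hxb : x ≠ b := fun h => hxc (h ▸ hbc)
        apply hx
        show swap a b (c x) = x
        rw [h1, swap_apply_of_ne_of_ne hxa hxb]
    · intro hx
      show swap a b (c x) ≠ x
      rcases hx with h | hx
      · rw [h, hca, swap_apply_left]; exact hba
      · have hcx : c x ≠ x := Equiv.Perm.mem_support.1 hx
        have hcxmem : c x ∈ c.support := Equiv.Perm.apply_mem_support.2 hx
        have hcxa : c x ≠ a := fun h => hac (h ▸ hcxmem)
        by_cases hcxb : c x = b
        · rw [hcxb, swap_apply_right]
          exact fun h => hac (h ▸ hx)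
        · rw [swap_apply_of_ne_of_ne hcxa hcxb]; exact hcx
  have hgb : g a = b := by
    show swap a b (c a) = b
    rw [hca, swap_apply_left]
  have key : ∀ k : ℕ, g.SameCycle a ((c ^ k) b) := by
    intro k
    induction k with
    | zero => exact ⟨1, by simpa using hgb⟩
    | succ k ih =>
      have hz : (c ^ (k + 1)) b = c ((c ^ k) b) := by
        rw [pow_succ', Equiv.Perm.mul_apply]
      set y := (c ^ k) b with hy
      have hymem : y ∈ c.support := Equiv.Perm.pow_apply_mem_support.2 hbc
      have hzmem : c y ∈ c.support := Equiv.Perm.apply_mem_support.2 hymem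
      have hza : c y ≠ a := fun h => hac (h ▸ hzmem)
      by_cases hzb : c y = b
      · rw [hz, hzb]; exact ⟨1, by simpa using hgb⟩
      · refine hz ▸ ih.trans ⟨1, ?_⟩
        show g y = c y
        show swap a b (c y) = c y
        rw [swap_apply_of_ne_of_ne hza hzb]
  have hgA : g a ≠ a := by rw [hgb]; exact hba
  have hgcycle : g.IsCycle := by
    refine ⟨a, hgA, fun y hy => ?_⟩
    have hmem : y ∈ g.support := Equiv.Perm.mem_support.2 hy
    rw [hsuppg, Finset.mem_insert] at hmem
    rcases hmem with rfl | hyc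
    · exact Equiv.Perm.SameCycle.refl _ _
    · obtain ⟨k, hk⟩ := hc.exists_pow_eq (Equiv.Perm.mem_support.1 hbc)
        (Equiv.Perm.mem_support.1 hyc)
      exact hk ▸ key k
  have hdisj2 : Equiv.Perm.Disjoint g τ := by
    rw [Equiv.Perm.disjoint_iff_disjoint_support, hsuppg, Finset.disjoint_insert_left]
    exact ⟨haτ, Equiv.Perm.disjoint_iff_disjoint_support.1 hdisj⟩
  have hπ : swap a b * σ = g * τ := by rw [hστ, hg_def, mul_assoc]
  constructor
  · rw [hπ, hdisj2.cycleType_mul, hστ, hdisj.cycleType_mul, hgcycle.cycleType, hc.cycleType]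
    simp
  · rw [hπ, hdisj2.support_mul, hsuppg, hsuppσ, Finset.insert_union]

/-- The statistic `c₂ + |support|`. -/
def stat {n : ℕ} (π : Perm (Fin n)) : ℕ := Multiset.card π.cycleType + π.support.card

/-- Count of permutations with given statistic. -/
def S (n j : ℕ) : ℕ := (Finset.univ.filter fun π : Perm (Fin n) => stat π = j).card

theorem stat_extendDomain {m n : ℕ} {p : Fin n → Prop} [DecidablePred p]
    (f : Fin m ≃ Subtype p) (g : Perm (Fin m)) :
    stat (g.extendDomain f) = stat g := by
  rw [stat, stat, Equiv.Perm.cycleType_extendDomain, Equiv.Perm.card_support_extend_domain]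

theorem extendDomain_surj_on {m : ℕ} (i : Fin (m + 1))
    (f : Fin m ≃ {x : Fin (m + 1) // x ≠ i}) (π : Perm (Fin (m + 1))) (hπ : π i = i) :
    ∃ e : Perm (Fin m), e.extendDomain f = π := by
  have hiff : ∀ x : Fin (m + 1), x ≠ i ↔ π x ≠ i := by
    intro x
    constructor
    · intro hx h
      exact hx (π.injective (h.trans hπ.symm))
    · intro hx h
      exact hx (h ▸ hπ)
  refine ⟨f.symm.permCongr (π.subtypePerm fun x => (hiff x).symm), ?_⟩
  ext x
  by_cases hx : x = i
  · subst hx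
    rw [hπ]
    exact congrArg Fin.val (Equiv.Perm.extendDomain_apply_not_subtype _ f (not_not_intro rfl))
  · have hx' : x = f (f.symm ⟨x, hx⟩) := by simp
    conv_lhs => rw [hx']
    rw [Equiv.Perm.extendDomain_apply_image]
    simp [Equiv.permCongr_apply, Equiv.Perm.subtypePerm_apply]

/-- Permutations of `Fin (m+1)` fixing a given point `i`, with given statistic, are counted
by `S m`. -/
theorem fix_count (m : ℕ) (i : Fin (m + 1)) (j : ℕ) :
    (Finset.univ.filter fun π : Perm (Fin (m + 1)) => π i = i ∧ stat π = j).card = S m j := by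
  classical
  set f : Fin m ≃ {x : Fin (m + 1) // x ≠ i} := finSuccAboveEquiv i with hf
  rw [S]
  symm
  apply Finset.card_bij (fun e _ => e.extendDomain f)
  · intro e he
    simp only [Finset.mem_filter, Finset.mem_univ, true_and] at he ⊢
    refine ⟨Equiv.Perm.extendDomain_apply_not_subtype _ f (not_not_intro rfl), ?_⟩
    rw [stat_extendDomain, he]
  · intro e₁ h₁ e₂ h₂ h
    ext x
    have := Equiv.ext_iff.1 h (f x)
    rw [Equiv.Perm.extendDomain_apply_image, Equiv.Perm.extendDomain_apply_image] at this
    exact congrArg Fin.val (f.injective (Subtype.ext this))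
  · intro π hπ
    simp only [Finset.mem_filter, Finset.mem_univ, true_and] at hπ
    obtain ⟨e, he⟩ := extendDomain_surj_on i f π hπ.1
    refine ⟨e, ?_, he⟩
    simp only [Finset.mem_filter, Finset.mem_univ, true_and]
    rw [← hπ.2, ← he, stat_extendDomain]

/-- The equivalence used to extend permutations of `Fin (m+1)` to `Fin (m+2)` fixing `0`. -/
def eqv0 (m : ℕ) : Fin (m + 1) ≃ {x : Fin (m + 2) // x ≠ 0} := finSuccAboveEquiv 0

variable {m : ℕ}

theorem eqv0_apply (i : Fin (m + 1)) : (eqv0 m i : Fin (m + 2)) = i.succ := by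
  simp [eqv0, finSuccAboveEquiv_apply, Fin.succAbove_zero]

theorem ext0_zero (e : Perm (Fin (m + 1))) : (e.extendDomain (eqv0 m)) 0 = 0 :=
  Equiv.Perm.extendDomain_apply_not_subtype _ _ (not_not_intro rfl)

theorem ext0_succ (e : Perm (Fin (m + 1))) (i : Fin (m + 1)) :
    (e.extendDomain (eqv0 m)) i.succ = (e i).succ := by
  have h1 : (i.succ : Fin (m + 2)) = ((eqv0 m i : {x : Fin (m + 2) // x ≠ 0}) : Fin (m + 2)) :=
    (eqv0_apply i).symm
  rw [h1, Equiv.Perm.extendDomain_apply_image, eqv0_apply]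

theorem stat_ext0 (e : Perm (Fin (m + 1))) : stat (e.extendDomain (eqv0 m)) = stat e :=
  stat_extendDomain _ e

theorem decomp_eq (p : Fin (m + 2)) (e : Perm (Fin (m + 1))) :
    Equiv.Perm.decomposeFin.symm (p, e) = swap 0 p * e.extendDomain (eqv0 m) := by
  ext x
  refine Fin.cases ?_ (fun i => ?_) x
  · rw [Equiv.Perm.decomposeFin_symm_apply_zero]
    show _ = (swap 0 p (e.extendDomain (eqv0 m) 0) : Fin (m + 2)).val
    rw [ext0_zero, swap_apply_left]
  · rw [Equiv.Perm.decomposeFin_symm_apply_succ]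
    show _ = (swap 0 p (e.extendDomain (eqv0 m) i.succ) : Fin (m + 2)).val
    rw [ext0_succ]

theorem stat_decomp_zero (e : Perm (Fin (m + 1))) :
    stat (Equiv.Perm.decomposeFin.symm ((0 : Fin (m + 2)), e)) = stat e := by
  rw [decomp_eq, Equiv.swap_self]
  show stat ((1 : Perm (Fin (m + 2))) * _) = _
  rw [one_mul, stat_ext0]

theorem stat_decomp_fix (q : Fin (m + 1)) (e : Perm (Fin (m + 1))) (hq : e q = q) :
    stat (Equiv.Perm.decomposeFin.symm (q.succ, e)) = stat e + 3 := by
  rw [decomp_eq]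
  set σ := e.extendDomain (eqv0 m) with hσ
  have h0 : σ 0 = 0 := ext0_zero e
  have hp : σ q.succ = q.succ := by rw [ext0_succ, hq]
  have hne : (0 : Fin (m + 2)) ≠ q.succ := (Fin.succ_ne_zero q).symm
  have hd : Equiv.Perm.Disjoint (swap 0 q.succ) σ := by
    intro x
    by_cases hx0 : x = 0
    · right; rw [hx0, h0]
    · by_cases hxp : x = q.succ
      · right; rw [hxp, hp]
      · left; exact swap_apply_of_ne_of_ne hx0 hxp
  have hcy : Equiv.Perm.IsCycle (swap (0 : Fin (m + 2)) q.succ) :=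
    Equiv.Perm.isCycle_swap hne
  have hct : Multiset.card (swap (0 : Fin (m + 2)) q.succ).cycleType = 1 := by
    rw [hcy.cycleType]; rfl
  have hs : Multiset.card σ.cycleType + σ.support.card = stat e := stat_ext0 e
  rw [stat, hd.cycleType_mul, hd.support_mul,
    Finset.card_union_of_disjoint hd.disjoint_support,
    Equiv.Perm.card_support_swap hne, Multiset.card_add, hct]
  omega

theorem stat_decomp_move (q : Fin (m + 1)) (e : Perm (Fin (m + 1))) (hq : e q ≠ q) :
    stat (Equiv.Perm.decomposeFin.symm (q.succ, e)) = stat e + 1 := by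
  rw [decomp_eq]
  set σ := e.extendDomain (eqv0 m) with hσ
  have h0 : σ 0 = 0 := ext0_zero e
  have hp : σ q.succ ≠ q.succ := by
    rw [ext0_succ]; exact fun h => hq (Fin.succ_injective _ h)
  have hne : (0 : Fin (m + 2)) ≠ q.succ := (Fin.succ_ne_zero q).symm
  obtain ⟨h1, h2⟩ := insert_point σ 0 q.succ h0 hp hne
  have h0s : (0 : Fin (m + 2)) ∉ σ.support := Equiv.Perm.notMem_support.2 h0
  have hs : Multiset.card σ.cycleType + σ.support.card = stat e := stat_ext0 e
  rw [stat, h1, h2, Finset.card_insert_of_notMem h0s]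
  omega

theorem S_decomp (m t : ℕ) :
    S (m + 2) t = (Finset.univ.filter fun pe : Fin (m + 2) × Perm (Fin (m + 1)) =>
      stat (Equiv.Perm.decomposeFin.symm pe) = t).card := by
  rw [S]
  apply Finset.card_bij (fun π _ => Equiv.Perm.decomposeFin π)
  · intro π h
    simp only [Finset.mem_filter, Finset.mem_univ, true_and] at h ⊢
    rwa [Equiv.symm_apply_apply]
  · intro π₁ h₁ π₂ h₂ h
    exact Equiv.Perm.decomposeFin.injective h
  · intro pe hpe
    simp only [Finset.mem_filter, Finset.mem_univ, true_and] at hpe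
    exact ⟨Equiv.Perm.decomposeFin.symm pe, by simpa using hpe, by simp⟩

theorem S_decomp_sum (m t : ℕ) :
    S (m + 2) t = ∑ p : Fin (m + 2), (Finset.univ.filter fun e : Perm (Fin (m + 1)) =>
      stat (Equiv.Perm.decomposeFin.symm (p, e)) = t).card := by
  rw [S_decomp]
  rw [Finset.card_eq_sum_card_fiberwise
    (f := Prod.fst) (t := Finset.univ) (fun x _ => Finset.mem_univ _)]
  refine Finset.sum_congr rfl fun p _ => ?_
  apply Finset.card_bij (fun x _ => x.2)
  · intro x hx
    simp only [Finset.mem_filter, Finset.mem_univ, true_and] at hx ⊢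
    obtain ⟨h1, h2⟩ := hx
    rw [← h2, Prod.mk.eta]
    exact h1
  · intro x hx y hy h
    simp only [Finset.mem_filter] at hx hy
    exact Prod.ext (hx.2.trans hy.2.symm) h
  · intro e he
    simp only [Finset.mem_filter, Finset.mem_univ, true_and] at he
    exact ⟨(p, e), by simp [he], rfl⟩

/-- The key recurrence for `S`, by the cycle-insertion bijection. -/
theorem S_rec (m j : ℕ) :
    S (m + 2) (j + 3) + (m + 1) * S m (j + 2)
      = S (m + 1) (j + 3) + (m + 1) * S (m + 1) (j + 2) + (m + 1) * S m j := by
  classical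
  have h1 := S_decomp_sum m (j + 3)
  rw [Fin.sum_univ_succ] at h1
  have h2 : (Finset.univ.filter fun e : Perm (Fin (m + 1)) =>
      stat (Equiv.Perm.decomposeFin.symm ((0 : Fin (m + 2)), e)) = j + 3).card
      = S (m + 1) (j + 3) := by
    rw [S]
    apply congrArg
    apply Finset.filter_congr
    intro e _
    rw [stat_decomp_zero]
  have h3 : ∀ q : Fin (m + 1), (Finset.univ.filter fun e : Perm (Fin (m + 1)) =>
      stat (Equiv.Perm.decomposeFin.symm (q.succ, e)) = j + 3).card
      = S m j + (Finset.univ.filter fun e : Perm (Fin (m + 1)) =>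
          ¬ e q = q ∧ stat e = j + 2).card := by
    intro q
    have hsplit : ∀ e : Perm (Fin (m + 1)),
        (stat (Equiv.Perm.decomposeFin.symm (q.succ, e)) = j + 3)
          ↔ ((e q = q ∧ stat e = j) ∨ (¬ e q = q ∧ stat e = j + 2)) := by
      intro e
      by_cases hq : e q = q
      · rw [stat_decomp_fix q e hq]
        simp [hq]
      · rw [stat_decomp_move q e hq]
        simp [hq]
    rw [← fix_count m q j]
    rw [← Finset.card_union_of_disjoint, ← Finset.filter_or]
    · apply congrArg
      apply Finset.filter_congr
      intro e _
      simpa using hsplit e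
    · rw [Finset.disjoint_filter]
      rintro x _ ⟨h, -⟩ ⟨h', -⟩
      exact h' h
  have h4 : ∀ q : Fin (m + 1),
      (Finset.univ.filter fun e : Perm (Fin (m + 1)) => ¬ e q = q ∧ stat e = j + 2).card
        + S m (j + 2) = S (m + 1) (j + 2) := by
    intro q
    have hsp : S (m + 1) (j + 2) =
        (Finset.univ.filter fun e : Perm (Fin (m + 1)) => e q = q ∧ stat e = j + 2).card
          + (Finset.univ.filter fun e : Perm (Fin (m + 1)) =>
              ¬ e q = q ∧ stat e = j + 2).card := by
      rw [S, ← Finset.card_union_of_disjoint, ← Finset.filter_or]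
      · apply congrArg
        apply Finset.filter_congr
        intro e _
        by_cases h : e q = q <;> simp [h]
      · rw [Finset.disjoint_filter]
        rintro x _ ⟨h, -⟩ ⟨h', -⟩
        exact h' h
    have hfc := fix_count m q (j + 2)
    omega
  have hsum : ∑ q : Fin (m + 1), ((Finset.univ.filter fun e : Perm (Fin (m + 1)) =>
        stat (Equiv.Perm.decomposeFin.symm (q.succ, e)) = j + 3).card + S m (j + 2))
      = ∑ _q : Fin (m + 1), (S m j + S (m + 1) (j + 2)) := by
    refine Finset.sum_congr rfl fun q _ => ?_
    have hA := h3 q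
    have hB := h4 q
    omega
  simp only [Finset.sum_add_distrib, Finset.sum_const, Finset.card_univ, Fintype.card_fin,
    smul_eq_mul] at hsum
  omega

theorem pexc_iff (m k : ℕ) (π : Perm (Fin (m + 1))) :
    pexc π = k ↔ ((π 0 = 0 ∧ stat π = k) ∨ (¬ π 0 = 0 ∧ stat π = k + 2)) := by
  have hcard : c1 π + π.support.card = m + 1 := by
    have h := Finset.card_filter_add_card_filter_not
      (s := (Finset.univ : Finset (Fin (m + 1)))) (p := fun i => π i = i)
    simp only [Finset.card_univ, Fintype.card_fin] at h
    have hc : c1 π = (Finset.univ.filter fun i => π i = i).card := rfl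
    have hsupp : π.support = Finset.univ.filter fun i => ¬ π i = i := by
      ext x
      simp [Equiv.Perm.mem_support]
    rw [hc, hsupp]
    convert h using 3
  have hcond : (∀ i : Fin (m + 1), (i : ℕ) = 0 → π i = i) ↔ π 0 = 0 := by
    constructor
    · intro h; exact h 0 rfl
    · intro h i hi
      have : i = 0 := Fin.ext (by simpa using hi)
      rw [this, h]
  by_cases h0 : π 0 = 0
  · rw [pexc, if_pos (hcond.2 h0)]
    have : (m + 1) + c2 π - c1 π - 0 = stat π := by
      rw [stat, c2]
      omega
    rw [this]
    simp [h0]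
  · have hne : π ≠ 1 := fun h => h0 (by rw [h]; rfl)
    have hc2 : 1 ≤ Multiset.card π.cycleType := Equiv.Perm.card_cycleType_pos.2 hne
    have hsupp : 2 ≤ π.support.card := Equiv.Perm.one_lt_card_support_of_ne_one hne
    rw [pexc, if_neg (fun h => h0 (hcond.1 h))]
    have heq : (m + 1) + c2 π - c1 π - 2 = stat π - 2 := by
      rw [stat, c2]
      omega
    rw [heq]
    have hstat : 3 ≤ stat π := by rw [stat]; omega
    simp only [h0, false_and, not_false_iff, true_and, false_or]
    omega

theorem W_split (m k : ℕ) :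
    W (m + 1) k + S m (k + 2) = S m k + S (m + 1) (k + 2) := by
  classical
  have hW : W (m + 1) k
      = (Finset.univ.filter fun π : Perm (Fin (m + 1)) =>
          π 0 = 0 ∧ stat π = k).card
        + (Finset.univ.filter fun π : Perm (Fin (m + 1)) =>
          ¬ π 0 = 0 ∧ stat π = k + 2).card := by
    rw [W, ← Finset.card_union_of_disjoint, ← Finset.filter_or]
    · apply congrArg
      apply Finset.filter_congr
      intro π _
      simpa using pexc_iff m k π
    · rw [Finset.disjoint_filter]
      rintro x _ ⟨h, -⟩ ⟨h', -⟩
      exact h' h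
  have hfixk : (Finset.univ.filter fun π : Perm (Fin (m + 1)) =>
      π 0 = 0 ∧ stat π = k).card = S m k := fix_count m 0 k
  have hfixk2 : (Finset.univ.filter fun π : Perm (Fin (m + 1)) =>
      π 0 = 0 ∧ stat π = k + 2).card = S m (k + 2) := fix_count m 0 (k + 2)
  have hpart : S (m + 1) (k + 2) =
      (Finset.univ.filter fun π : Perm (Fin (m + 1)) =>
        π 0 = 0 ∧ stat π = k + 2).card
      + (Finset.univ.filter fun π : Perm (Fin (m + 1)) =>
        ¬ π 0 = 0 ∧ stat π = k + 2).card := by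
    rw [S, ← Finset.card_union_of_disjoint, ← Finset.filter_or]
    · apply congrArg
      apply Finset.filter_congr
      intro π _
      by_cases h : π 0 = 0 <;> simp [h]
    · rw [Finset.disjoint_filter]
      rintro x _ ⟨h, -⟩ ⟨h', -⟩
      exact h' h
  omega

end StarAux

theorem stmt3 (n k : ℕ) (hn : 1 ≤ n) (hk3 : 3 ≤ k) (hk : k ≤ 3 * (n - 1) / 2) :
    (W n k : ℤ) = W (n - 1) k + ((n : ℤ) - 1) * W (n - 1) (k - 1)
      - ((n : ℤ) - 2) * W (n - 2) (k - 1) + ((n : ℤ) - 2) * W (n - 2) (k - 3) := by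
  classical
  have hn3 : 3 ≤ n := by omega
  obtain ⟨a, rfl⟩ : ∃ a, n = a + 3 := ⟨n - 3, by omega⟩
  obtain ⟨b, rfl⟩ : ∃ b, k = b + 3 := ⟨k - 3, by omega⟩
  have e1 : a + 3 - 1 = a + 2 := by omega
  have e2 : a + 3 - 2 = a + 1 := by omega
  have e3 : b + 3 - 1 = b + 2 := by omega
  have e4 : b + 3 - 3 = b := by omega
  rw [e1, e2, e3, e4]
  have hE1 : (W (a + 3) (b + 3) : ℤ) + StarAux.S (a + 2) (b + 5)
      = StarAux.S (a + 2) (b + 3) + StarAux.S (a + 3) (b + 5) := by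
    exact_mod_cast StarAux.W_split (a + 2) (b + 3)
  have hE2 : (W (a + 2) (b + 3) : ℤ) + StarAux.S (a + 1) (b + 5)
      = StarAux.S (a + 1) (b + 3) + StarAux.S (a + 2) (b + 5) := by
    exact_mod_cast StarAux.W_split (a + 1) (b + 3)
  have hE3 : (W (a + 2) (b + 2) : ℤ) + StarAux.S (a + 1) (b + 4)
      = StarAux.S (a + 1) (b + 2) + StarAux.S (a + 2) (b + 4) := by
    exact_mod_cast StarAux.W_split (a + 1) (b + 2)
  have hE4 : (W (a + 1) (b + 2) : ℤ) + StarAux.S a (b + 4)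
      = StarAux.S a (b + 2) + StarAux.S (a + 1) (b + 4) := by
    exact_mod_cast StarAux.W_split a (b + 2)
  have hE5 : (W (a + 1) b : ℤ) + StarAux.S a (b + 2)
      = StarAux.S a b + StarAux.S (a + 1) (b + 2) := by
    exact_mod_cast StarAux.W_split a b
  have hR1 : (StarAux.S (a + 3) (b + 5) : ℤ) + ((a : ℤ) + 2) * StarAux.S (a + 1) (b + 4)
      = StarAux.S (a + 2) (b + 5) + ((a : ℤ) + 2) * StarAux.S (a + 2) (b + 4)
        + ((a : ℤ) + 2) * StarAux.S (a + 1) (b + 2) := by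
    exact_mod_cast StarAux.S_rec (a + 1) (b + 2)
  have hR2 : (StarAux.S (a + 2) (b + 3) : ℤ) + ((a : ℤ) + 1) * StarAux.S a (b + 2)
      = StarAux.S (a + 1) (b + 3) + ((a : ℤ) + 1) * StarAux.S (a + 1) (b + 2)
        + ((a : ℤ) + 1) * StarAux.S a b := by
    exact_mod_cast StarAux.S_rec a b
  have hR3 : (StarAux.S (a + 2) (b + 5) : ℤ) + ((a : ℤ) + 1) * StarAux.S a (b + 4)
      = StarAux.S (a + 1) (b + 5) + ((a : ℤ) + 1) * StarAux.S (a + 1) (b + 4)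
        + ((a : ℤ) + 1) * StarAux.S a (b + 2) := by
    exact_mod_cast StarAux.S_rec a (b + 2)
  push_cast
  linear_combination hE1 - hE2 - ((a : ℤ) + 2) * hE3 + ((a : ℤ) + 1) * hE4
    - ((a : ℤ) + 1) * hE5 + hR1 + hR2 - hR3
end
end

section
/- For n ≥ 1 and 3 ≤ k ≤ ⌊3(n−1)/2⌋, W_{n,k} = (n−1)·W_{n−1,k−1} + Σ_{j=1}^{n−2} j·W_{j,k−3}. -/
open Equiv Finset Filter
open scoped Classical

noncomputable section

namespace StarAux


variable {α : Type*} [Fintype α] [DecidableEq α]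

lemma two_mul_cyc_le (g : Equiv.Perm α) : 2 * g.cycleType.card ≤ g.support.card := by
  have h := Multiset.card_nsmul_le_sum (s := g.cycleType) (a := 2)
    (fun x hx => Equiv.Perm.two_le_of_mem_cycleType hx)
  rw [Equiv.Perm.sum_cycleType] at h
  simpa [smul_eq_mul, mul_comm] using h

lemma two_le_supp {g : Equiv.Perm α} {x : α} (hx : g x ≠ x) : 2 ≤ g.support.card := by
  have h1 : x ∈ g.support := Equiv.Perm.mem_support.mpr hx
  have h2 : g.support.card ≠ 1 := Equiv.Perm.card_support_ne_one g
  have h3 : 0 < g.support.card := Finset.card_pos.mpr ⟨x, h1⟩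
  omega

lemma ins_moved (g : Equiv.Perm α) {a b : α} (ha : g a = a) (hb : g b ≠ b) :
    (swap a b * g).cycleType.card = g.cycleType.card ∧
    (swap a b * g).support.card = g.support.card + 1 := by
  have hab : a ≠ b := by rintro rfl; exact hb ha
  set c := g.cycleOf b with hcdef
  have hc : c.IsCycle := Equiv.Perm.isCycle_cycleOf g hb
  have hnsc_a : ¬ g.SameCycle b a := by
    rintro ⟨i, hi⟩
    have h1 : (g ^ (-i)) a = a := Equiv.Perm.zpow_apply_eq_self_of_apply_eq_self ha (-i)
    have h2 : (g ^ (-i)) ((g ^ i) b) = b := by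
      rw [← Equiv.Perm.mul_apply, ← zpow_add]
      simp
    rw [hi, h1] at h2
    exact hb (h2 ▸ ha)
  set ρ := c⁻¹ * g with hρdef
  have hcx : ∀ x, g.SameCycle b x → c x = g x := fun x hx => hx.cycleOf_apply
  have hcx' : ∀ x, ¬ g.SameCycle b x → c x = x := fun x hx =>
    Equiv.Perm.cycleOf_apply_of_not_sameCycle hx
  have hρx : ∀ x, g.SameCycle b x → ρ x = x := by
    intro x hx
    have h : c x = g x := hcx x hx
    show c⁻¹ (g x) = x
    rw [← h]
    exact c.symm_apply_apply x
  have hρa : ρ a = a := by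
    show c⁻¹ (g a) = a
    rw [ha]
    have h : c a = a := hcx' a hnsc_a
    nth_rewrite 1 [← h]
    exact c.symm_apply_apply a
  have hgcρ : g = c * ρ := by rw [hρdef]; group
  have hdisj : c.Disjoint ρ := by
    intro x
    by_cases hx : g.SameCycle b x
    · exact Or.inr (hρx x hx)
    · exact Or.inl (hcx' x hx)
  -- the list
  set l := g.toList b with hldef
  have hnd : l.Nodup := Equiv.Perm.nodup_toList g b
  have hform : l.formPerm = c := Equiv.Perm.formPerm_toList g b
  have hlen : l.length = c.support.card := Equiv.Perm.length_toList g b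
  have h2len : 2 ≤ l.length := by rw [hlen]; exact hc.two_le_card_support
  have hal : a ∉ l := by
    intro hmem
    rw [Equiv.Perm.mem_toList_iff] at hmem
    exact hnsc_a hmem.1
  have hbsupp : b ∈ g.support := Equiv.Perm.mem_support.mpr hb
  obtain ⟨t, hlt⟩ : ∃ t, l = b :: t := by
    have hne : l ≠ [] := by intro h; rw [h] at h2len; simp at h2len
    obtain ⟨y, t, hl⟩ := List.exists_cons_of_ne_nil hne
    refine ⟨t, ?_⟩
    have h0 : l.get ⟨0, by omega⟩ = b := Equiv.Perm.toList_getElem_zero g b hbsupp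
    rw [List.get_of_eq hl] at h0
    simp at h0
    rw [hl, h0]
  have hswapc : swap a b * c = (a :: l).formPerm := by
    rw [hlt, List.formPerm_cons_cons, ← hlt, hform]
  have hndal : (a :: l).Nodup := List.nodup_cons.mpr ⟨hal, hnd⟩
  have hc' : (swap a b * c).IsCycle := by
    rw [hswapc]
    exact List.isCycle_formPerm hndal (by simp only [List.length_cons]; omega)
  have hsuppc' : (swap a b * c).support = (a :: l).toFinset := by
    rw [hswapc]
    apply List.support_formPerm_of_nodup _ hndal
    intro x hx
    have hlength := congrArg List.length hx
    simp only [List.length_cons, List.length_singleton, List.length_nil] at hlength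
    omega
  have hcardc' : (swap a b * c).support.card = c.support.card + 1 := by
    rw [hsuppc', List.toFinset_cons]
    rw [Finset.card_insert_of_notMem (by simpa using hal)]
    rw [List.card_toFinset, List.dedup_eq_self.mpr hnd, ← hlen]
  have hdisj' : (swap a b * c).Disjoint ρ := by
    intro x
    by_cases hx : g.SameCycle b x
    · exact Or.inr (hρx x hx)
    · by_cases hxa : x = a
      · exact Or.inr (hxa ▸ hρa)
      · left
        have h1 : c x = x := hcx' x hx
        have hxb : x ≠ b := fun h => hx (h ▸ Equiv.Perm.SameCycle.refl g b)
        rw [Equiv.Perm.mul_apply, h1, swap_apply_of_ne_of_ne hxa hxb]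
  have hprod : swap a b * g = (swap a b * c) * ρ := by rw [hgcρ]; group
  have hct : (swap a b * g).cycleType = (swap a b * c).cycleType + ρ.cycleType := by
    rw [hprod]; exact hdisj'.cycleType_mul
  have hctg : g.cycleType = c.cycleType + ρ.cycleType := by
    rw [hgcρ]; exact hdisj.cycleType_mul
  constructor
  · rw [hct, hctg, hc'.cycleType, hc.cycleType]
    simp
  · rw [← Equiv.Perm.sum_cycleType, ← Equiv.Perm.sum_cycleType, hct, hctg,
      hc'.cycleType, hc.cycleType, hcardc']
    simp [Multiset.sum_add]
    omega

lemma ins_fixed (g : Equiv.Perm α) {a b : α} (ha : g a = a) (hb : g b = b) (hab : a ≠ b) :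
    (swap a b * g).cycleType.card = g.cycleType.card + 1 ∧
    (swap a b * g).support.card = g.support.card + 2 := by
  have hdisj : (swap a b).Disjoint g := by
    intro x
    by_cases hxa : x = a
    · exact Or.inr (hxa ▸ ha)
    · by_cases hxb : x = b
      · exact Or.inr (hxb ▸ hb)
      · exact Or.inl (swap_apply_of_ne_of_ne hxa hxb)
  have hct : (swap a b * g).cycleType = (swap a b).cycleType + g.cycleType := hdisj.cycleType_mul
  have hswap : (swap a b).cycleType = {2} := by
    rw [(Equiv.Perm.isCycle_swap hab).cycleType, Equiv.Perm.card_support_swap hab]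
  constructor
  · rw [hct, hswap]; simp [add_comm]
  · rw [← Equiv.Perm.sum_cycleType, ← Equiv.Perm.sum_cycleType, hct, hswap]
    simp [add_comm]

lemma ins_flag_moved {g : Equiv.Perm α} {a b s : α} (ha : g a = a) (hb : g b ≠ b)
    (hsa : s ≠ a) : ((swap a b * g) s = s ↔ g s = s) := by
  constructor
  · intro h
    by_contra hgs
    rw [Equiv.Perm.mul_apply] at h
    by_cases h1 : g s = a
    · have hsa' : s = a := g.injective (by rw [h1, ha])
      exact hsa hsa'
    · by_cases h2 : g s = b
      · rw [h2, swap_apply_right] at h; exact hsa h.symm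
      · rw [swap_apply_of_ne_of_ne h1 h2] at h; exact hgs h
  · intro h
    have hsb : s ≠ b := fun hh => hb (hh ▸ h)
    rw [Equiv.Perm.mul_apply, h, swap_apply_of_ne_of_ne hsa hsb]

lemma ins_flag_fixed {g : Equiv.Perm α} {a b s : α} (ha : g a = a) (hb : g b = b)
    (hsa : s ≠ a) (hsb : s ≠ b) : ((swap a b * g) s = s ↔ g s = s) := by
  constructor
  · intro h
    by_contra hgs
    rw [Equiv.Perm.mul_apply] at h
    by_cases h1 : g s = a
    · have : s = a := g.injective (by rw [h1, ha])
      exact hsa this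
    · by_cases h2 : g s = b
      · have : s = b := g.injective (by rw [h2, hb])
        exact hsb this
      · rw [swap_apply_of_ne_of_ne h1 h2] at h; exact hgs h
  · intro h
    rw [Equiv.Perm.mul_apply, h, swap_apply_of_ne_of_ne hsa hsb]


/-! ### Fin-specific part -/

def flagL {n : ℕ} (π : Equiv.Perm (Fin n)) : Prop := ∀ i : Fin n, (i : ℕ) = n - 1 → π i = i

def pexcL {n : ℕ} (π : Equiv.Perm (Fin n)) : ℕ :=
  π.support.card + c2 π - (if flagL π then 0 else 2)

def WL (n k : ℕ) : ℕ :=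
  (Finset.univ.filter fun π : Equiv.Perm (Fin n) => pexcL π = k).card

lemma flagL_iff {s : ℕ} (π : Equiv.Perm (Fin (s + 1))) :
    flagL π ↔ π (Fin.last s) = Fin.last s := by
  constructor
  · intro h; exact h _ (by simp)
  · intro h i hi
    have : i = Fin.last s := Fin.ext (by simpa using hi)
    rwa [this]

lemma pexcL_eq {s : ℕ} (π : Equiv.Perm (Fin (s + 1))) :
    pexcL π = π.support.card + c2 π -
      (if π (Fin.last s) = Fin.last s then 0 else 2) := by
  unfold pexcL
  rw [if_congr (flagL_iff π) rfl rfl]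

lemma pexc_eq {m : ℕ} (π : Equiv.Perm (Fin (m + 1))) :
    pexc π = π.support.card + c2 π - (if π 0 = 0 then 0 else 2) := by
  have h1 : c1 π + π.support.card = m + 1 := by
    have h := Finset.card_filter_add_card_filter_not
      (s := (univ : Finset (Fin (m + 1)))) (p := fun i => π i = i)
    have hsupp : univ.filter (fun i => ¬ π i = i) = π.support := by
      ext x; simp [Equiv.Perm.mem_support]
    rw [hsupp] at h
    simpa [c1] using h
  have h2 : (∀ i : Fin (m + 1), (i : ℕ) = 0 → π i = i) ↔ π 0 = 0 := by
    constructor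
    · intro h; exact h 0 rfl
    · intro h i hi
      have : i = 0 := Fin.ext (by simpa using hi)
      rwa [this]
  unfold pexc
  rw [if_congr h2 rfl rfl]
  omega

lemma pexc_le {m : ℕ} (π : Equiv.Perm (Fin (m + 1))) : 2 * pexc π ≤ 3 * m := by
  rw [pexc_eq]
  have h2 := two_mul_cyc_le π
  have hc2 : c2 π = π.cycleType.card := rfl
  have hle : π.support.card ≤ m + 1 := by
    calc π.support.card ≤ (univ : Finset (Fin (m+1))).card := Finset.card_le_univ _
    _ = m + 1 := by simp
  by_cases h : π 0 = 0
  · have h0 : π.support.card ≤ m := by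
      have hs : π.support ⊆ univ.erase 0 := by
        intro x hx
        refine Finset.mem_erase.mpr ⟨?_, Finset.mem_univ x⟩
        rintro rfl
        exact (Equiv.Perm.mem_support.mp hx) h
      calc π.support.card ≤ (univ.erase (0 : Fin (m+1))).card := Finset.card_le_card hs
      _ = m := by rw [Finset.card_erase_of_mem (Finset.mem_univ _)]; simp
    rw [if_pos h]; omega
  · rw [if_neg h]; omega

lemma W_vanish {n k : ℕ} (hn : 1 ≤ n) (h : 3 * (n - 1) < 2 * k) : W n k = 0 := by
  obtain ⟨m, rfl⟩ : ∃ m, n = m + 1 := ⟨n - 1, by omega⟩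
  rw [W, Finset.card_eq_zero, Finset.filter_eq_empty_iff]
  intro π _
  have h1 := pexc_le π
  simp only [Nat.add_sub_cancel] at h
  omega

/-! ### conjugation -/

lemma pexcL_conj {s : ℕ} (u e : Equiv.Perm (Fin (s + 1))) (hu : u (Fin.last s) = Fin.last s) :
    pexcL (u * e * u⁻¹) = pexcL e := by
  have hflag : ((u * e * u⁻¹) (Fin.last s) = Fin.last s) ↔ e (Fin.last s) = Fin.last s := by
    have hui : u⁻¹ (Fin.last s) = Fin.last s := by
      nth_rewrite 1 [← hu]
      exact u.symm_apply_apply _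
    rw [Equiv.Perm.mul_apply, Equiv.Perm.mul_apply, hui]
    constructor
    · intro h
      have h2 : u⁻¹ (u (e (Fin.last s))) = u⁻¹ (Fin.last s) := by rw [h]
      rwa [show u⁻¹ (u (e (Fin.last s))) = e (Fin.last s) from u.symm_apply_apply _, hui] at h2
    · intro h; rw [h, hu]
  rw [pexcL_eq, pexcL_eq, Equiv.Perm.support_conj, Finset.card_map,
    if_congr hflag rfl rfl]
  have : c2 (u * e * u⁻¹) = c2 e := congrArg Multiset.card Equiv.Perm.cycleType_conj
  rw [this]

lemma pexc_conj {m : ℕ} (π : Equiv.Perm (Fin (m + 1))) :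
    pexc (swap 0 (Fin.last m) * π * swap 0 (Fin.last m)) = pexcL π := by
  set v : Equiv.Perm (Fin (m+1)) := swap 0 (Fin.last m) with hv
  have hvinv : v⁻¹ = v := by rw [hv, swap_inv]
  have hvv : v * v = 1 := swap_mul_self _ _
  have hvvx : ∀ x, v (v x) = x := fun x => by
    rw [← Equiv.Perm.mul_apply, hvv, Equiv.Perm.one_apply]
  have hflag : ((v * π * v) 0 = 0) ↔ π (Fin.last m) = Fin.last m := by
    have hv0 : v 0 = Fin.last m := swap_apply_left _ _
    have hvl : v (Fin.last m) = 0 := swap_apply_right _ _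
    rw [Equiv.Perm.mul_apply, Equiv.Perm.mul_apply, hv0]
    constructor
    · intro h
      have h2 : v (v (π (Fin.last m))) = v 0 := by rw [h]
      rwa [hvvx, hv0] at h2
    · intro h; rw [h, hvl]
  rw [pexc_eq, pexcL_eq, if_congr hflag rfl rfl]
  have hsupp : (v * π * v).support.card = π.support.card := by
    have : v * π * v = v * π * v⁻¹ := by rw [hvinv]
    rw [this, Equiv.Perm.support_conj, Finset.card_map]
  have hc2 : c2 (v * π * v) = c2 π := by
    have : v * π * v = v * π * v⁻¹ := by rw [hvinv]
    rw [this]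
    exact congrArg Multiset.card Equiv.Perm.cycleType_conj
  rw [hsupp, hc2]

lemma W_eq_WL (m k : ℕ) : W (m + 1) k = WL (m + 1) k := by
  rw [W, WL]
  set v : Equiv.Perm (Fin (m+1)) := swap 0 (Fin.last m) with hv
  have hvv : v * v = 1 := swap_mul_self _ _
  apply Finset.card_bij' (i := fun π _ => v * π * v) (j := fun π _ => v * π * v)
  · intro π hπ
    rw [Finset.mem_filter] at hπ ⊢
    refine ⟨Finset.mem_univ _, ?_⟩
    have key : pexc (v * (v * π * v) * v) = pexcL (v * π * v) := pexc_conj _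
    have hsimp : v * (v * π * v) * v = π := by
      have : v * (v * π * v) * v = (v * v) * π * (v * v) := by group
      rw [this, hvv, one_mul, mul_one]
    rw [hsimp] at key
    rw [← key, hπ.2]
  · intro π hπ
    rw [Finset.mem_filter] at hπ ⊢
    refine ⟨Finset.mem_univ _, ?_⟩
    rw [pexc_conj, hπ.2]
  · intro π _
    have : v * (v * π * v) * v = (v * v) * π * (v * v) := by group
    rw [this, hvv, one_mul, mul_one]
  · intro π _
    have : v * (v * π * v) * v = (v * v) * π * (v * v) := by group
    rw [this, hvv, one_mul, mul_one]

/-! ### decomposition case lemmas -/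

section Cases

variable {s : ℕ}

def g₀ (e : Equiv.Perm (Fin (s + 1))) : Equiv.Perm (Fin (s + 2)) :=
  Equiv.Perm.decomposeFin.symm (0, e)

lemma g₀_zero (e : Equiv.Perm (Fin (s + 1))) : g₀ e 0 = 0 :=
  Equiv.Perm.decomposeFin_symm_apply_zero 0 e

lemma g₀_succ (e : Equiv.Perm (Fin (s + 1))) (i : Fin (s + 1)) :
    g₀ e i.succ = (e i).succ := by
  rw [g₀, Equiv.Perm.decomposeFin_symm_apply_succ, swap_self]
  rfl

lemma decompose_eq (e : Equiv.Perm (Fin (s + 1))) (p : Fin (s + 2)) :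
    Equiv.Perm.decomposeFin.symm (p, e) = swap 0 p * g₀ e := by
  ext x
  refine Fin.cases ?_ (fun i => ?_) x
  · rw [Equiv.Perm.decomposeFin_symm_apply_zero, Equiv.Perm.mul_apply, g₀_zero,
      swap_apply_left]
  · rw [Equiv.Perm.decomposeFin_symm_apply_succ, Equiv.Perm.mul_apply, g₀_succ]

lemma g₀_eq_extend (e : Equiv.Perm (Fin (s + 1))) :
    g₀ e = e.extendDomain (Equiv.ofInjective Fin.succ (Fin.succ_injective (s + 1))) := by
  ext x
  refine Fin.cases ?_ (fun i => ?_) x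
  · rw [g₀_zero, Equiv.Perm.extendDomain_apply_not_subtype]
    rintro ⟨j, hj⟩
    exact Fin.succ_ne_zero j hj
  · rw [g₀_succ]
    have h := Equiv.Perm.extendDomain_apply_image e
      (Equiv.ofInjective Fin.succ (Fin.succ_injective (s + 1))) i
    exact congrArg Fin.val h.symm

lemma c2_g₀ (e : Equiv.Perm (Fin (s + 1))) : c2 (g₀ e) = c2 e := by
  rw [c2, c2, g₀_eq_extend, Equiv.Perm.cycleType_extendDomain]

lemma supp_g₀ (e : Equiv.Perm (Fin (s + 1))) : (g₀ e).support.card = e.support.card := by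
  rw [← Equiv.Perm.sum_cycleType, ← Equiv.Perm.sum_cycleType, g₀_eq_extend,
    Equiv.Perm.cycleType_extendDomain]

lemma flag_g₀ (e : Equiv.Perm (Fin (s + 1))) :
    g₀ e (Fin.last (s + 1)) = Fin.last (s + 1) ↔ e (Fin.last s) = Fin.last s := by
  rw [← Fin.succ_last, g₀_succ]
  exact ⟨fun h => Fin.succ_injective _ h, fun h => by rw [h]⟩

lemma last_ne_zero' : (Fin.last (s + 1) : Fin (s + 2)) ≠ 0 := by
  simp [Fin.ext_iff]

lemma pexc_case_zero (e : Equiv.Perm (Fin (s + 1))) :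
    pexcL (Equiv.Perm.decomposeFin.symm (0, e)) = pexcL e := by
  show pexcL (g₀ e) = pexcL e
  rw [pexcL_eq, pexcL_eq, supp_g₀, c2_g₀, if_congr (flag_g₀ e) rfl rfl]

lemma pexc_case_moved (e : Equiv.Perm (Fin (s + 1))) (q : Fin (s + 1)) (hq : e q ≠ q) :
    pexcL (Equiv.Perm.decomposeFin.symm (q.succ, e)) = pexcL e + 1 := by
  have ha : g₀ e 0 = 0 := g₀_zero e
  have hb : g₀ e q.succ ≠ q.succ := by
    rw [g₀_succ]; exact fun h => hq (Fin.succ_injective _ h)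
  have hins := ins_moved (g₀ e) ha hb
  have hc2 : c2 (swap 0 q.succ * g₀ e) = c2 (g₀ e) := hins.1
  have hflag := ins_flag_moved (s := Fin.last (s + 1)) ha hb last_ne_zero'
  rw [decompose_eq, pexcL_eq, pexcL_eq, hins.2, hc2, supp_g₀, c2_g₀,
    if_congr (hflag.trans (flag_g₀ e)) rfl rfl]
  by_cases hf : e (Fin.last s) = Fin.last s
  · rw [if_pos hf]; omega
  · rw [if_neg hf]
    have h2 : 2 ≤ e.support.card := two_le_supp hq
    omega

lemma pexc_case_fixed (e : Equiv.Perm (Fin (s + 1))) (q : Fin (s + 1)) (hq : e q = q)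
    (hql : q ≠ Fin.last s) :
    pexcL (Equiv.Perm.decomposeFin.symm (q.succ, e)) = pexcL e + 3 := by
  have ha : g₀ e 0 = 0 := g₀_zero e
  have hb : g₀ e q.succ = q.succ := by rw [g₀_succ, hq]
  have hab : (0 : Fin (s + 2)) ≠ q.succ := (Fin.succ_ne_zero q).symm
  have hins := ins_fixed (g₀ e) ha hb hab
  have hc2 : c2 (swap 0 q.succ * g₀ e) = c2 (g₀ e) + 1 := hins.1
  have hsb : (Fin.last (s + 1) : Fin (s + 2)) ≠ q.succ := by
    rw [← Fin.succ_last]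
    exact fun h => hql (Fin.succ_injective _ h).symm
  have hflag := ins_flag_fixed (s := Fin.last (s + 1)) ha hb last_ne_zero' hsb
  rw [decompose_eq, pexcL_eq, pexcL_eq, hins.2, hc2, supp_g₀, c2_g₀,
    if_congr (hflag.trans (flag_g₀ e)) rfl rfl]
  by_cases hf : e (Fin.last s) = Fin.last s
  · rw [if_pos hf]; omega
  · rw [if_neg hf]
    have h2 : 2 ≤ e.support.card := two_le_supp hf
    omega

lemma pexc_case_last (e : Equiv.Perm (Fin (s + 1))) (hq : e (Fin.last s) = Fin.last s) :
    pexcL (Equiv.Perm.decomposeFin.symm ((Fin.last s).succ, e)) = pexcL e + 1 := by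
  have ha : g₀ e 0 = 0 := g₀_zero e
  have hb : g₀ e (Fin.last s).succ = (Fin.last s).succ := by rw [g₀_succ, hq]
  have hab : (0 : Fin (s + 2)) ≠ (Fin.last s).succ := (Fin.succ_ne_zero _).symm
  have hins := ins_fixed (g₀ e) ha hb hab
  have hc2 : c2 (swap 0 (Fin.last s).succ * g₀ e) = c2 (g₀ e) + 1 := hins.1
  have hflagπ : ¬ ((swap 0 (Fin.last s).succ * g₀ e) (Fin.last (s + 1)) = Fin.last (s + 1)) := by
    rw [← Fin.succ_last, Equiv.Perm.mul_apply, hb, swap_apply_right]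
    exact fun h => Fin.succ_ne_zero _ h.symm
  rw [decompose_eq, pexcL_eq, pexcL_eq, hins.2, hc2, supp_g₀, c2_g₀,
    if_neg hflagπ, if_pos hq]
  omega

end Cases

/-! ### counting -/

lemma card_split {γ : Type*} [Fintype γ] (P A : γ → Prop) [DecidablePred P] [DecidablePred A] :
    (univ.filter P).card
      = (univ.filter fun x => A x ∧ P x).card
        + (univ.filter fun x => ¬ A x ∧ P x).card := by
  have h1 : (univ.filter P).filter A = univ.filter fun x => A x ∧ P x := by
    rw [Finset.filter_filter]
    exact Finset.filter_congr fun x _ => by tauto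
  have h2 : (univ.filter P).filter (fun x => ¬ A x) = univ.filter fun x => ¬ A x ∧ P x := by
    rw [Finset.filter_filter]
    exact Finset.filter_congr fun x _ => by tauto
  rw [← Finset.card_filter_add_card_filter_not (p := A) (s := univ.filter P), h1, h2]

def INc (r : ℕ) (q : Fin (r + 2)) (t : ℕ) : ℕ :=
  (univ.filter fun e : Equiv.Perm (Fin (r + 2)) => e q ≠ q ∧ pexcL e = t).card

def OUTc (r : ℕ) (q : Fin (r + 2)) (t : ℕ) : ℕ :=
  (univ.filter fun e : Equiv.Perm (Fin (r + 2)) => e q = q ∧ pexcL e = t).card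

lemma IN_add_OUT (r : ℕ) (q : Fin (r + 2)) (t : ℕ) :
    INc r q t + OUTc r q t = WL (r + 2) t := by
  rw [INc, OUTc, WL, card_split (fun e => pexcL e = t) (fun e => e q ≠ q)]
  congr 1
  exact congrArg Finset.card (Finset.filter_congr fun e _ => by tauto)

lemma fix0_count (r : ℕ) (t : ℕ) :
    (univ.filter fun e : Equiv.Perm (Fin (r + 2)) => e 0 = 0 ∧ pexcL e = t).card
      = WL (r + 1) t := by
  rw [WL]
  apply Finset.card_bij' (i := fun e _ => (Equiv.Perm.decomposeFin e).2)
    (j := fun e' _ => Equiv.Perm.decomposeFin.symm (0, e'))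
  · intro e he
    rw [Finset.mem_filter] at he ⊢
    obtain ⟨-, h0, hp⟩ := he
    refine ⟨Finset.mem_univ _, ?_⟩
    rcases hde : Equiv.Perm.decomposeFin e with ⟨p, e'⟩
    have hse : Equiv.Perm.decomposeFin.symm (p, e') = e := by
      rw [← hde]; exact Equiv.symm_apply_apply _ _
    have hp0 : p = 0 := by
      rw [← hse, Equiv.Perm.decomposeFin_symm_apply_zero] at h0; exact h0
    show pexcL e' = t
    have hpz := pexc_case_zero e'
    rw [← hp0, hse] at hpz
    rw [← hpz, hp]
  · intro e' he'
    rw [Finset.mem_filter] at he' ⊢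
    exact ⟨Finset.mem_univ _, Equiv.Perm.decomposeFin_symm_apply_zero 0 e',
      (pexc_case_zero e').trans he'.2⟩
  · intro e he
    rw [Finset.mem_filter] at he
    obtain ⟨-, h0, -⟩ := he
    rcases hde : Equiv.Perm.decomposeFin e with ⟨p, e'⟩
    have hse : Equiv.Perm.decomposeFin.symm (p, e') = e := by
      rw [← hde]; exact Equiv.symm_apply_apply _ _
    have hp0 : p = 0 := by
      rw [← hse, Equiv.Perm.decomposeFin_symm_apply_zero] at h0; exact h0
    show Equiv.Perm.decomposeFin.symm (0, e') = e
    rw [← hp0]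
    exact hse
  · intro e' _
    rw [Equiv.apply_symm_apply]

lemma OUT_eq {r : ℕ} {q : Fin (r + 2)} (hq : q ≠ Fin.last (r + 1)) (t : ℕ) :
    OUTc r q t = WL (r + 1) t := by
  have hstep : OUTc r q t
      = (univ.filter fun e : Equiv.Perm (Fin (r + 2)) => e 0 = 0 ∧ pexcL e = t).card := by
    set u : Equiv.Perm (Fin (r + 2)) := swap 0 q with hu
    have huu : u * u = 1 := swap_mul_self _ _
    have huinv : u⁻¹ = u := by rw [hu, swap_inv]
    have hulast : u (Fin.last (r + 1)) = Fin.last (r + 1) :=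
      swap_apply_of_ne_of_ne last_ne_zero' (Ne.symm hq)
    have hpexc : ∀ e, pexcL (u * e * u) = pexcL e := by
      intro e
      have h := pexcL_conj u e hulast
      rwa [huinv] at h
    have hu0 : u 0 = q := swap_apply_left _ _
    have huq : u q = 0 := swap_apply_right _ _
    have hinv2 : ∀ e : Equiv.Perm (Fin (r + 2)), u * (u * e * u) * u = e := by
      intro e
      have h : u * (u * e * u) * u = (u * u) * e * (u * u) := by group
      rw [h, huu, one_mul, mul_one]
    rw [OUTc]
    apply Finset.card_bij' (i := fun e _ => u * e * u) (j := fun e _ => u * e * u)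
    · intro e he
      rw [Finset.mem_filter] at he ⊢
      obtain ⟨-, hfix, hp⟩ := he
      refine ⟨Finset.mem_univ _, ?_, by rw [hpexc e, hp]⟩
      rw [Equiv.Perm.mul_apply, Equiv.Perm.mul_apply, hu0, hfix, huq]
    · intro e he
      rw [Finset.mem_filter] at he ⊢
      obtain ⟨-, hfix, hp⟩ := he
      refine ⟨Finset.mem_univ _, ?_, by rw [hpexc e, hp]⟩
      rw [Equiv.Perm.mul_apply, Equiv.Perm.mul_apply, huq, hfix, hu0]
    · intro e _; exact hinv2 e
    · intro e _; exact hinv2 e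
  rw [hstep, fix0_count]

lemma fiber_eq {r k : ℕ} (hk : 3 ≤ k) (q : Fin (r + 2)) :
    (univ.filter fun e : Equiv.Perm (Fin (r + 2)) =>
        pexcL (Equiv.Perm.decomposeFin.symm (q.succ, e)) = k).card
      = INc r q (k - 1)
        + (if q = Fin.last (r + 1) then OUTc r q (k - 1) else OUTc r q (k - 3)) := by
  rw [card_split _ (fun e => e q ≠ q)]
  congr 1
  · rw [INc]
    refine congrArg Finset.card (Finset.filter_congr fun e _ => ?_)
    constructor
    · rintro ⟨hne, hpe⟩
      rw [pexc_case_moved e q hne] at hpe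
      exact ⟨hne, by omega⟩
    · rintro ⟨hne, hpe⟩
      exact ⟨hne, by rw [pexc_case_moved e q hne]; omega⟩
  · by_cases hql : q = Fin.last (r + 1)
    · rw [if_pos hql, OUTc]
      refine congrArg Finset.card (Finset.filter_congr fun e _ => ?_)
      constructor
      · rintro ⟨hne, hpe⟩
        rw [not_not] at hne
        subst hql
        rw [pexc_case_last e hne] at hpe
        exact ⟨hne, by omega⟩
      · rintro ⟨hfix, hpe⟩
        subst hql
        refine ⟨not_not.mpr hfix, ?_⟩
        rw [pexc_case_last e hfix]
        omega
    · rw [if_neg hql, OUTc]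
      refine congrArg Finset.card (Finset.filter_congr fun e _ => ?_)
      constructor
      · rintro ⟨hne, hpe⟩
        rw [not_not] at hne
        rw [pexc_case_fixed e q hne hql] at hpe
        exact ⟨hne, by omega⟩
      · rintro ⟨hfix, hpe⟩
        refine ⟨not_not.mpr hfix, ?_⟩
        rw [pexc_case_fixed e q hfix hql]
        omega

lemma WL_rec {r k : ℕ} (hk : 3 ≤ k) :
    (WL (r + 3) k : ℤ)
      = WL (r + 2) k + (r + 2) * WL (r + 2) (k - 1)
        - (r + 1) * WL (r + 1) (k - 1) + (r + 1) * WL (r + 1) (k - 3) := by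
  have h1 : WL (r + 3) k
      = ((univ : Finset (Fin (r + 3) × Equiv.Perm (Fin (r + 2)))).filter
          fun x => pexcL (Equiv.Perm.decomposeFin.symm x) = k).card := by
    rw [WL]
    apply Finset.card_bij' (i := fun π _ => Equiv.Perm.decomposeFin π)
      (j := fun x _ => Equiv.Perm.decomposeFin.symm x)
    · intro π hπ
      rw [Finset.mem_filter] at hπ ⊢
      exact ⟨Finset.mem_univ _, by rw [Equiv.symm_apply_apply]; exact hπ.2⟩
    · intro x hx
      rw [Finset.mem_filter] at hx ⊢
      exact ⟨Finset.mem_univ _, hx.2⟩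
    · intro π _; exact Equiv.symm_apply_apply _ _
    · intro x _; exact Equiv.apply_symm_apply _ _
  have h2 : ((univ : Finset (Fin (r + 3) × Equiv.Perm (Fin (r + 2)))).filter
          fun x => pexcL (Equiv.Perm.decomposeFin.symm x) = k).card
      = ∑ p : Fin (r + 3), (univ.filter fun e : Equiv.Perm (Fin (r + 2)) =>
          pexcL (Equiv.Perm.decomposeFin.symm (p, e)) = k).card := by
    rw [Finset.card_filter, ← Finset.univ_product_univ, Finset.sum_product]
    exact Finset.sum_congr rfl fun p _ => (Finset.card_filter _ _).symm
  have h0term : (univ.filter fun e : Equiv.Perm (Fin (r + 2)) =>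
          pexcL (Equiv.Perm.decomposeFin.symm ((0 : Fin (r+3)), e)) = k).card
      = WL (r + 2) k := by
    rw [WL]
    exact congrArg Finset.card (Finset.filter_congr fun e _ => by rw [pexc_case_zero e])
  have hmain : WL (r + 3) k = WL (r + 2) k
      + ∑ q : Fin (r + 2), (INc r q (k - 1)
          + if q = Fin.last (r + 1) then OUTc r q (k - 1) else OUTc r q (k - 3)) := by
    rw [h1, h2, Fin.sum_univ_succ, h0term]
    congr 1
    exact Finset.sum_congr rfl fun q _ => fiber_eq hk q
  have h4 : ∀ q : Fin (r + 2),
      ((INc r q (k - 1)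
          + if q = Fin.last (r + 1) then OUTc r q (k - 1) else OUTc r q (k - 3) : ℕ) : ℤ)
      = (WL (r + 2) (k - 1) : ℤ)
        + (if q = Fin.last (r + 1) then 0
            else ((WL (r + 1) (k - 3) : ℤ) - (WL (r + 1) (k - 1) : ℤ))) := by
    intro q
    have hsplit := IN_add_OUT r q (k - 1)
    by_cases hql : q = Fin.last (r + 1)
    · rw [if_pos hql, if_pos hql]
      push_cast
      omega
    · rw [if_neg hql, if_neg hql]
      have h5 := OUT_eq hql (k - 1)
      have h6 := OUT_eq hql (k - 3)
      push_cast
      omega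
  have hsum : ((∑ q : Fin (r + 2), (INc r q (k - 1)
          + if q = Fin.last (r + 1) then OUTc r q (k - 1) else OUTc r q (k - 3)) : ℕ) : ℤ)
      = (r + 2) * WL (r + 2) (k - 1)
        + (r + 1) * ((WL (r + 1) (k - 3) : ℤ) - (WL (r + 1) (k - 1) : ℤ)) := by
    rw [Nat.cast_sum]
    rw [Finset.sum_congr rfl fun q _ => h4 q]
    rw [Finset.sum_add_distrib, Finset.sum_const]
    have hite : ∀ q : Fin (r + 2),
        (if q = Fin.last (r + 1) then (0 : ℤ)
          else ((WL (r + 1) (k - 3) : ℤ) - (WL (r + 1) (k - 1) : ℤ)))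
        = ((WL (r + 1) (k - 3) : ℤ) - (WL (r + 1) (k - 1) : ℤ))
          - (if q = Fin.last (r + 1)
              then ((WL (r + 1) (k - 3) : ℤ) - (WL (r + 1) (k - 1) : ℤ)) else 0) := by
      intro q
      by_cases h : q = Fin.last (r + 1) <;> simp [h]
    rw [Finset.sum_congr rfl fun q _ => hite q, Finset.sum_sub_distrib, Finset.sum_const,
      Finset.sum_ite_eq' univ (Fin.last (r + 1))
        (fun _ => ((WL (r + 1) (k - 3) : ℤ) - (WL (r + 1) (k - 1) : ℤ)))]
    simp only [Finset.mem_univ, if_pos, Finset.card_univ, Fintype.card_fin, nsmul_eq_mul]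
    push_cast
    ring
  have hfin : (WL (r + 3) k : ℤ) = (WL (r + 2) k : ℤ)
      + ((∑ q : Fin (r + 2), (INc r q (k - 1)
          + if q = Fin.last (r + 1) then OUTc r q (k - 1) else OUTc r q (k - 3)) : ℕ) : ℤ) := by
    rw [hmain, Nat.cast_add]
  rw [hfin, hsum]
  push_cast
  ring

lemma W_eq_WL' (n : ℕ) (hn : 1 ≤ n) (t : ℕ) : W n t = WL n t := by
  obtain ⟨m, rfl⟩ : ∃ m, n = m + 1 := ⟨n - 1, by omega⟩
  exact W_eq_WL m t

lemma main_aux : ∀ n k : ℕ, 1 ≤ n → 3 ≤ k → 2 * k ≤ 3 * (n - 1) →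
    (W n k : ℤ) = ((n : ℤ) - 1) * W (n - 1) (k - 1)
      + ∑ j ∈ Finset.Icc 1 (n - 2), (j : ℤ) * W j (k - 3) := by
  intro n
  induction n using Nat.strong_induction_on with
  | _ n ih =>
    intro k hn hk3 hk2
    obtain ⟨r, rfl⟩ : ∃ r, n = r + 3 := ⟨n - 3, by omega⟩
    have hsumW : ∀ t : ℕ, ∀ b : ℕ, ∑ j ∈ Finset.Icc 1 b, (j : ℤ) * W j t
        = ∑ j ∈ Finset.Icc 1 b, (j : ℤ) * WL j t := by
      intro t b
      refine Finset.sum_congr rfl fun j hj => ?_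
      rw [Finset.mem_Icc] at hj
      obtain ⟨m, rfl⟩ : ∃ m, j = m + 1 := ⟨j - 1, by omega⟩
      rw [W_eq_WL]
    rw [W_eq_WL' (r + 3) (by omega) k]
    have e1 : r + 3 - 1 = r + 2 := rfl
    have e2 : r + 3 - 2 = r + 1 := rfl
    rw [e1, e2, W_eq_WL' (r + 2) (by omega) (k - 1), hsumW (k - 3) (r + 1)]
    have hrec := WL_rec (r := r) hk3
    by_cases hcase : 2 * k ≤ 3 * (r + 1)
    · have hIH := ih (r + 2) (by omega) k (by omega) hk3 (by
        show 2 * k ≤ 3 * (r + 2 - 1)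
        omega)
      rw [W_eq_WL' (r + 2) (by omega) k] at hIH
      have e1' : r + 2 - 1 = r + 1 := rfl
      have e2' : r + 2 - 2 = r := rfl
      rw [e1', e2', W_eq_WL' (r + 1) (by omega) (k - 1), hsumW (k - 3) r] at hIH
      rw [Finset.sum_Icc_succ_top (by omega : 1 ≤ r + 1)]
      push_cast at hrec hIH ⊢
      linarith
    · have hz1 : (WL (r + 2) k : ℤ) = 0 := by
        rw [← W_eq_WL' (r + 2) (by omega) k, W_vanish (by omega) (by
          show 3 * (r + 2 - 1) < 2 * k
          omega)]
        simp
      have hz2 : (WL (r + 1) (k - 1) : ℤ) = 0 := by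
        rw [← W_eq_WL' (r + 1) (by omega) (k - 1), W_vanish (by omega) (by
          show 3 * (r + 1 - 1) < 2 * (k - 1)
          omega)]
        simp
      have hz3 : ∀ j ∈ Finset.Icc 1 r, (j : ℤ) * WL j (k - 3) = 0 := by
        intro j hj
        rw [Finset.mem_Icc] at hj
        obtain ⟨m, rfl⟩ : ∃ m, j = m + 1 := ⟨j - 1, by omega⟩
        rw [← W_eq_WL m (k - 3), W_vanish (by omega) (by
          show 3 * (m + 1 - 1) < 2 * (k - 3)
          omega)]
        simp
      rw [Finset.sum_Icc_succ_top (by omega : 1 ≤ r + 1), Finset.sum_eq_zero hz3]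
      rw [hz1, hz2] at hrec
      push_cast at hrec ⊢
      linarith



end StarAux

theorem stmt4 (n k : ℕ) (hn : 1 ≤ n) (hk3 : 3 ≤ k) (hk : k ≤ 3 * (n - 1) / 2) :
    (W n k : ℤ) = ((n : ℤ) - 1) * W (n - 1) (k - 1)
      + ∑ j ∈ Finset.Icc 1 (n - 2), (j : ℤ) * W j (k - 3) := by
  have hk2 : 2 * k ≤ 3 * (n - 1) := by omega
  exact StarAux.main_aux n k hn hk3 hk2
end
end

section
/- For n ≥ 1 and 0 ≤ k ≤ ⌊3(n−1)/2⌋, W_{n+k+1,k} = Σ_{i=1}^{k+1} (−1)^{i+1} · C(k+1, i) · W_{n+k+1−i, k}. -/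
open Equiv Finset Filter
open scoped Classical

noncomputable section

set_option maxHeartbeats 1000000

def Afun (k s : ℕ) : ℕ :=
  (Finset.univ.filter fun σ : Equiv.Perm (Fin s) => σ.support = Finset.univ ∧ s + σ.cycleType.card = k).card

def Bfun (k s : ℕ) : ℕ :=
  (Finset.univ.filter fun σ : Equiv.Perm (Fin s) => σ.support = Finset.univ ∧ s + σ.cycleType.card = k + 2).card

lemma Afun_vanish {k s : ℕ} (h : k < s) : Afun k s = 0 := by
  rw [Afun, Finset.card_eq_zero, Finset.filter_eq_empty_iff]
  rintro σ - ⟨-, h2⟩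
  omega

lemma Bfun_vanish {k s : ℕ} (h : k + 1 < s) : Bfun k s = 0 := by
  rw [Bfun, Finset.card_eq_zero, Finset.filter_eq_empty_iff]
  rintro σ - ⟨hsup, hsum⟩
  have ht : σ.cycleType.card = 0 := by omega
  have hs := Equiv.Perm.sum_cycleType σ
  rw [Multiset.card_eq_zero.mp ht, hsup] at hs
  simp at hs
  omega

lemma Bfun_zero (k : ℕ) : Bfun k 0 = 0 := by
  rw [Bfun, Finset.card_eq_zero, Finset.filter_eq_empty_iff]
  rintro σ - ⟨-, h⟩
  rw [Subsingleton.elim σ 1] at h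
  simp [Equiv.Perm.cycleType_one] at h

lemma fiber_card {m : ℕ} (S : Finset (Fin m)) (p : ℕ → Prop) :
    (Finset.univ.filter fun σ : Equiv.Perm (Fin S.card) =>
        σ.support = Finset.univ ∧ p σ.cycleType.card).card =
    (Finset.univ.filter fun π : Equiv.Perm (Fin m) =>
        π.support = S ∧ p π.cycleType.card).card := by
  set e : Fin S.card ≃ {x : Fin m // x ∈ S} := S.equivFin.symm with he
  have hmap : (Finset.univ : Finset (Fin S.card)).map e.asEmbedding = S := by
    ext x
    simp only [Finset.mem_map, Finset.mem_univ, true_and]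
    constructor
    · rintro ⟨a, rfl⟩
      exact (e a).2
    · intro hx
      exact ⟨e.symm ⟨x, hx⟩, by simp⟩
  apply Finset.card_bij (fun σ _ => σ.extendDomain e)
  · intro σ hσ
    rw [Finset.mem_filter] at hσ ⊢
    obtain ⟨-, hsup, hp⟩ := hσ
    refine ⟨Finset.mem_univ _, ?_, ?_⟩
    · rw [Equiv.Perm.support_extend_domain, hsup, hmap]
    · rwa [Equiv.Perm.cycleType_extendDomain]
  · intro σ1 h1 σ2 h2 heq
    exact Equiv.Perm.extendDomainHom_injective e heq
  · intro π hπ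
    rw [Finset.mem_filter] at hπ
    obtain ⟨-, hsup, hp⟩ := hπ
    have h1 : ∀ x : Fin m, x ∈ S ↔ π x ∈ S := by
      intro x
      rw [← hsup]
      exact (Equiv.Perm.apply_mem_support).symm
    set σ : Equiv.Perm (Fin S.card) := Equiv.permCongr e.symm (π.subtypePerm (fun x => (h1 x).symm)) with hσ
    have hext : σ.extendDomain e = π := by
      ext x
      by_cases hx : x ∈ S
      · rw [Equiv.Perm.extendDomain_apply_subtype _ _ hx]
        simp [hσ, Equiv.permCongr_apply, Equiv.Perm.subtypePerm_apply]
      · rw [Equiv.Perm.extendDomain_apply_not_subtype _ _ hx]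
        have : x ∉ π.support := by rwa [hsup]
        exact congrArg Fin.val (Equiv.Perm.notMem_support.mp this).symm
    refine ⟨σ, ?_, hext⟩
    rw [Finset.mem_filter]
    refine ⟨Finset.mem_univ _, ?_, ?_⟩
    · rw [Finset.eq_univ_iff_forall]
      intro a
      rw [Equiv.Perm.mem_support]
      intro hfix
      have : π ((e a : Fin m)) = (e a : Fin m) := by
        have := congrArg (fun y => (e y : Fin m)) hfix
        simpa [hσ, Equiv.permCongr_apply, Equiv.Perm.subtypePerm_apply] using this
      have hmem : (e a : Fin m) ∈ π.support := by
        rw [hsup]; exact (e a).2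
      exact (Equiv.Perm.mem_support.mp hmem) this
    · have hct : σ.cycleType = π.cycleType := by
        rw [← hext, Equiv.Perm.cycleType_extendDomain]
      rw [hct]; exact hp

lemma pexc_eq_iff {m : ℕ} (hm : 0 < m) (π : Equiv.Perm (Fin m)) (k : ℕ) :
    pexc π = k ↔
      ((π ⟨0, hm⟩ = ⟨0, hm⟩ ∧ π.support.card + π.cycleType.card = k) ∨
       (¬ π ⟨0, hm⟩ = ⟨0, hm⟩ ∧ π.support.card + π.cycleType.card = k + 2)) := by
  have hc1 : c1 π + π.support.card = m := by
    have h := Finset.card_filter_add_card_filter_not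
      (s := (Finset.univ : Finset (Fin m))) (p := fun i => π i = i)
    rw [Finset.card_univ, Fintype.card_fin] at h
    rw [c1]
    convert h using 2
    congr 1
  have hiff : (∀ i : Fin m, (i : ℕ) = 0 → π i = i) ↔ π ⟨0, hm⟩ = ⟨0, hm⟩ := by
    constructor
    · intro h; exact h _ rfl
    · intro h i hi
      have : i = ⟨0, hm⟩ := Fin.ext hi
      rwa [this]
  by_cases h0 : π ⟨0, hm⟩ = ⟨0, hm⟩
  · rw [pexc, if_pos (hiff.mpr h0), c2]
    simp only [h0, not_true, false_and, or_false, true_and]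
    omega
  · rw [pexc, if_neg (fun h => h0 (hiff.mp h)), c2]
    simp only [h0, not_false_iff, true_and, false_and, false_or]
    have hs2 : 2 ≤ π.support.card := by
      apply Equiv.Perm.one_lt_card_support_of_ne_one
      intro h1
      exact h0 (by rw [h1]; rfl)
    omega

lemma count0 {m : ℕ} (hm : 0 < m) (s : ℕ) :
    (((Finset.univ : Finset (Fin m)).powerset.filter
        fun S => (⟨0, hm⟩ : Fin m) ∉ S).filter fun S => S.card = s).card
      = (m - 1).choose s := by
  have hkey : ((Finset.univ : Finset (Fin m)).powerset.filter
        fun S => (⟨0, hm⟩ : Fin m) ∉ S).filter (fun S => S.card = s)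
      = Finset.powersetCard s ((Finset.univ : Finset (Fin m)).erase ⟨0, hm⟩) := by
    ext S
    simp only [Finset.mem_filter, Finset.mem_powerset, Finset.mem_powersetCard,
      Finset.subset_erase, Finset.subset_univ, true_and]
  rw [hkey, Finset.card_powersetCard, Finset.card_erase_of_mem (Finset.mem_univ _),
    Finset.card_univ, Fintype.card_fin]

lemma count1 {m : ℕ} (hm : 0 < m) (s : ℕ) (hs : 1 ≤ s) :
    (((Finset.univ : Finset (Fin m)).powerset.filter
        fun S => (⟨0, hm⟩ : Fin m) ∈ S).filter fun S => S.card = s).card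
      = (m - 1).choose (s - 1) := by
  set z : Fin m := ⟨0, hm⟩ with hz
  have hc : ((Finset.univ : Finset (Fin m)).erase z).card = m - 1 := by
    rw [Finset.card_erase_of_mem (Finset.mem_univ _), Finset.card_univ, Fintype.card_fin]
  rw [← hc, ← Finset.card_powersetCard]
  apply Finset.card_bij (fun S _ => S.erase z)
  · intro S hS
    simp only [Finset.mem_filter, Finset.mem_powerset] at hS
    obtain ⟨⟨-, hzS⟩, hcard⟩ := hS
    rw [Finset.mem_powersetCard]
    constructor
    · exact Finset.erase_subset_erase _ (Finset.subset_univ _)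
    · rw [Finset.card_erase_of_mem hzS, hcard]
  · intro S1 h1 S2 h2 heq
    simp only [Finset.mem_filter, Finset.mem_powerset] at h1 h2
    have := congrArg (insert z) heq
    rwa [Finset.insert_erase h1.1.2, Finset.insert_erase h2.1.2] at this
  · intro T hT
    rw [Finset.mem_powersetCard] at hT
    obtain ⟨hsub, hcard⟩ := hT
    have hzT : z ∉ T := fun h => (Finset.mem_erase.mp (hsub h)).1 rfl
    refine ⟨insert z T, ?_, ?_⟩
    · simp only [Finset.mem_filter, Finset.mem_powerset]
      refine ⟨⟨Finset.subset_univ _, Finset.mem_insert_self _ _⟩, ?_⟩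
      rw [Finset.card_insert_of_notMem hzT, hcard]
      omega
    · rw [Finset.erase_insert hzT]

lemma myFilterCardEq {α : Type*} {s : Finset α} {p q : α → Prop} {dp : DecidablePred p}
    {dq : DecidablePred q} (h : ∀ a, p a ↔ q a) :
    (@Finset.filter α p dp s).card = (@Finset.filter α q dq s).card := by
  apply Finset.card_bij (fun a _ => a)
  · intro a ha
    simp only [Finset.mem_filter] at ha ⊢
    exact ⟨ha.1, (h a).mp ha.2⟩
  · intro a _ b _ hab
    exact hab
  · intro b hb
    simp only [Finset.mem_filter] at hb
    exact ⟨b, by simp only [Finset.mem_filter]; exact ⟨hb.1, (h b).mpr hb.2⟩, rfl⟩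

lemma W_eq (m k : ℕ) (hm : 0 < m) :
    W m k = ∑ s ∈ Finset.range (k + 2),
      ((m - 1).choose s * Afun k s + (m - 1).choose (s - 1) * Bfun k s) := by
  have hsplit : W m k
      = (Finset.univ.filter fun π : Equiv.Perm (Fin m) =>
          π ⟨0, hm⟩ = ⟨0, hm⟩ ∧ π.support.card + π.cycleType.card = k).card
      + (Finset.univ.filter fun π : Equiv.Perm (Fin m) =>
          ¬ π ⟨0, hm⟩ = ⟨0, hm⟩ ∧ π.support.card + π.cycleType.card = k + 2).card := by
    rw [W, Finset.filter_congr (fun π _ => pexc_eq_iff hm π k), Finset.filter_or,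
      Finset.card_union_of_disjoint]
    apply Finset.disjoint_filter.mpr
    rintro π - ⟨h1, -⟩ ⟨h2, -⟩
    exact h2 h1
  have hA : (Finset.univ.filter fun π : Equiv.Perm (Fin m) =>
          π ⟨0, hm⟩ = ⟨0, hm⟩ ∧ π.support.card + π.cycleType.card = k).card
      = ∑ s ∈ Finset.range (m + 1), (m - 1).choose s * Afun k s := by
    rw [Finset.card_eq_sum_card_fiberwise (f := fun π : Equiv.Perm (Fin m) => π.support)
      (t := (Finset.univ : Finset (Fin m)).powerset.filter fun S => (⟨0, hm⟩ : Fin m) ∉ S)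
      (fun π hπ => by
        rw [Finset.mem_coe, Finset.mem_filter] at hπ
        rw [Finset.mem_coe, Finset.mem_filter, Finset.mem_powerset]
        exact ⟨Finset.subset_univ _, Equiv.Perm.notMem_support.mpr hπ.2.1⟩)]
    have hfib : ∀ S ∈ (Finset.univ : Finset (Fin m)).powerset.filter
        (fun S => (⟨0, hm⟩ : Fin m) ∉ S),
        ((Finset.univ.filter fun π : Equiv.Perm (Fin m) =>
            π ⟨0, hm⟩ = ⟨0, hm⟩ ∧ π.support.card + π.cycleType.card = k).filter
          fun π => π.support = S).card = Afun k S.card := by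
      intro S hS
      rw [Finset.mem_filter] at hS
      rw [Finset.filter_filter, Afun]
      have hfc := fiber_card S (fun t => S.card + t = k)
      refine (myFilterCardEq fun π => ?_).trans (hfc.symm.trans (myFilterCardEq fun σ => Iff.rfl))
      constructor
      · rintro ⟨⟨-, hsum⟩, hsup⟩
        exact ⟨hsup, by rw [← hsup]; exact hsum⟩
      · rintro ⟨hsup, hsum⟩
        refine ⟨⟨?_, by rw [hsup]; exact hsum⟩, hsup⟩
        have : (⟨0, hm⟩ : Fin m) ∉ π.support := by rw [hsup]; exact hS.2
        exact Equiv.Perm.notMem_support.mp this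
    rw [Finset.sum_congr rfl hfib]
    rw [← Finset.sum_fiberwise_of_maps_to (g := Finset.card) (t := Finset.range (m + 1))
      (fun S hS => by
        rw [Finset.mem_range]
        have := Finset.card_le_univ S
        rw [Fintype.card_fin] at this
        omega)]
    apply Finset.sum_congr rfl
    intro s hs
    rw [Finset.sum_congr rfl (fun S hS => by rw [(Finset.mem_filter.mp hS).2]),
      Finset.sum_const, smul_eq_mul, count0 hm s]
  have hB : (Finset.univ.filter fun π : Equiv.Perm (Fin m) =>
          ¬ π ⟨0, hm⟩ = ⟨0, hm⟩ ∧ π.support.card + π.cycleType.card = k + 2).card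
      = ∑ s ∈ Finset.range (m + 1), (m - 1).choose (s - 1) * Bfun k s := by
    rw [Finset.card_eq_sum_card_fiberwise (f := fun π : Equiv.Perm (Fin m) => π.support)
      (t := (Finset.univ : Finset (Fin m)).powerset.filter fun S => (⟨0, hm⟩ : Fin m) ∈ S)
      (fun π hπ => by
        rw [Finset.mem_coe, Finset.mem_filter] at hπ
        rw [Finset.mem_coe, Finset.mem_filter, Finset.mem_powerset]
        exact ⟨Finset.subset_univ _, Equiv.Perm.mem_support.mpr hπ.2.1⟩)]
    have hfib : ∀ S ∈ (Finset.univ : Finset (Fin m)).powerset.filter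
        (fun S => (⟨0, hm⟩ : Fin m) ∈ S),
        ((Finset.univ.filter fun π : Equiv.Perm (Fin m) =>
            ¬ π ⟨0, hm⟩ = ⟨0, hm⟩ ∧ π.support.card + π.cycleType.card = k + 2).filter
          fun π => π.support = S).card = Bfun k S.card := by
      intro S hS
      rw [Finset.mem_filter] at hS
      rw [Finset.filter_filter, Bfun]
      have hfc := fiber_card S (fun t => S.card + t = k + 2)
      refine (myFilterCardEq fun π => ?_).trans (hfc.symm.trans (myFilterCardEq fun σ => Iff.rfl))
      constructor
      · rintro ⟨⟨-, hsum⟩, hsup⟩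
        exact ⟨hsup, by rw [← hsup]; exact hsum⟩
      · rintro ⟨hsup, hsum⟩
        refine ⟨⟨?_, by rw [hsup]; exact hsum⟩, hsup⟩
        have : (⟨0, hm⟩ : Fin m) ∈ π.support := by rw [hsup]; exact hS.2
        exact Equiv.Perm.mem_support.mp this
    rw [Finset.sum_congr rfl hfib]
    rw [← Finset.sum_fiberwise_of_maps_to (g := Finset.card) (t := Finset.range (m + 1))
      (fun S hS => by
        rw [Finset.mem_range]
        have := Finset.card_le_univ S
        rw [Fintype.card_fin] at this
        omega)]
    apply Finset.sum_congr rfl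
    intro s hs
    rw [Finset.sum_congr rfl (fun S hS => by rw [(Finset.mem_filter.mp hS).2]),
      Finset.sum_const, smul_eq_mul]
    by_cases h1 : 1 ≤ s
    · rw [count1 hm s h1]
    · have : s = 0 := by omega
      rw [this, Bfun_zero, Nat.mul_zero, Nat.mul_zero]
  rw [hsplit, hA, hB, ← Finset.sum_add_distrib]
  have hzero1 : ∀ s, m + 1 ≤ s →
      (m - 1).choose s * Afun k s + (m - 1).choose (s - 1) * Bfun k s = 0 := by
    intro s hs
    rw [Nat.choose_eq_zero_of_lt (by omega), Nat.choose_eq_zero_of_lt (by omega)]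
    simp
  have hzero2 : ∀ s, k + 2 ≤ s →
      (m - 1).choose s * Afun k s + (m - 1).choose (s - 1) * Bfun k s = 0 := by
    intro s hs
    rw [Afun_vanish (by omega), Bfun_vanish (by omega)]
    simp
  have h1 : ∑ s ∈ Finset.range (m + 1),
      ((m - 1).choose s * Afun k s + (m - 1).choose (s - 1) * Bfun k s)
    = ∑ s ∈ Finset.range (max (m + 1) (k + 2)),
      ((m - 1).choose s * Afun k s + (m - 1).choose (s - 1) * Bfun k s) := by
    apply Finset.sum_subset (Finset.range_subset_range.mpr (le_max_left _ _))
    intro s hs hns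
    rw [Finset.mem_range] at hs hns
    exact hzero1 s (by omega)
  have h2 : ∑ s ∈ Finset.range (k + 2),
      ((m - 1).choose s * Afun k s + (m - 1).choose (s - 1) * Bfun k s)
    = ∑ s ∈ Finset.range (max (m + 1) (k + 2)),
      ((m - 1).choose s * Afun k s + (m - 1).choose (s - 1) * Bfun k s) := by
    apply Finset.sum_subset (Finset.range_subset_range.mpr (le_max_right _ _))
    intro s hs hns
    rw [Finset.mem_range] at hs hns
    exact hzero2 s (by omega)
  rw [h1, h2]

lemma fdiff_congr (K : ℕ) : ∀ (x : ℕ) (f g : ℕ → ℤ), (∀ y, x ≤ y → f y = g y) →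
    (fwdDiff 1)^[K] f x = (fwdDiff 1)^[K] g x := by
  induction K with
  | zero => exact fun x f g h => h x le_rfl
  | succ K ih =>
    intro x f g h
    rw [Function.iterate_succ_apply', Function.iterate_succ_apply']
    show (fwdDiff 1)^[K] f (x + 1) - (fwdDiff 1)^[K] f x
        = (fwdDiff 1)^[K] g (x + 1) - (fwdDiff 1)^[K] g x
    rw [ih (x + 1) f g (fun y hy => h y (by omega)), ih x f g h]

lemma fdiff_zero_fun (K x : ℕ) : (fwdDiff 1)^[K] (fun _ : ℕ => (0 : ℤ)) x = 0 := by
  have : (fwdDiff (1 : ℕ))^[K] (fun _ : ℕ => (0 : ℤ)) = fun _ : ℕ => (0 : ℤ) :=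
    Function.iterate_fixed (fwdDiff_const 1 (0 : ℤ)) K
  rw [this]

lemma fdiff_choose_zero {j K : ℕ} (h : j < K) (x : ℕ) :
    (fwdDiff 1)^[K] (fun y : ℕ => (y.choose j : ℤ)) x = 0 := by
  obtain ⟨r, rfl⟩ : ∃ r, K = (r + 1) + j := ⟨K - j - 1, by omega⟩
  rw [Function.iterate_add_apply]
  have h1 : (fwdDiff (1:ℕ))^[j] (fun y : ℕ => (y.choose j : ℤ))
      = fun y : ℕ => (y.choose 0 : ℤ) := by
    simpa using fwdDiff_iter_choose 0 j
  rw [h1]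
  have h2 : (fun y : ℕ => (y.choose 0 : ℤ)) = fun _ : ℕ => (1 : ℤ) := by
    funext y; simp
  rw [h2, Function.iterate_succ_apply, fwdDiff_const]
  exact fdiff_zero_fun r x

lemma fdiff_shift (K : ℕ) : ∀ (f : ℕ → ℤ) (x : ℕ),
    (fwdDiff 1)^[K] f (x + 1) = (fwdDiff 1)^[K] (fun y => f (y + 1)) x := by
  induction K with
  | zero => intro f x; rfl
  | succ K ih =>
    intro f x
    rw [Function.iterate_succ_apply, Function.iterate_succ_apply, ih (fwdDiff 1 f) x]
    congr 1

lemma fdiff_choose_sub_one {j K : ℕ} (h : j < K) (x : ℕ) (hx : 1 ≤ x) :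
    (fwdDiff 1)^[K] (fun y : ℕ => ((y - 1).choose j : ℤ)) x = 0 := by
  obtain ⟨x', rfl⟩ : ∃ x', x = x' + 1 := ⟨x - 1, by omega⟩
  rw [fdiff_shift]
  have h2 : (fun y : ℕ => ((y + 1 - 1).choose j : ℤ)) = fun y : ℕ => (y.choose j : ℤ) := by
    funext y; simp
  rw [h2]
  exact fdiff_choose_zero h x'

lemma main_zero (n k : ℕ) (hn : 1 ≤ n) :
    (fwdDiff 1)^[k + 1] (fun x => (W x k : ℤ)) n = 0 := by
  have hagree : ∀ y, n ≤ y → (W y k : ℤ) =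
      ∑ s ∈ Finset.range (k + 2),
        (((y - 1).choose s : ℤ) * (Afun k s : ℤ) + ((y - 1).choose (s - 1) : ℤ) * (Bfun k s : ℤ)) := by
    intro y hy
    rw [W_eq y k (by omega)]
    push_cast
    rfl
  rw [fdiff_congr (k + 1) n _ _ hagree]
  have hfun : (fun x : ℕ => ∑ s ∈ Finset.range (k + 2),
        (((x - 1).choose s : ℤ) * (Afun k s : ℤ) + ((x - 1).choose (s - 1) : ℤ) * (Bfun k s : ℤ)))
      = ∑ s ∈ Finset.range (k + 2), ((Afun k s : ℤ) • (fun x : ℕ => ((x - 1).choose s : ℤ))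
          + (Bfun k s : ℤ) • (fun x : ℕ => ((x - 1).choose (s - 1) : ℤ))) := by
    funext x
    rw [Finset.sum_apply]
    apply Finset.sum_congr rfl
    intro s _
    show _ = (Afun k s : ℤ) * ((x - 1).choose s : ℤ) + (Bfun k s : ℤ) * ((x - 1).choose (s - 1) : ℤ)
    ring
  rw [hfun, fwdDiff_iter_finset_sum, Finset.sum_apply]
  apply Finset.sum_eq_zero
  intro s hs
  rw [Finset.mem_range] at hs
  rw [fwdDiff_iter_add, Pi.add_apply, fwdDiff_iter_const_smul, fwdDiff_iter_const_smul,
    Pi.smul_apply, Pi.smul_apply]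
  have hB : (fwdDiff 1)^[k + 1] (fun x : ℕ => ((x - 1).choose (s - 1) : ℤ)) n = 0 :=
    fdiff_choose_sub_one (by omega) n hn
  by_cases hsk : s ≤ k
  · rw [fdiff_choose_sub_one (by omega) n hn, hB, smul_zero, smul_zero, add_zero]
  · have hs1 : s = k + 1 := by omega
    subst hs1
    rw [Afun_vanish (by omega), hB, smul_zero, add_zero, Nat.cast_zero, zero_smul]

theorem stmt5 (n k : ℕ) (hn : 1 ≤ n) (hk : k ≤ 3 * (n - 1) / 2) :
    (W (n + k + 1) k : ℤ) =
      ∑ i ∈ Finset.Icc 1 (k + 1),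
        (-1 : ℤ) ^ (i + 1) * (k + 1).choose i * W (n + k + 1 - i) k := by
  have h0 := main_zero n k hn
  have hexp := fwdDiff_iter_eq_sum_shift (1 : ℕ) (fun x => (W x k : ℤ)) (k + 1) n
  rw [h0] at hexp
  simp only [smul_eq_mul, mul_one] at hexp
  -- hexp : 0 = ∑ i ∈ range (k+2), (-1)^(k+1-i) * C(k+1,i) * W (n+i)
  have hz : ∑ i ∈ Finset.range (k + 2),
      (-1 : ℤ) ^ i * ((k + 1).choose i : ℤ) * (W (n + k + 1 - i) k : ℤ) = 0 := by
    rw [← Finset.sum_range_reflect]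
    have hcongr : ∀ i ∈ Finset.range (k + 2),
        (-1 : ℤ) ^ (k + 2 - 1 - i) * ((k + 1).choose (k + 2 - 1 - i) : ℤ)
            * (W (n + k + 1 - (k + 2 - 1 - i)) k : ℤ)
        = (-1 : ℤ) ^ (k + 1 - i) * ((k + 1).choose i : ℤ) * (W (n + i) k : ℤ) := by
      intro i hi
      rw [Finset.mem_range] at hi
      have h1 : k + 2 - 1 - i = k + 1 - i := by omega
      have h2 : (k + 1).choose (k + 1 - i) = (k + 1).choose i := Nat.choose_symm (by omega)
      have h3 : n + k + 1 - (k + 1 - i) = n + i := by omega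
      rw [h1, h2, h3]
    rw [Finset.sum_congr rfl hcongr]
    exact hexp.symm
  rw [Finset.sum_range_succ'] at hz
  simp only [pow_zero, Nat.choose_zero_right, Nat.cast_one, one_mul, Nat.sub_zero] at hz
  -- hz : ∑ i ∈ range (k+1), (-1)^(i+1) * C(k+1,i+1) * W (n+k+1-(i+1)) + W (n+k+1) = 0
  have hIcc : Finset.Icc 1 (k + 1) = Finset.Ico 1 (k + 2) := by
    rw [← Finset.Ico_add_one_right_eq_Icc]; rfl
  rw [hIcc, Finset.sum_Ico_eq_sum_range]
  simp only [show k + 2 - 1 = k + 1 from rfl]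
  have hcongr2 : ∀ i ∈ Finset.range (k + 1),
      (-1 : ℤ) ^ (1 + i + 1) * ((k + 1).choose (1 + i) : ℤ) * (W (n + k + 1 - (1 + i)) k : ℤ)
      = -((-1 : ℤ) ^ (i + 1) * ((k + 1).choose (i + 1) : ℤ) * (W (n + k + 1 - (i + 1)) k : ℤ)) := by
    intro i hi
    have h1 : 1 + i = i + 1 := by omega
    rw [h1]
    ring
  rw [Finset.sum_congr rfl hcongr2, Finset.sum_neg_distrib]
  linarith [hz]
end
end

section
/- For n ≥ 1 and any k, the number of permutations π ∈ Sₙ with pexc(π) = k and π(1) ≠ 1 equals (n−1) times the number of permutations σ ∈ S_{n−1} with pexc(σ) = k−1. -/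
open Equiv Finset Filter
open scoped Classical

noncomputable section

/-! ### Auxiliary lemmas -/

lemma c1_add_card {n : ℕ} (σ : Equiv.Perm (Fin n)) : c1 σ + σ.support.card = n := by
  have := Finset.card_filter_add_card_filter_not
    (s := (Finset.univ : Finset (Fin n))) (p := fun i => σ i = i)
  simpa [c1, Equiv.Perm.support, Finset.card_univ] using this

lemma c1_le {n : ℕ} (σ : Equiv.Perm (Fin n)) : c1 σ ≤ n := by
  have := c1_add_card σ; omega

lemma c1_conj {n : ℕ} (σ g : Equiv.Perm (Fin n)) : c1 (g * σ * g⁻¹) = c1 σ := by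
  classical
  unfold c1
  apply Finset.card_nbij' (i := fun x => g⁻¹ x) (j := fun x => g x)
  · intro x hx
    simp only [Finset.mem_coe, Finset.mem_filter, Finset.mem_univ, true_and] at hx ⊢
    have : g (σ (g⁻¹ x)) = x := hx
    calc σ (g⁻¹ x) = g⁻¹ (g (σ (g⁻¹ x))) := by simp
    _ = g⁻¹ x := by rw [this]
  · intro x hx
    simp only [Finset.mem_coe, Finset.mem_filter, Finset.mem_univ, true_and] at hx ⊢
    simp [Equiv.Perm.mul_apply, hx]
  · intro x _; simp
  · intro x _; simp

lemma c2_conj {n : ℕ} (σ g : Equiv.Perm (Fin n)) : c2 (g * σ * g⁻¹) = c2 σ := by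
  unfold c2; rw [Equiv.Perm.cycleType_conj]

lemma c2_pos {n : ℕ} {σ : Equiv.Perm (Fin n)} {x : Fin n} (hx : σ x ≠ x) : 1 ≤ c2 σ := by
  have hσ : σ ≠ 1 := by intro h; exact hx (by simp [h])
  have : σ.cycleType ≠ 0 := fun h => hσ (Equiv.Perm.cycleType_eq_zero.mp h)
  unfold c2
  exact Multiset.card_pos.mpr this

lemma c1_add_two_le {n : ℕ} {σ : Equiv.Perm (Fin n)} {x : Fin n} (hx : σ x ≠ x) :
    c1 σ + 2 ≤ n := by
  have hσ : σ ≠ 1 := by intro h; exact hx (by simp [h])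
  have h2 : 1 < σ.support.card := Equiv.Perm.one_lt_card_support_of_ne_one hσ
  have := c1_add_card σ; omega

lemma c2_eq_card_factors {n : ℕ} (σ : Equiv.Perm (Fin n)) :
    c2 σ = σ.cycleFactorsFinset.card := by
  simp [c2, Equiv.Perm.cycleType]

/-- The embedding `Fin s → Fin (s+1)` as an equivalence onto nonzero elements. -/
def toSucc (s : ℕ) : Fin s ≃ {x : Fin (s+1) // x ≠ 0} where
  toFun x := ⟨x.succ, Fin.succ_ne_zero x⟩
  invFun y := (y : Fin (s+1)).pred y.2
  left_inv x := by simp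
  right_inv y := by simp

lemma hat_eq {s : ℕ} (σ : Equiv.Perm (Fin s)) :
    Equiv.Perm.decomposeFin.symm (0, σ) = σ.extendDomain (toSucc s) := by
  refine Equiv.ext fun x => ?_
  refine Fin.cases ?_ (fun i => ?_) x
  · rw [Equiv.Perm.decomposeFin_symm_apply_zero,
      Equiv.Perm.extendDomain_apply_not_subtype (b := 0) _ _ (by simp)]
  · rw [Equiv.Perm.decomposeFin_symm_apply_succ,
      Equiv.Perm.extendDomain_apply_subtype (b := i.succ) _ _ (Fin.succ_ne_zero i)]
    simp [toSucc]

lemma decompose_swap {s : ℕ} (p : Fin (s+1)) (σ : Equiv.Perm (Fin s)) :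
    Equiv.Perm.decomposeFin.symm (p, σ) =
      Equiv.swap 0 p * Equiv.Perm.decomposeFin.symm (0, σ) := by
  refine Equiv.ext fun x => ?_
  refine Fin.cases ?_ (fun i => ?_) x
  · simp [Equiv.Perm.decomposeFin_symm_apply_zero]
  · simp [Equiv.Perm.decomposeFin_symm_apply_succ]

lemma c1_hat {s : ℕ} (σ : Equiv.Perm (Fin s)) :
    c1 (Equiv.Perm.decomposeFin.symm (0, σ)) = c1 σ + 1 := by
  rw [hat_eq]
  have h1 := c1_add_card (σ.extendDomain (toSucc s))
  rw [Equiv.Perm.card_support_extend_domain] at h1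
  have h2 := c1_add_card σ
  omega

lemma c2_hat {s : ℕ} (σ : Equiv.Perm (Fin s)) :
    c2 (Equiv.Perm.decomposeFin.symm (0, σ)) = c2 σ := by
  rw [hat_eq]
  unfold c2
  rw [Equiv.Perm.cycleType_extendDomain]

section SwapMul

variable {s : ℕ} {τ : Equiv.Perm (Fin (s+1))} {p : Fin (s+1)}

lemma fix_set_A (h0 : τ 0 = 0) (hp : p ≠ 0) (hpp : τ p = p) :
    (Finset.univ.filter fun x => (Equiv.swap 0 p * τ) x = x) =
      (Finset.univ.filter fun x => τ x = x) \ {0, p} := by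
  ext x
  simp only [Finset.mem_filter, Finset.mem_univ, true_and, Finset.mem_sdiff,
    Finset.mem_insert, Finset.mem_singleton]
  simp only [Equiv.Perm.mul_apply]
  constructor
  · intro hx
    have hx0 : x ≠ 0 := by
      rintro rfl; rw [h0, Equiv.swap_apply_left] at hx; exact hp hx
    have hxp : x ≠ p := by
      rintro rfl; rw [hpp, Equiv.swap_apply_right] at hx; exact hp hx.symm
    refine ⟨?_, by tauto⟩
    have h2 : τ x = Equiv.swap 0 p ((Equiv.swap 0 p) (τ x)) := by simp
    rw [h2, hx, Equiv.swap_apply_of_ne_of_ne hx0 hxp]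
  · rintro ⟨hfix, hne⟩
    push_neg at hne
    rw [hfix, Equiv.swap_apply_of_ne_of_ne hne.1 hne.2]

lemma fix_set_B (h0 : τ 0 = 0) (hp : p ≠ 0) (hpp : τ p ≠ p) :
    (Finset.univ.filter fun x => (Equiv.swap 0 p * τ) x = x) =
      (Finset.univ.filter fun x => τ x = x) \ {0} := by
  ext x
  simp only [Finset.mem_filter, Finset.mem_univ, true_and, Finset.mem_sdiff,
    Finset.mem_singleton]
  simp only [Equiv.Perm.mul_apply]
  constructor
  · intro hx
    have hx0 : x ≠ 0 := by
      rintro rfl; rw [h0, Equiv.swap_apply_left] at hx; exact hp hx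
    have hxp : x ≠ p := by
      intro h
      rw [h] at hx
      have hτp : τ p = 0 := by
        have h2 : τ p = Equiv.swap 0 p ((Equiv.swap 0 p) (τ p)) := by simp
        rw [h2, hx, Equiv.swap_apply_right]
      exact hp (τ.injective (by rw [hτp, h0]))
    refine ⟨?_, hx0⟩
    have h2 : τ x = Equiv.swap 0 p ((Equiv.swap 0 p) (τ x)) := by simp
    rw [h2, hx, Equiv.swap_apply_of_ne_of_ne hx0 hxp]
  · rintro ⟨hfix, hx0⟩
    have hxp : x ≠ p := by rintro rfl; exact hpp hfix
    rw [hfix, Equiv.swap_apply_of_ne_of_ne hx0 hxp]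

lemma c1A (h0 : τ 0 = 0) (hp : p ≠ 0) (hpp : τ p = p) :
    c1 τ = c1 (Equiv.swap 0 p * τ) + 2 := by
  have hsub : ({0, p} : Finset (Fin (s+1))) ⊆ Finset.univ.filter fun x => τ x = x := by
    intro x hx
    simp only [Finset.mem_insert, Finset.mem_singleton] at hx
    simp only [Finset.mem_filter, Finset.mem_univ, true_and]
    rcases hx with rfl | rfl
    exacts [h0, hpp]
  have hcard2 : ({0, p} : Finset (Fin (s+1))).card = 2 := by
    rw [Finset.card_insert_of_notMem (by simpa using hp.symm), Finset.card_singleton]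
  have hle := Finset.card_le_card hsub
  rw [hcard2] at hle
  unfold c1
  rw [fix_set_A h0 hp hpp, Finset.card_sdiff_of_subset hsub, hcard2]
  unfold c1 at *
  omega

lemma c1B (h0 : τ 0 = 0) (hp : p ≠ 0) (hpp : τ p ≠ p) :
    c1 τ = c1 (Equiv.swap 0 p * τ) + 1 := by
  have hsub : ({0} : Finset (Fin (s+1))) ⊆ Finset.univ.filter fun x => τ x = x := by
    intro x hx
    simp only [Finset.mem_singleton] at hx
    simp only [Finset.mem_filter, Finset.mem_univ, true_and]
    rw [hx]; exact h0
  have hle := Finset.card_le_card hsub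
  rw [Finset.card_singleton] at hle
  unfold c1
  rw [fix_set_B h0 hp hpp, Finset.card_sdiff_of_subset hsub, Finset.card_singleton]
  unfold c1 at *
  omega

set_option maxHeartbeats 1000000 in
lemma c2A (h0 : τ 0 = 0) (hp : p ≠ 0) (hpp : τ p = p) :
    c2 (Equiv.swap 0 p * τ) = c2 τ + 1 := by
  have hd : (Equiv.swap 0 p).Disjoint τ := by
    intro x
    by_cases hx0 : x = 0
    · right; rw [hx0, h0]
    by_cases hxp : x = p
    · right; rw [hxp, hpp]
    · left; exact Equiv.swap_apply_of_ne_of_ne hx0 hxp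
  unfold c2
  rw [hd.cycleType_mul, Multiset.card_add,
    (Equiv.Perm.isCycle_swap (Ne.symm hp)).cycleType]
  simp [add_comm]

set_option maxHeartbeats 2000000 in
lemma c2B (h0 : τ 0 = 0) (hp : p ≠ 0) (hpp : τ p ≠ p) :
    c2 (Equiv.swap 0 p * τ) = c2 τ := by
  classical
  have hpsupp : p ∈ τ.support := Equiv.Perm.mem_support.2 hpp
  set c := τ.cycleOf p with hc_def
  have hc : c.IsCycle := Equiv.Perm.isCycle_cycleOf τ hpp
  have hmem : c ∈ τ.cycleFactorsFinset :=
    Equiv.Perm.cycleOf_mem_cycleFactorsFinset_iff.2 hpsupp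
  have hcomm : Commute c τ := Equiv.Perm.self_mem_cycle_factors_commute hmem
  set r := τ * c⁻¹ with hr_def
  have hcr : (Equiv.swap 0 p * c) * r = Equiv.swap 0 p * τ := by
    rw [mul_assoc]
    congr 1
    calc c * (τ * c⁻¹) = (c * τ) * c⁻¹ := by rw [mul_assoc]
    _ = (τ * c) * c⁻¹ := by rw [hcomm.eq]
    _ = τ := by rw [mul_assoc]; simp
  have hc0 : c 0 = 0 := by
    rw [hc_def, Equiv.Perm.cycleOf_apply]
    split <;> simp [h0]
  have hcp : c p = τ p := Equiv.Perm.cycleOf_apply_self τ p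
  have hcp_ne : c p ≠ p := by rw [hcp]; exact hpp
  have hcinv : ∀ x, c x ≠ x → r x = x := by
    intro x hx
    have hsc : τ.SameCycle p x :=
      (Equiv.Perm.mem_support_cycleOf_iff.mp (Equiv.Perm.mem_support.2 hx)).1
    have h1 : c⁻¹ x = τ⁻¹ x := by
      rw [hc_def, Equiv.Perm.cycleOf_inv, Equiv.Perm.cycleOf_apply,
        if_pos ((Equiv.Perm.sameCycle_inv).2 hsc)]
    show τ (c⁻¹ x) = x
    rw [h1]; simp
  have hdisj_cr : c.Disjoint r := fun x => by
    by_cases hx : c x = x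
    · exact Or.inl hx
    · exact Or.inr (hcinv x hx)
  have hr0 : r 0 = 0 := by
    show τ (c⁻¹ 0) = 0
    have h1 : c⁻¹ 0 = 0 := by conv_lhs => rw [← hc0, ← Equiv.Perm.mul_apply, inv_mul_cancel, Equiv.Perm.one_apply]
    rw [h1, h0]
  have hrp : r p = p := hcinv p hcp_ne
  obtain ⟨t, ht⟩ : ∃ t, c.toList p = p :: t := by
    cases h : c.toList p with
    | nil =>
      exact absurd (Equiv.Perm.toList_eq_nil_iff.mp h)
        (by simp [Equiv.Perm.mem_support.2 hcp_ne])
    | cons a t =>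
      have ha : a = p := by
        have h0' := Equiv.Perm.toList_getElem_zero (p := c) (x := p)
          (Equiv.Perm.mem_support.2 hcp_ne)
        simpa [h] using h0'
      exact ⟨t, by rw [ha]⟩
  have hform : c = (p :: t).formPerm := by
    rw [← ht, Equiv.Perm.formPerm_toList, hc.cycleOf_eq hcp_ne]
  have h0notin : (0 : Fin (s+1)) ∉ c.toList p := by
    intro hmem0
    rw [Equiv.Perm.mem_toList_iff] at hmem0
    obtain ⟨⟨i, hi⟩, -⟩ := hmem0
    have hz : (c ^ i) 0 = 0 :=
      Equiv.Perm.zpow_apply_eq_self_of_apply_eq_self hc0 i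
    exact hp ((c ^ i).injective (by rw [hi, hz]))
  have hnodup : ((0 : Fin (s+1)) :: p :: t).Nodup := by
    rw [List.nodup_cons, ← ht]
    exact ⟨h0notin, Equiv.Perm.nodup_toList c p⟩
  have hlen : 2 ≤ ((0 : Fin (s+1)) :: p :: t).length := by
    simp [List.length_cons]
  have hgform : Equiv.swap 0 p * c = ((0 : Fin (s+1)) :: p :: t).formPerm := by
    rw [List.formPerm_cons_cons, ← hform]
  have hg : (Equiv.swap 0 p * c).IsCycle := by
    rw [hgform]; exact List.isCycle_formPerm hnodup hlen
  have hdisj_gr : (Equiv.swap 0 p * c).Disjoint r := fun x => by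
    by_cases hrx : r x = x
    · exact Or.inr hrx
    have hx0 : x ≠ 0 := fun h => hrx (h ▸ hr0)
    have hxp : x ≠ p := fun h => hrx (h ▸ hrp)
    have hcx : c x = x := (hdisj_cr x).resolve_right hrx
    left
    show Equiv.swap 0 p (c x) = x
    rw [hcx, Equiv.swap_apply_of_ne_of_ne hx0 hxp]
  have hfac : r.cycleFactorsFinset = τ.cycleFactorsFinset \ {c} :=
    Equiv.Perm.cycleFactorsFinset_mul_inv_mem_eq_sdiff hmem
  have hcardr : r.cycleFactorsFinset.card + 1 = τ.cycleFactorsFinset.card := by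
    rw [hfac, Finset.sdiff_singleton_eq_erase, Finset.card_erase_of_mem hmem]
    have h1 : 1 ≤ τ.cycleFactorsFinset.card := Finset.card_pos.2 ⟨c, hmem⟩
    omega
  have hmain : c2 (Equiv.swap 0 p * τ) = c2 r + 1 := by
    unfold c2
    rw [← hcr, hdisj_gr.cycleType_mul, Multiset.card_add, hg.cycleType]
    simp [add_comm]
  rw [hmain, c2_eq_card_factors, c2_eq_card_factors]
  exact hcardr

end SwapMul

lemma pexc_decompose {s : ℕ} (k : ℕ) (hk : 1 ≤ k) (p' : Fin (s+1))
    (σ : Equiv.Perm (Fin (s+1))) :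
    (pexc (Equiv.Perm.decomposeFin.symm (p'.succ, σ)) = k) ↔
      (if σ p' = p' then s + 1 + c2 σ - c1 σ = k - 1
        else s + 1 + c2 σ - c1 σ = k + 1) := by
  set τ := Equiv.Perm.decomposeFin.symm ((0 : Fin (s+2)), σ) with hτ_def
  have hτ0 : τ 0 = 0 := by
    rw [hτ_def, Equiv.Perm.decomposeFin_symm_apply_zero]
  have hτsucc : τ p'.succ = (σ p').succ := by
    rw [hτ_def, Equiv.Perm.decomposeFin_symm_apply_succ]
    simp
  have hπ : Equiv.Perm.decomposeFin.symm (p'.succ, σ) = Equiv.swap 0 p'.succ * τ :=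
    decompose_swap _ _
  have hp : p'.succ ≠ (0 : Fin (s+2)) := Fin.succ_ne_zero p'
  have hc1τ : c1 τ = c1 σ + 1 := c1_hat σ
  have hc2τ : c2 τ = c2 σ := c2_hat σ
  have hc1σ : c1 σ ≤ s + 1 := c1_le σ
  have hind : ¬∀ i : Fin (s+2), (i : ℕ) = 0 →
      (Equiv.Perm.decomposeFin.symm (p'.succ, σ)) i = i := by
    intro hall
    have h0 := hall 0 (by simp)
    rw [Equiv.Perm.decomposeFin_symm_apply_zero] at h0
    exact hp h0
  rw [pexc, if_neg hind]
  by_cases hfix : σ p' = p'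
  · rw [if_pos hfix]
    have hτp : τ p'.succ = p'.succ := by rw [hτsucc, hfix]
    have e1 : c1 τ = c1 (Equiv.swap 0 p'.succ * τ) + 2 := c1A hτ0 hp hτp
    have e2 : c2 (Equiv.swap 0 p'.succ * τ) = c2 τ + 1 := c2A hτ0 hp hτp
    rw [hπ]
    omega
  · rw [if_neg hfix]
    have hτp : τ p'.succ ≠ p'.succ := by rw [hτsucc]; simpa using hfix
    have e1 : c1 τ = c1 (Equiv.swap 0 p'.succ * τ) + 1 := c1B hτ0 hp hτp
    have e2 : c2 (Equiv.swap 0 p'.succ * τ) = c2 τ := c2B hτ0 hp hτp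
    rw [hπ]
    omega

lemma pexc_D {s : ℕ} (k : ℕ) (hk : 1 ≤ k) (σ : Equiv.Perm (Fin (s+1))) :
    (pexc σ = k - 1) ↔
      (if σ 0 = 0 then s + 1 + c2 σ - c1 σ = k - 1
        else s + 1 + c2 σ - c1 σ = k + 1) := by
  by_cases h : σ 0 = 0
  · rw [if_pos h, pexc, if_pos ?_]
    · omega
    · intro i hi
      have : i = 0 := Fin.ext (by simpa using hi)
      rw [this]; exact h
  · rw [if_neg h, pexc, if_neg ?_]
    · have h1 : 1 ≤ c2 σ := c2_pos h
      have h2 : c1 σ + 2 ≤ s + 1 := c1_add_two_le h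
      omega
    · intro hall
      exact h (hall 0 (by simp))

lemma count_conj {s : ℕ} (k : ℕ) (p' : Fin (s+1)) :
    ∑ σ : Equiv.Perm (Fin (s+1)),
      (if (if σ 0 = 0 then s + 1 + c2 σ - c1 σ = k - 1
          else s + 1 + c2 σ - c1 σ = k + 1) then 1 else 0) =
    ∑ σ : Equiv.Perm (Fin (s+1)),
      (if (if σ p' = p' then s + 1 + c2 σ - c1 σ = k - 1
          else s + 1 + c2 σ - c1 σ = k + 1) then 1 else 0) := by
  classical
  set w : Equiv.Perm (Fin (s+1)) := Equiv.swap 0 p' with hw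
  have hww : ∀ σ : Equiv.Perm (Fin (s+1)), w * σ * w = w * σ * w⁻¹ := by
    intro σ; rw [Equiv.swap_inv]
  refine Fintype.sum_equiv ((Equiv.mulLeft w).trans (Equiv.mulRight w)) _ _ fun σ => ?_
  have happ : ((Equiv.mulLeft w).trans (Equiv.mulRight w)) σ = w * σ * w := rfl
  rw [happ]
  have hc1 : c1 (w * σ * w) = c1 σ := by rw [hww]; exact c1_conj σ w
  have hc2 : c2 (w * σ * w) = c2 σ := by rw [hww]; exact c2_conj σ w
  have hfix : (w * σ * w) p' = p' ↔ σ 0 = 0 := by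
    have hwp : w p' = 0 := Equiv.swap_apply_right 0 p'
    constructor
    · intro h
      have h1 : w (σ (w p')) = p' := h
      rw [hwp] at h1
      have h2 : σ 0 = w p' := by
        rw [← h1, hw, Equiv.swap_apply_self]
      rw [h2, hwp]
    · intro h
      have hw0 : w 0 = p' := Equiv.swap_apply_left 0 p'
      show w (σ (w p')) = p'
      rw [hwp, h, hw0]
  simp only [hc1, hc2, hfix]

theorem stmt6 (n k : ℕ) (hn : 0 < n) (hk : 1 ≤ k) :
    (Finset.univ.filter fun π : Equiv.Perm (Fin n) =>
        pexc π = k ∧ π ⟨0, hn⟩ ≠ ⟨0, hn⟩).card = (n - 1) * W (n - 1) (k - 1) := by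
  classical
  match n, hn with
  | 1, _ =>
    rw [show (1:ℕ) - 1 = 0 from rfl, zero_mul, Finset.card_eq_zero,
      Finset.filter_eq_empty_iff]
    refine fun π _ => ?_
    rintro ⟨-, hne⟩
    exact hne (Subsingleton.elim _ _)
  | (s+2), _ =>
    rw [Finset.card_filter]
    rw [show (⟨0, by omega⟩ : Fin (s+2)) = 0 from rfl]
    rw [← Equiv.sum_comp (Equiv.Perm.decomposeFin.symm
      : (Fin (s+2) × Equiv.Perm (Fin (s+1))) ≃ Equiv.Perm (Fin (s+2)))
      (fun π => if pexc π = k ∧ π 0 ≠ 0 then 1 else 0)]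
    rw [Fintype.sum_prod_type]
    rw [Fin.sum_univ_succ]
    have hzero_term : ∑ σ : Equiv.Perm (Fin (s+1)),
        (if pexc (Equiv.Perm.decomposeFin.symm ((0 : Fin (s+2)), σ)) = k ∧
            (Equiv.Perm.decomposeFin.symm ((0 : Fin (s+2)), σ)) 0 ≠ 0 then 1 else 0) = 0 := by
      apply Finset.sum_eq_zero
      intro σ _
      rw [if_neg]
      rintro ⟨-, hne⟩
      exact hne (Equiv.Perm.decomposeFin_symm_apply_zero 0 σ)
    rw [hzero_term, zero_add]
    have hW : (s + 2 - 1) * W (s + 2 - 1) (k - 1) =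
        ∑ _p' : Fin (s+1), ∑ σ : Equiv.Perm (Fin (s+1)),
          (if pexc σ = k - 1 then 1 else 0) := by
      rw [show s + 2 - 1 = s + 1 from rfl]
      rw [Finset.sum_const, Finset.card_univ, Fintype.card_fin, smul_eq_mul]
      congr 1
      rw [W, Finset.card_filter]
    rw [hW]
    refine Finset.sum_congr rfl fun p' _ => ?_
    calc
      ∑ σ : Equiv.Perm (Fin (s+1)),
          (if pexc (Equiv.Perm.decomposeFin.symm (p'.succ, σ)) = k ∧
              (Equiv.Perm.decomposeFin.symm (p'.succ, σ)) 0 ≠ 0 then 1 else 0)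
        = ∑ σ : Equiv.Perm (Fin (s+1)),
            (if (if σ p' = p' then s + 1 + c2 σ - c1 σ = k - 1
                else s + 1 + c2 σ - c1 σ = k + 1) then 1 else 0) := by
          refine Finset.sum_congr rfl fun σ _ => ?_
          refine if_congr ?_ rfl rfl
          rw [Equiv.Perm.decomposeFin_symm_apply_zero]
          rw [and_iff_left (Fin.succ_ne_zero p')]
          exact pexc_decompose k hk p' σ
      _ = ∑ σ : Equiv.Perm (Fin (s+1)),
            (if pexc σ = k - 1 then 1 else 0) := by
          rw [← count_conj k p']
          refine Finset.sum_congr rfl fun σ _ => ?_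
          refine if_congr ?_ rfl rfl
          exact (pexc_D k hk σ).symm
end
end

section
/- For n ≥ 1 and k ≥ 3, the number of permutations π ∈ Sₙ with pexc(π) = k and π(1) = 1 equals the number of σ ∈ S_{n−1} with pexc(σ) = k and σ(1) = 1, plus (n−2) times the number of τ ∈ S_{n−2} with pexc(τ) = k−3. -/
open Equiv Finset Filter
open scoped Classical

noncomputable section

namespace StarHelper

variable {α : Type*} [Fintype α] [DecidableEq α]

open Equiv.Perm

/-- Inserting a fixed point `y` into the cycle `c` right after `x` gives a cycle. -/
lemma isCycle_mul_swap_of_fix {c : Perm α} (hc : c.IsCycle) {x y : α}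
    (hx : c x ≠ x) (hy : c y = y) (hxy : x ≠ y) : (c * Equiv.swap x y).IsCycle := by
  have hdx : (c * Equiv.swap x y) x = y := by
    simp [Equiv.Perm.mul_apply, Equiv.swap_apply_left, hy]
  have hdy : (c * Equiv.swap x y) y = c x := by
    simp [Equiv.Perm.mul_apply, Equiv.swap_apply_right]
  have key : ∀ k : ℕ, (c * Equiv.swap x y).SameCycle x ((c ^ k) x) := by
    intro k
    induction k with
    | zero => simpa using Equiv.Perm.SameCycle.refl _ _
    | succ k ih =>
      by_cases h : (c ^ k) x = x
      · refine ⟨(2 : ℤ), ?_⟩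
        have : (c ^ (k + 1)) x = c x := by rw [pow_succ', Equiv.Perm.mul_apply, h]
        rw [this]
        show ((c * Equiv.swap x y) ^ (2:ℤ)) x = c x
        rw [show ((2:ℤ)) = ((2:ℕ) : ℤ) by norm_num, zpow_natCast]
        have : ((c * Equiv.swap x y) ^ 2) x
            = (c * Equiv.swap x y) ((c * Equiv.swap x y) x) := by
          rw [pow_succ, pow_one, Equiv.Perm.mul_apply]
        rw [this, hdx, hdy]
      · have hmem : (c ^ k) x ∈ c.support := by
          rw [Equiv.Perm.pow_apply_mem_support]
          exact Equiv.Perm.mem_support.mpr hx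
        have hby : (c ^ k) x ≠ y := by
          intro e
          rw [e] at hmem
          exact (Equiv.Perm.mem_support.mp hmem) hy
        have happ : (c * Equiv.swap x y) ((c ^ k) x) = (c ^ (k + 1)) x := by
          rw [Equiv.Perm.mul_apply, Equiv.swap_apply_of_ne_of_ne h hby,
            pow_succ', Equiv.Perm.mul_apply]
        exact ih.trans ⟨(1 : ℤ), by simpa using happ⟩
  refine ⟨x, by rw [hdx]; exact fun h => hxy h.symm, ?_⟩
  intro b hb
  by_cases hbx : b = x
  · exact hbx ▸ Equiv.Perm.SameCycle.refl _ _
  by_cases hby : b = y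
  · exact ⟨(1 : ℤ), by simpa [hby] using hdx⟩
  · have hcb : c b ≠ b := by
      intro e
      apply hb
      rw [Equiv.Perm.mul_apply, Equiv.swap_apply_of_ne_of_ne hbx hby, e]
    obtain ⟨i, hi⟩ := hc.exists_pow_eq hx hcb
    exact hi ▸ key i

/-- Removing the point `y` (with `d x = y`) from the cycle `d` gives a cycle,
provided the cycle has length at least 3. -/
lemma isCycle_mul_swap_of_mem {d : Perm α} (hd : d.IsCycle) {x y : α} (hxy : x ≠ y)
    (hdx : d x = y) (hdy : d y ≠ x) : (d * Equiv.swap x y).IsCycle := by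
  have hinv : d⁻¹ y = x := by rw [← hdx]; exact Equiv.symm_apply_apply d x
  have h2 : d⁻¹ y ≠ y := by rw [hinv]; exact hxy
  have h3 : d⁻¹ (d⁻¹ y) ≠ y := by
    rw [hinv]
    intro e
    have := congrArg d e
    rw [Equiv.Perm.inv_def, Equiv.apply_symm_apply] at this
    exact hdy this.symm
  have h4 := (hd.inv.swap_mul h2 h3).inv
  rw [hinv] at h4
  have he : (Equiv.swap y x * d⁻¹)⁻¹ = d * Equiv.swap x y := by
    rw [mul_inv_rev, Equiv.swap_inv, inv_inv, Equiv.swap_comm]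
  rwa [he] at h4


set_option linter.unusedSectionVars false

lemma swap_cancel (c : Perm α) (x y : α) : (c * Equiv.swap x y) * Equiv.swap x y = c := by
  rw [mul_assoc, Equiv.swap_mul_self, mul_one]

/-- Multiplying on the right by a swap that moves a fixed point `y` into the
cycle of a moved point `x` preserves the number of cycles. -/
lemma card_factors_mul_swap {f : Perm α} {x y : α} (hxy : x ≠ y)
    (hfy : f y = y) (hfx : f x ≠ x) :
    (f * Equiv.swap x y).cycleFactorsFinset.card = f.cycleFactorsFinset.card := by
  set g := f * Equiv.swap x y with hg
  have hgx : g x = y := by simp [hg, Equiv.Perm.mul_apply, hfy]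
  have hgy : g y = f x := by simp [hg, Equiv.Perm.mul_apply]
  have hgz : ∀ z, z ≠ x → z ≠ y → g z = f z := by
    intro z h1 h2
    simp [hg, Equiv.Perm.mul_apply, Equiv.swap_apply_of_ne_of_ne h1 h2]
  have hynf : y ∉ f.support := Equiv.Perm.notMem_support.mpr hfy
  -- forward map
  have hi : ∀ c ∈ f.cycleFactorsFinset,
      (if x ∈ c.support then c * Equiv.swap x y else c) ∈ g.cycleFactorsFinset := by
    intro c hc
    obtain ⟨hcyc, hcapp⟩ := Equiv.Perm.mem_cycleFactorsFinset_iff.mp hc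
    have hsupp := Equiv.Perm.mem_cycleFactorsFinset_support_le hc
    have hyc : y ∉ c.support := fun h => hynf (hsupp h)
    have hcy : c y = y := Equiv.Perm.notMem_support.mp hyc
    by_cases hxc : x ∈ c.support
    · rw [if_pos hxc]
      have hcx : c x ≠ x := Equiv.Perm.mem_support.mp hxc
      refine Equiv.Perm.mem_cycleFactorsFinset_iff.mpr
        ⟨isCycle_mul_swap_of_fix hcyc hcx hcy hxy, ?_⟩
      intro a ha
      rcases eq_or_ne a x with rfl | hax
      · rw [hgx]; simp [Equiv.Perm.mul_apply, hcy]
      rcases eq_or_ne a y with rfl | hay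
      · rw [hgy]; simp [Equiv.Perm.mul_apply, hcapp x hxc]
      · have h1 : (c * Equiv.swap x y) a = c a := by
          simp [Equiv.Perm.mul_apply, Equiv.swap_apply_of_ne_of_ne hax hay]
        have hca : c a ≠ a := by
          intro e
          apply Equiv.Perm.mem_support.mp ha
          rw [h1, e]
        rw [h1, hgz a hax hay, hcapp a (Equiv.Perm.mem_support.mpr hca)]
    · rw [if_neg hxc]
      refine Equiv.Perm.mem_cycleFactorsFinset_iff.mpr ⟨hcyc, ?_⟩
      intro a ha
      have hax : a ≠ x := fun e => hxc (e ▸ ha)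
      have hay : a ≠ y := fun e => hyc (e ▸ ha)
      rw [hgz a hax hay, hcapp a ha]
  -- facts about factors of g containing y / x
  have hgyne : g y ≠ y := by
    rw [hgy]; intro e; exact hxy (f.injective (e.trans hfy.symm))
  have hgxne : g x ≠ x := by rw [hgx]; exact fun e => hxy e.symm
  have hxy_same : ∀ d ∈ g.cycleFactorsFinset, y ∈ d.support → x ∈ d.support := by
    intro d hd hyd
    have hxg : x ∈ g.support := Equiv.Perm.mem_support.mpr hgxne
    have hcf : g.cycleOf x ∈ g.cycleFactorsFinset :=
      Equiv.Perm.cycleOf_mem_cycleFactorsFinset_iff.mpr hxg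
    have hycf : y ∈ (g.cycleOf x).support :=
      Equiv.Perm.mem_support_cycleOf_iff.mpr ⟨⟨(1 : ℤ), by simpa using hgx⟩, hxg⟩
    have hdeq : d = g.cycleOf x := by
      by_contra hne
      have hdisj := g.cycleFactorsFinset_pairwise_disjoint hd hcf hne
      rcases hdisj y with h | h
      · exact Equiv.Perm.mem_support.mp hyd h
      · exact Equiv.Perm.mem_support.mp hycf h
    rw [hdeq]
    exact Equiv.Perm.mem_support_cycleOf_iff.mpr ⟨Equiv.Perm.SameCycle.refl _ _, hxg⟩
  -- backward map
  have hj : ∀ d ∈ g.cycleFactorsFinset,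
      (if y ∈ d.support then d * Equiv.swap x y else d) ∈ f.cycleFactorsFinset := by
    intro d hd
    obtain ⟨hcyc, hcapp⟩ := Equiv.Perm.mem_cycleFactorsFinset_iff.mp hd
    by_cases hyd : y ∈ d.support
    · rw [if_pos hyd]
      have hxd : x ∈ d.support := hxy_same d hd hyd
      have hdx : d x = y := by rw [hcapp x hxd, hgx]
      have hdy : d y ≠ x := by
        rw [hcapp y hyd, hgy]; exact hfx
      refine Equiv.Perm.mem_cycleFactorsFinset_iff.mpr
        ⟨isCycle_mul_swap_of_mem hcyc hxy hdx hdy, ?_⟩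
      intro a ha
      have hfixy : (d * Equiv.swap x y) y = y := by
        simp [Equiv.Perm.mul_apply, hdx]
      have hay : a ≠ y := by
        intro e
        apply Equiv.Perm.mem_support.mp ha
        rw [e, hfixy]
      by_cases hax : a = x
      · rw [hax]
        have h2 : (d * Equiv.swap x y) x = d y := by simp [Equiv.Perm.mul_apply]
        rw [h2, hcapp y hyd, hgy]
      · have h1 : (d * Equiv.swap x y) a = d a := by
          simp [Equiv.Perm.mul_apply, Equiv.swap_apply_of_ne_of_ne hax hay]
        have hda : d a ≠ a := by
          intro e
          apply Equiv.Perm.mem_support.mp ha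
          rw [h1, e]
        rw [h1, hcapp a (Equiv.Perm.mem_support.mpr hda), hgz a hax hay]
    · rw [if_neg hyd]
      have hxd : x ∉ d.support := by
        intro hxd
        apply hyd
        have : d x = y := by rw [hcapp x hxd, hgx]
        have := Equiv.Perm.apply_mem_support.mpr hxd
        rwa [‹d x = y›] at this
      refine Equiv.Perm.mem_cycleFactorsFinset_iff.mpr ⟨hcyc, ?_⟩
      intro a ha
      have hax : a ≠ x := fun e => hxd (e ▸ ha)
      have hay : a ≠ y := fun e => hyd (e ▸ ha)
      rw [hcapp a ha, hgz a hax hay]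
  refine Finset.card_nbij' (fun d => if y ∈ d.support then d * Equiv.swap x y else d)
    (fun c => if x ∈ c.support then c * Equiv.swap x y else c) hj hi ?_ ?_
  · intro d hd
    obtain ⟨hcyc, hcapp⟩ := Equiv.Perm.mem_cycleFactorsFinset_iff.mp hd
    dsimp only
    by_cases hyd : y ∈ d.support
    · rw [if_pos hyd]
      have hxin : x ∈ (d * Equiv.swap x y).support := by
        rw [Equiv.Perm.mem_support]
        have h2 : (d * Equiv.swap x y) x = d y := by simp [Equiv.Perm.mul_apply]
        rw [h2, hcapp y hyd, hgy]
        exact hfx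
      rw [if_pos hxin, swap_cancel]
    · rw [if_neg hyd]
      have hxd : x ∉ d.support := by
        intro hxd
        apply hyd
        have h1 : d x = y := by rw [hcapp x hxd, hgx]
        have := Equiv.Perm.apply_mem_support.mpr hxd
        rwa [h1] at this
      rw [if_neg hxd]
  · intro c hc
    have hsupp := Equiv.Perm.mem_cycleFactorsFinset_support_le hc
    have hyc : y ∉ c.support := fun h => hynf (hsupp h)
    dsimp only
    by_cases hxc : x ∈ c.support
    · rw [if_pos hxc]
      have hyin : y ∈ (c * Equiv.swap x y).support := by
        rw [Equiv.Perm.mem_support]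
        have h2 : (c * Equiv.swap x y) y = c x := by simp [Equiv.Perm.mul_apply]
        rw [h2]
        intro e
        exact hyc (e ▸ Equiv.Perm.apply_mem_support.mpr hxc)
      rw [if_pos hyin, swap_cancel]
    · rw [if_neg hxc, if_neg hyc]

lemma card_cycleType_eq_card_factors (f : Perm α) :
    Multiset.card f.cycleType = f.cycleFactorsFinset.card := by
  rw [Equiv.Perm.cycleType_def, Multiset.card_map]
  rfl

lemma card_cycleType_mul_swap {f : Perm α} {x y : α} (hxy : x ≠ y)
    (hfy : f y = y) (hfx : f x ≠ x) :
    Multiset.card (f * Equiv.swap x y).cycleType = Multiset.card f.cycleType := by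
  rw [card_cycleType_eq_card_factors, card_cycleType_eq_card_factors]
  exact card_factors_mul_swap hxy hfy hfx

end StarHelper
namespace StarHelper

open Equiv Finset Equiv.Perm

lemma fix0_iff {N : ℕ} (π : Perm (Fin (N+1))) :
    (∀ i : Fin (N+1), (i : ℕ) = 0 → π i = i) ↔ π 0 = 0 := by
  constructor
  · intro h; exact h 0 rfl
  · intro h i hi
    have : i = 0 := Fin.ext (by simpa using hi)
    rwa [this]

lemma pexc_eq {N : ℕ} (π : Perm (Fin (N+1))) :
    pexc π = (N+1) + c2 π - c1 π - (if π 0 = 0 then 0 else 2) := by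
  unfold pexc
  congr 1
  exact if_congr (fix0_iff π) rfl rfl

lemma c1_le {N : ℕ} (π : Perm (Fin N)) : c1 π ≤ N := by
  calc c1 π ≤ (univ : Finset (Fin N)).card := Finset.card_filter_le _ _
  _ = N := by simp

lemma c1_one (N : ℕ) : c1 (1 : Perm (Fin N)) = N := by
  unfold c1
  simp

lemma pexc_one (N : ℕ) : pexc (1 : Perm (Fin N)) = 0 := by
  unfold pexc
  rw [if_pos (by intro i _; rfl)]
  have : c2 (1 : Perm (Fin N)) = 0 := by
    unfold c2; simp [Equiv.Perm.cycleType_one]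
  rw [this, c1_one]
  omega

/-! ### Part A : extension by a fixed last point -/

def eA (M : ℕ) : Fin (M+1) ≃ {x : Fin (M+2) // x ≠ Fin.last (M+1)} where
  toFun x := ⟨⟨x.1, by have := x.isLt; omega⟩, by
    intro h
    have := congrArg Fin.val h
    simp only [Fin.val_last] at this
    have := x.isLt; omega⟩
  invFun y := ⟨y.1.1, by
    have h1 := y.1.isLt
    have h2 : (y.1 : ℕ) ≠ M+1 := by
      intro hh
      exact y.2 (Fin.ext (by simpa using hh))
    omega⟩
  left_inv x := by ext; rfl
  right_inv y := by ext; rfl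

lemma coe_eA_injective (M : ℕ) :
    Function.Injective (fun w : Fin (M+1) => ((eA M w : Fin (M+2)))) := by
  intro a b h
  exact (eA M).injective (Subtype.coe_injective h)

lemma eA_zero (M : ℕ) : ((eA M 0 : Fin (M+2))) = 0 := rfl

lemma extA_last (M : ℕ) (σ : Perm (Fin (M+1))) :
    (σ.extendDomain (eA M)) (Fin.last (M+1)) = Fin.last (M+1) :=
  Equiv.Perm.extendDomain_apply_not_subtype _ (eA M) (not_not.mpr rfl)

lemma extA_app (M : ℕ) (σ : Perm (Fin (M+1))) (w : Fin (M+1)) :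
    (σ.extendDomain (eA M)) (eA M w) = eA M (σ w) :=
  Equiv.Perm.extendDomain_apply_image _ _ _

lemma c2_extA (M : ℕ) (σ : Perm (Fin (M+1))) :
    c2 (σ.extendDomain (eA M)) = c2 σ := by
  unfold c2
  rw [Equiv.Perm.cycleType_extendDomain]

lemma c1_extA (M : ℕ) (σ : Perm (Fin (M+1))) :
    c1 (σ.extendDomain (eA M)) = c1 σ + 1 := by
  unfold c1
  have hset : (univ.filter fun x : Fin (M+2) => (σ.extendDomain (eA M)) x = x)
      = insert (Fin.last (M+1))
        ((univ.filter fun w : Fin (M+1) => σ w = w).image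
          (fun w => ((eA M w : Fin (M+2))))) := by
    ext x
    simp only [mem_filter, mem_univ, true_and, mem_insert, mem_image]
    constructor
    · intro hx
      by_cases hl : x = Fin.last (M+1)
      · exact Or.inl hl
      · refine Or.inr ⟨(eA M).symm ⟨x, hl⟩, ?_, ?_⟩
        · have hw : (eA M) ((eA M).symm ⟨x, hl⟩) = ⟨x, hl⟩ := (eA M).apply_symm_apply _
          have h1 : (σ.extendDomain (eA M)) (eA M ((eA M).symm ⟨x, hl⟩))
              = eA M (σ ((eA M).symm ⟨x, hl⟩)) := extA_app M σ _
          rw [hw] at h1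
          have : ((eA M (σ ((eA M).symm ⟨x, hl⟩)) : Fin (M+2))) = x := by
            rw [← h1]; exact hx
          have h2 : eA M (σ ((eA M).symm ⟨x, hl⟩)) = ⟨x, hl⟩ := Subtype.ext this
          conv_rhs => rw [← h2, Equiv.symm_apply_apply]
        · have hw : (eA M) ((eA M).symm ⟨x, hl⟩) = ⟨x, hl⟩ := (eA M).apply_symm_apply _
          rw [hw]
    · rintro (rfl | ⟨w, hw, rfl⟩)
      · exact extA_last M σ
      · rw [extA_app M σ w, hw]
  rw [hset, Finset.card_insert_of_notMem, Finset.card_image_of_injective _ (coe_eA_injective M)]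
  · intro hmem
    obtain ⟨w, _, hw⟩ := Finset.mem_image.mp hmem
    exact (eA M w).2 hw

lemma extA_zero_iff (M : ℕ) (σ : Perm (Fin (M+1))) :
    (σ.extendDomain (eA M)) 0 = 0 ↔ σ 0 = 0 := by
  rw [← eA_zero M, extA_app M σ 0]
  constructor
  · intro h
    exact (eA M).injective (Subtype.coe_injective h)
  · intro h; rw [h]

lemma pexc_extA (M : ℕ) (σ : Perm (Fin (M+1))) :
    pexc (σ.extendDomain (eA M)) = pexc σ := by
  rw [pexc_eq (N := M+1) (σ.extendDomain (eA M)), pexc_eq (N := M) σ, c1_extA, c2_extA]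
  have h1 : c1 σ ≤ M + 1 := c1_le σ
  have h2 : (if (σ.extendDomain (eA M)) 0 = 0 then 0 else 2)
      = (if σ 0 = 0 then 0 else 2) := if_congr (extA_zero_iff M σ) rfl rfl
  rw [h2]
  by_cases h : σ 0 = 0 <;> simp [h] <;> omega

noncomputable def tauA (M : ℕ) (π : Perm (Fin (M+2))) : Perm (Fin (M+1)) :=
  if h : ∀ x : Fin (M+2), x ≠ Fin.last (M+1) ↔ π x ≠ Fin.last (M+1) then
    (eA M).symm.permCongr (π.subtypePerm (fun x => (h x).symm)) else 1

lemma tauA_cond {M : ℕ} {π : Perm (Fin (M+2))} (hl : π (Fin.last (M+1)) = Fin.last (M+1)) :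
    ∀ x : Fin (M+2), x ≠ Fin.last (M+1) ↔ π x ≠ Fin.last (M+1) := by
  intro x
  apply not_iff_not.mpr
  constructor
  · intro h; rw [h, hl]
  · intro h; exact π.injective (h.trans hl.symm)

lemma extA_tauA {M : ℕ} {π : Perm (Fin (M+2))}
    (hl : π (Fin.last (M+1)) = Fin.last (M+1)) :
    (tauA M π).extendDomain (eA M) = π := by
  rw [tauA, dif_pos (tauA_cond hl)]
  refine Equiv.ext fun x => ?_
  by_cases px : x = Fin.last (M+1)
  · rw [px, hl]
    exact Equiv.Perm.extendDomain_apply_not_subtype _ (eA M) (not_not.mpr rfl)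
  · rw [Equiv.Perm.extendDomain_apply_subtype _ (eA M) px]
    simp [Equiv.permCongr_apply, Equiv.Perm.subtypePerm_apply]

lemma extA_injective (M : ℕ) :
    Function.Injective (fun σ : Perm (Fin (M+1)) => σ.extendDomain (eA M)) := by
  intro a b h
  ext w
  have h1 := Equiv.Perm.ext_iff.mp h ((eA M w : Fin (M+2)))
  rw [extA_app, extA_app] at h1
  exact congrArg Fin.val ((eA M).injective (Subtype.coe_injective h1))

lemma tauA_extA (M : ℕ) (σ : Perm (Fin (M+1))) :
    tauA M (σ.extendDomain (eA M)) = σ :=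
  extA_injective M (extA_tauA (extA_last M σ))

lemma partA (M k : ℕ) :
    (univ.filter fun π : Perm (Fin (M+2)) =>
        (pexc π = k ∧ π 0 = 0) ∧ π (Fin.last (M+1)) = Fin.last (M+1)).card =
    (univ.filter fun σ : Perm (Fin (M+1)) => pexc σ = k ∧ σ 0 = 0).card := by
  refine Finset.card_nbij' (fun π => tauA M π) (fun σ => σ.extendDomain (eA M)) ?_ ?_ ?_ ?_
  · intro π hπ
    obtain ⟨⟨hp, h0⟩, hl⟩ := (Finset.mem_filter.mp hπ).2
    have hrec := extA_tauA hl
    rw [Finset.mem_coe, Finset.mem_filter]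
    refine ⟨Finset.mem_univ _, ?_, ?_⟩
    · rw [← hp]
      conv_rhs => rw [← hrec]
      exact (pexc_extA M (tauA M π)).symm
    · rw [← extA_zero_iff M, hrec, h0]
  · intro σ hσ
    obtain ⟨hp, h0⟩ := (Finset.mem_filter.mp hσ).2
    rw [Finset.mem_coe, Finset.mem_filter]
    exact ⟨Finset.mem_univ _, ⟨by rw [pexc_extA, hp], (extA_zero_iff M σ).mpr h0⟩,
      extA_last M σ⟩
  · intro π hπ
    obtain ⟨⟨hp, h0⟩, hl⟩ := (Finset.mem_filter.mp hπ).2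
    exact extA_tauA hl
  · intro σ _
    exact tauA_extA M σ

end StarHelper
namespace StarHelper

open Equiv Finset Equiv.Perm

/-! ### Part B : inserting the last point into a cycle -/

def pB (m : ℕ) (x : Fin (m+3)) : Prop := x ≠ 0 ∧ x ≠ Fin.last (m+2)

lemma zero_ne_last (m : ℕ) : (0 : Fin (m+3)) ≠ Fin.last (m+2) := by
  intro h
  have := congrArg Fin.val h
  simp [Fin.val_last] at this

lemma not_pB {m : ℕ} {x : Fin (m+3)} (h : ¬ pB m x) : x = 0 ∨ x = Fin.last (m+2) := by
  unfold pB at h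
  push_neg at h
  by_cases h1 : x = 0
  · exact Or.inl h1
  · exact Or.inr (h h1)

def eBase (m : ℕ) : Fin (m+1) ≃ {x : Fin (m+3) // pB m x} where
  toFun w := ⟨⟨w.1+1, by have := w.isLt; omega⟩, by
    constructor
    · intro h
      have := congrArg Fin.val h
      simp at this
    · intro h
      have := congrArg Fin.val h
      simp [Fin.val_last] at this
      have := w.isLt
      omega⟩
  invFun y := ⟨y.1.1 - 1, by
    have h1 := y.1.isLt
    have h2 : (y.1 : ℕ) ≠ 0 := fun hh => y.2.1 (Fin.ext (by simpa using hh))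
    have h3 : (y.1 : ℕ) ≠ m+2 := fun hh => y.2.2 (Fin.ext (by simpa [Fin.val_last] using hh))
    omega⟩
  left_inv w := by
    apply Fin.ext
    show ((w : ℕ) + 1) - 1 = (w : ℕ)
    omega
  right_inv y := by
    have h2 : (y.1 : ℕ) ≠ 0 := fun hh => y.2.1 (Fin.ext (by simpa using hh))
    apply Subtype.ext
    apply Fin.ext
    show ((y.1 : ℕ) - 1) + 1 = (y.1 : ℕ)
    omega

def eB (m : ℕ) (j : Fin (m+3)) : Fin (m+1) ≃ {x : Fin (m+3) // pB m x} :=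
  (Equiv.swap 0 (if h : pB m j then (eBase m).symm ⟨j, h⟩ else 0)).trans (eBase m)

lemma eB_zero {m : ℕ} {j : Fin (m+3)} (hj : pB m j) : ((eB m j 0 : Fin (m+3))) = j := by
  rw [eB]
  simp only [Equiv.trans_apply, Equiv.Perm.coe_mul, dif_pos hj, Equiv.swap_apply_left]
  rw [Equiv.apply_symm_apply]

lemma extB_zero (m : ℕ) (j : Fin (m+3)) (τ : Perm (Fin (m+1))) :
    (τ.extendDomain (eB m j)) 0 = 0 :=
  Equiv.Perm.extendDomain_apply_not_subtype _ (eB m j) (fun h => h.1 rfl)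

lemma extB_last (m : ℕ) (j : Fin (m+3)) (τ : Perm (Fin (m+1))) :
    (τ.extendDomain (eB m j)) (Fin.last (m+2)) = Fin.last (m+2) :=
  Equiv.Perm.extendDomain_apply_not_subtype _ (eB m j) (fun h => h.2 rfl)

lemma extB_app (m : ℕ) (j : Fin (m+3)) (τ : Perm (Fin (m+1))) (w : Fin (m+1)) :
    (τ.extendDomain (eB m j)) (eB m j w) = eB m j (τ w) :=
  Equiv.Perm.extendDomain_apply_image _ _ _

lemma extB_injective (m : ℕ) (j : Fin (m+3)) :
    Function.Injective (fun τ : Perm (Fin (m+1)) => τ.extendDomain (eB m j)) := by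
  intro a b h
  ext w
  have h1 := Equiv.Perm.ext_iff.mp h ((eB m j w : Fin (m+3)))
  rw [extB_app, extB_app] at h1
  exact congrArg Fin.val ((eB m j).injective (Subtype.coe_injective h1))

noncomputable def piOf (m : ℕ) (j : Fin (m+3)) (τ : Perm (Fin (m+1))) : Perm (Fin (m+3)) :=
  τ.extendDomain (eB m j) * Equiv.swap j (Fin.last (m+2))

lemma piOf_zero (m : ℕ) (j : Fin (m+3)) (τ : Perm (Fin (m+1))) (hj : pB m j) :
    piOf m j τ 0 = 0 := by
  unfold piOf
  rw [Equiv.Perm.mul_apply, Equiv.swap_apply_of_ne_of_ne (Ne.symm hj.1) (zero_ne_last m)]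
  exact extB_zero m j τ

lemma piOf_j (m : ℕ) (j : Fin (m+3)) (τ : Perm (Fin (m+1))) :
    piOf m j τ j = Fin.last (m+2) := by
  unfold piOf
  rw [Equiv.Perm.mul_apply, Equiv.swap_apply_left]
  exact extB_last m j τ

lemma piOf_last (m : ℕ) (j : Fin (m+3)) (τ : Perm (Fin (m+1))) (hj : pB m j) :
    piOf m j τ (Fin.last (m+2)) = ((eB m j (τ 0) : Fin (m+3))) := by
  unfold piOf
  rw [Equiv.Perm.mul_apply, Equiv.swap_apply_right]
  have h := extB_app m j τ 0
  rw [eB_zero hj] at h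
  exact h

lemma piOf_last_ne (m : ℕ) (j : Fin (m+3)) (τ : Perm (Fin (m+1))) (hj : pB m j) :
    piOf m j τ (Fin.last (m+2)) ≠ Fin.last (m+2) := by
  rw [piOf_last m j τ hj]
  exact (eB m j (τ 0)).2.2

lemma piOf_mid (m : ℕ) (j : Fin (m+3)) (τ : Perm (Fin (m+1))) (hj : pB m j)
    (w : Fin (m+1)) (hw : w ≠ 0) :
    piOf m j τ (eB m j w) = eB m j (τ w) := by
  unfold piOf
  rw [Equiv.Perm.mul_apply]
  have h1 : ((eB m j w : Fin (m+3))) ≠ j := by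
    intro e
    have e2 : ((eB m j w : Fin (m+3))) = ((eB m j 0 : Fin (m+3))) :=
      e.trans (eB_zero hj).symm
    exact hw ((eB m j).injective (Subtype.coe_injective e2))
  rw [Equiv.swap_apply_of_ne_of_ne h1 (eB m j w).2.2]
  exact extB_app m j τ w

lemma c1_piOf (m : ℕ) (j : Fin (m+3)) (τ : Perm (Fin (m+1))) (hj : pB m j) :
    c1 (piOf m j τ) = 1 + (univ.filter fun w : Fin (m+1) => τ w = w ∧ w ≠ 0).card := by
  unfold c1
  have hset : (univ.filter fun x : Fin (m+3) => piOf m j τ x = x)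
      = insert 0 ((univ.filter fun w : Fin (m+1) => τ w = w ∧ w ≠ 0).image
          (fun w => ((eB m j w : Fin (m+3))))) := by
    ext x
    simp only [mem_filter, mem_univ, true_and, mem_insert, mem_image]
    constructor
    · intro hx
      by_cases x0 : x = 0
      · exact Or.inl x0
      have hxl : x ≠ Fin.last (m+2) := by
        intro e
        rw [e] at hx
        exact piOf_last_ne m j τ hj hx
      have hxj : x ≠ j := by
        intro e
        rw [e, piOf_j m j τ] at hx
        exact hj.2 hx.symm
      have px : pB m x := ⟨x0, hxl⟩
      refine Or.inr ⟨(eB m j).symm ⟨x, px⟩, ⟨?_, ?_⟩, ?_⟩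
      · have hw : (eB m j) ((eB m j).symm ⟨x, px⟩) = ⟨x, px⟩ := (eB m j).apply_symm_apply _
        have hw0 : (eB m j).symm ⟨x, px⟩ ≠ 0 := by
          intro e
          apply hxj
          rw [← eB_zero hj, ← e, hw]
        have h1 := piOf_mid m j τ hj ((eB m j).symm ⟨x, px⟩) hw0
        rw [hw] at h1
        have h2 : ((eB m j (τ ((eB m j).symm ⟨x, px⟩)) : Fin (m+3))) = x := by
          rw [← h1]; exact hx
        have h3 : eB m j (τ ((eB m j).symm ⟨x, px⟩)) = ⟨x, px⟩ := Subtype.ext h2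
        conv_rhs => rw [← h3, Equiv.symm_apply_apply]
      · intro e
        apply hxj
        rw [← eB_zero hj, ← e]
        rw [(eB m j).apply_symm_apply]
      · rw [(eB m j).apply_symm_apply]
    · rintro (rfl | ⟨w, ⟨hw1, hw2⟩, rfl⟩)
      · exact piOf_zero m j τ hj
      · rw [piOf_mid m j τ hj w hw2, hw1]
  have hinj : Function.Injective (fun w : Fin (m+1) => ((eB m j w : Fin (m+3)))) :=
    fun a b h => (eB m j).injective (Subtype.coe_injective h)
  have hnot : (0 : Fin (m+3)) ∉ (univ.filter fun w : Fin (m+1) => τ w = w ∧ w ≠ 0).image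
      (fun w => ((eB m j w : Fin (m+3)))) := by
    intro hmem
    obtain ⟨w, _, hw⟩ := Finset.mem_image.mp hmem
    exact (eB m j w).2.1 hw
  rw [hset, Finset.card_insert_of_notMem hnot,
    Finset.card_image_of_injective _ hinj, Nat.add_comm]

lemma c1_split (m : ℕ) (τ : Perm (Fin (m+1))) :
    c1 τ = (univ.filter fun w : Fin (m+1) => τ w = w ∧ w ≠ 0).card
      + (if τ 0 = 0 then 1 else 0) := by
  unfold c1
  have hkey := Finset.card_filter_add_card_filter_not
    (s := univ.filter fun w : Fin (m+1) => τ w = w) (p := fun w => w ≠ 0)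
  rw [Finset.filter_filter] at hkey
  have hneg : ((univ.filter fun w : Fin (m+1) => τ w = w).filter fun w => ¬ w ≠ 0)
      = if τ 0 = 0 then {0} else ∅ := by
    by_cases ht : τ 0 = 0
    · rw [if_pos ht]
      ext z
      simp only [mem_filter, mem_univ, true_and, not_not, mem_singleton]
      constructor
      · rintro ⟨_, h2⟩; exact h2
      · rintro rfl; exact ⟨ht, rfl⟩
    · rw [if_neg ht]
      ext z
      simp only [mem_filter, mem_univ, true_and, not_not, notMem_empty, iff_false,
        not_and]
      rintro h1 rfl
      exact ht h1
  rw [hneg] at hkey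
  have hcard : (if τ 0 = 0 then ({0} : Finset (Fin (m+1))) else ∅).card
      = (if τ 0 = 0 then 1 else 0) := by
    by_cases ht : τ 0 = 0 <;> simp [ht]
  rw [hcard] at hkey
  omega

lemma c2_piOf (m : ℕ) (j : Fin (m+3)) (τ : Perm (Fin (m+1))) (hj : pB m j) :
    c2 (piOf m j τ) = c2 τ + (if τ 0 = 0 then 1 else 0) := by
  by_cases ht : τ 0 = 0
  · rw [if_pos ht]
    have hρj : (τ.extendDomain (eB m j)) j = j := by
      have h := extB_app m j τ 0
      rw [ht, eB_zero hj] at h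
      exact h
    have hdisj : (τ.extendDomain (eB m j)).Disjoint (Equiv.swap j (Fin.last (m+2))) := by
      intro x
      by_cases hx1 : x = j
      · left; rw [hx1, hρj]
      by_cases hx2 : x = Fin.last (m+2)
      · left; rw [hx2]; exact extB_last m j τ
      · right; exact Equiv.swap_apply_of_ne_of_ne hx1 hx2
    unfold c2 piOf
    rw [Equiv.Perm.Disjoint.cycleType_mul hdisj, Multiset.card_add, Equiv.Perm.cycleType_extendDomain]
    congr 1
    exact Equiv.Perm.card_cycleType_eq_one.mpr (Equiv.Perm.isCycle_swap hj.2)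
  · rw [if_neg ht]
    have hρj : (τ.extendDomain (eB m j)) j ≠ j := by
      have h := extB_app m j τ 0
      rw [eB_zero hj] at h
      rw [h]
      intro e
      apply ht
      have h2 : ((eB m j (τ 0) : Fin (m+3))) = ((eB m j 0 : Fin (m+3))) := by
        rw [e, eB_zero hj]
      exact (eB m j).injective (Subtype.coe_injective h2)
    unfold c2 piOf
    rw [card_cycleType_mul_swap hj.2 (extB_last m j τ) hρj,
      Equiv.Perm.cycleType_extendDomain]
    rfl

lemma pexc_piOf (m : ℕ) (j : Fin (m+3)) (τ : Perm (Fin (m+1))) (hj : pB m j) :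
    pexc (piOf m j τ) = pexc τ + 3 := by
  have h0 : piOf m j τ 0 = 0 := piOf_zero m j τ hj
  rw [pexc_eq (N := m+2) (piOf m j τ), pexc_eq (N := m) τ, if_pos h0]
  rw [c1_piOf m j τ hj, c2_piOf m j τ hj, c1_split m τ]
  set A := (univ.filter fun w : Fin (m+1) => τ w = w ∧ w ≠ 0).card with hA
  have hAle : A ≤ m := by
    have hsub0 : (univ.filter fun w : Fin (m+1) => τ w = w ∧ w ≠ 0) ⊆ univ.erase 0 :=
      fun w hw => Finset.mem_erase.mpr ⟨(Finset.mem_filter.mp hw).2.2, Finset.mem_univ _⟩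
    calc A ≤ (univ.erase (0 : Fin (m+1))).card := Finset.card_le_card hsub0
    _ = m := by
      rw [Finset.card_erase_of_mem (Finset.mem_univ _), Finset.card_univ, Fintype.card_fin]
      omega
  by_cases ht : τ 0 = 0
  · simp only [if_pos ht]
    omega
  · simp only [if_neg ht]
    have hτ0 : (τ 0 : ℕ) < m + 1 := (τ 0).isLt
    have hτ0' : (τ 0 : ℕ) ≠ 0 := fun e => ht (Fin.ext (by simpa using e))
    have hsub : (univ.filter fun w : Fin (m+1) => τ w = w ∧ w ≠ 0)
        ⊆ univ \ {0, τ 0} := by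
      intro w hw
      obtain ⟨hw1, hw2⟩ := (Finset.mem_filter.mp hw).2
      rw [Finset.mem_sdiff]
      refine ⟨Finset.mem_univ _, ?_⟩
      simp only [Finset.mem_insert, Finset.mem_singleton]
      push_neg
      refine ⟨hw2, ?_⟩
      intro e
      apply ht
      rw [e] at hw1
      exact τ.injective hw1
    have hcard := Finset.card_le_card hsub
    have hsd : (univ \ {0, τ 0} : Finset (Fin (m+1))).card = (m+1) - 2 := by
      rw [Finset.card_sdiff_of_subset (Finset.subset_univ _)]
      have h2 : ({0, τ 0} : Finset (Fin (m+1))).card = 2 := by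
        rw [Finset.card_insert_of_notMem (by simp [Ne.symm ht]), Finset.card_singleton]
      rw [h2, Finset.card_univ, Fintype.card_fin]
    rw [hsd] at hcard
    omega

lemma pB_iff {m : ℕ} {ρ : Perm (Fin (m+3))} (h0 : ρ 0 = 0)
    (hl : ρ (Fin.last (m+2)) = Fin.last (m+2)) : ∀ x, pB m x ↔ pB m (ρ x) := by
  intro x
  unfold pB
  constructor
  · rintro ⟨h1, h2⟩
    exact ⟨fun e => h1 (ρ.injective (e.trans h0.symm)),
      fun e => h2 (ρ.injective (e.trans hl.symm))⟩
  · rintro ⟨h1, h2⟩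
    exact ⟨fun e => h1 (by rw [e, h0]), fun e => h2 (by rw [e, hl])⟩

noncomputable def tauB (m : ℕ) (π : Perm (Fin (m+3))) : Perm (Fin (m+1)) :=
  if h : ∀ x : Fin (m+3), pB m x ↔
      pB m ((π * Equiv.swap (π⁻¹ (Fin.last (m+2))) (Fin.last (m+2))) x) then
    (eB m (π⁻¹ (Fin.last (m+2)))).symm.permCongr
      ((π * Equiv.swap (π⁻¹ (Fin.last (m+2))) (Fin.last (m+2))).subtypePerm (fun x => (h x).symm))
  else 1

lemma pB_inv_last {m : ℕ} {π : Perm (Fin (m+3))} (h0 : π 0 = 0)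
    (hl : π (Fin.last (m+2)) ≠ Fin.last (m+2)) : pB m (π⁻¹ (Fin.last (m+2))) := by
  have hπj : π (π⁻¹ (Fin.last (m+2))) = Fin.last (m+2) :=
    Equiv.apply_symm_apply π (Fin.last (m+2))
  constructor
  · intro e
    rw [e, h0] at hπj
    exact zero_ne_last m hπj
  · intro e
    rw [e] at hπj
    exact hl hπj

lemma piOf_tauB {m : ℕ} {π : Perm (Fin (m+3))} (h0 : π 0 = 0)
    (hl : π (Fin.last (m+2)) ≠ Fin.last (m+2)) :
    piOf m (π⁻¹ (Fin.last (m+2))) (tauB m π) = π := by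
  have hj := pB_inv_last h0 hl
  have hπj : π (π⁻¹ (Fin.last (m+2))) = Fin.last (m+2) :=
    Equiv.apply_symm_apply π (Fin.last (m+2))
  have hρ0 : (π * Equiv.swap (π⁻¹ (Fin.last (m+2))) (Fin.last (m+2))) 0 = 0 := by
    rw [Equiv.Perm.mul_apply,
      Equiv.swap_apply_of_ne_of_ne (Ne.symm hj.1) (zero_ne_last m)]
    exact h0
  have hρL : (π * Equiv.swap (π⁻¹ (Fin.last (m+2))) (Fin.last (m+2)))
      (Fin.last (m+2)) = Fin.last (m+2) := by
    rw [Equiv.Perm.mul_apply, Equiv.swap_apply_right]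
    exact hπj
  have hcond := pB_iff hρ0 hρL
  rw [piOf, tauB, dif_pos hcond]
  have hext : (((eB m (π⁻¹ (Fin.last (m+2)))).symm.permCongr
        ((π * Equiv.swap (π⁻¹ (Fin.last (m+2))) (Fin.last (m+2))).subtypePerm
          (fun x => (hcond x).symm))).extendDomain (eB m (π⁻¹ (Fin.last (m+2)))))
      = π * Equiv.swap (π⁻¹ (Fin.last (m+2))) (Fin.last (m+2)) := by
    refine Equiv.ext fun x => ?_
    by_cases px : pB m x
    · rw [Equiv.Perm.extendDomain_apply_subtype _ (eB m (π⁻¹ (Fin.last (m+2)))) px]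
      simp [Equiv.permCongr_apply, Equiv.Perm.subtypePerm_apply]
    · rw [Equiv.Perm.extendDomain_apply_not_subtype _ (eB m (π⁻¹ (Fin.last (m+2)))) px]
      rcases not_pB px with rfl | rfl
      · exact hρ0.symm
      · exact hρL.symm
  rw [hext, mul_assoc, Equiv.swap_mul_self, mul_one]

lemma inv_piOf (m : ℕ) (j : Fin (m+3)) (τ : Perm (Fin (m+1))) :
    (piOf m j τ)⁻¹ (Fin.last (m+2)) = j := by
  have h := piOf_j m j τ
  rw [← h, Equiv.Perm.inv_def, Equiv.symm_apply_apply]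

lemma tauB_piOf (m : ℕ) (j : Fin (m+3)) (τ : Perm (Fin (m+1))) (hj : pB m j) :
    tauB m (piOf m j τ) = τ := by
  have h0 := piOf_zero m j τ hj
  have hl := piOf_last_ne m j τ hj
  have hrec := piOf_tauB h0 hl
  rw [inv_piOf m j τ] at hrec
  unfold piOf at hrec
  exact extB_injective m j (mul_right_cancel hrec)

lemma card_pB (m : ℕ) : (univ.filter fun j : Fin (m+3) => pB m j).card = m + 1 := by
  have hset : (univ.filter fun j : Fin (m+3) => pB m j)
      = univ \ {0, Fin.last (m+2)} := by
    ext x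
    simp only [mem_filter, mem_univ, true_and, mem_sdiff, mem_insert, mem_singleton,
      not_or]
    simp [pB]
  rw [hset, Finset.card_sdiff_of_subset (Finset.subset_univ _)]
  have h2 : ({0, Fin.last (m+2)} : Finset (Fin (m+3))).card = 2 := by
    rw [Finset.card_insert_of_notMem (by simp [zero_ne_last m]), Finset.card_singleton]
  rw [h2, Finset.card_univ, Fintype.card_fin]
  omega


lemma partB (m k : ℕ) (hk : 3 ≤ k) :
    (univ.filter fun π : Perm (Fin (m+3)) =>
        (pexc π = k ∧ π 0 = 0) ∧ π (Fin.last (m+2)) ≠ Fin.last (m+2)).card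
      = (m+1) * W (m+1) (k-3) := by
  have hprod : (m+1) * W (m+1) (k-3)
      = ((univ.filter fun j : Fin (m+3) => pB m j) ×ˢ
         (univ.filter fun τ : Perm (Fin (m+1)) => pexc τ = k-3)).card := by
    rw [Finset.card_product, card_pB]
    rfl
  rw [hprod]
  refine Finset.card_nbij' (fun π => (π⁻¹ (Fin.last (m+2)), tauB m π))
    (fun q => piOf m q.1 q.2) ?_ ?_ ?_ ?_
  · intro π hπ
    dsimp only
    obtain ⟨⟨hp, h0⟩, hl⟩ := (Finset.mem_filter.mp hπ).2
    have hj := pB_inv_last h0 hl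
    have hrec := piOf_tauB h0 hl
    rw [Finset.mem_coe, Finset.mem_product]
    constructor
    · exact Finset.mem_filter.mpr ⟨Finset.mem_univ _, hj⟩
    · refine Finset.mem_filter.mpr ⟨Finset.mem_univ _, ?_⟩
      show pexc (tauB m π) = k - 3
      have hpp := pexc_piOf m (π⁻¹ (Fin.last (m+2))) (tauB m π) hj
      rw [hrec] at hpp
      omega
  · intro q hq
    dsimp only
    obtain ⟨hj', hτ'⟩ := Finset.mem_product.mp hq
    have hj : pB m q.1 := (Finset.mem_filter.mp hj').2
    have hτ : pexc q.2 = k - 3 := (Finset.mem_filter.mp hτ').2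
    refine Finset.mem_filter.mpr ⟨Finset.mem_univ _,
      ⟨?_, piOf_zero m q.1 q.2 hj⟩, piOf_last_ne m q.1 q.2 hj⟩
    rw [pexc_piOf m q.1 q.2 hj, hτ]
    omega
  · intro π hπ
    obtain ⟨⟨hp, h0⟩, hl⟩ := (Finset.mem_filter.mp hπ).2
    exact piOf_tauB h0 hl
  · intro q hq
    obtain ⟨hj', _⟩ := Finset.mem_product.mp hq
    have hj : pB m q.1 := (Finset.mem_filter.mp hj').2
    dsimp only
    rw [Prod.ext_iff]
    exact ⟨inv_piOf m q.1 q.2, tauB_piOf m q.1 q.2 hj⟩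

end StarHelper
namespace StarHelper

open Equiv Finset

lemma perm_small_eq_one {N : ℕ} (h : N ≤ 1) (π : Perm (Fin N)) : π = 1 := by
  apply Equiv.ext
  intro x
  apply Fin.ext
  have h1 := (π x).isLt
  have h2 := x.isLt
  simp only [Equiv.Perm.one_apply]
  omega

lemma partA' (m k : ℕ) :
    (univ.filter fun π : Perm (Fin (m+3)) =>
        (pexc π = k ∧ π 0 = 0) ∧ π (Fin.last (m+2)) = Fin.last (m+2)).card =
    (univ.filter fun σ : Perm (Fin (m+2)) => pexc σ = k ∧ σ 0 = 0).card :=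
  partA (m+1) k

end StarHelper

theorem stmt7 (n k : ℕ) (hn : 0 < n) (hk : 3 ≤ k) :
    (Finset.univ.filter fun π : Equiv.Perm (Fin n) =>
        pexc π = k ∧ π ⟨0, hn⟩ = ⟨0, hn⟩).card =
      (Finset.univ.filter fun σ : Equiv.Perm (Fin (n - 1)) =>
        pexc σ = k ∧ ∀ i : Fin (n - 1), (i : ℕ) = 0 → σ i = i).card
      + (n - 2) * W (n - 2) (k - 3) := by
  rcases n with _ | _ | _ | m
  · exact absurd hn (lt_irrefl 0)
  · -- n = 1
    have hL : (Finset.univ.filter fun π : Equiv.Perm (Fin 1) =>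
        pexc π = k ∧ π ⟨0, hn⟩ = ⟨0, hn⟩) = ∅ := by
      apply Finset.filter_eq_empty_iff.mpr
      intro π _
      rintro ⟨hp, -⟩
      rw [StarHelper.perm_small_eq_one (by norm_num) π, StarHelper.pexc_one] at hp
      omega
    have hR : (Finset.univ.filter fun σ : Equiv.Perm (Fin (1 - 1)) =>
        pexc σ = k ∧ ∀ i : Fin (1 - 1), (i : ℕ) = 0 → σ i = i) = ∅ := by
      apply Finset.filter_eq_empty_iff.mpr
      intro σ _
      rintro ⟨hp, -⟩
      rw [StarHelper.perm_small_eq_one (by norm_num) σ, StarHelper.pexc_one] at hp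
      omega
    rw [hL, hR]
    simp
  · -- n = 2
    have hL : (Finset.univ.filter fun π : Equiv.Perm (Fin 2) =>
        pexc π = k ∧ π ⟨0, hn⟩ = ⟨0, hn⟩) = ∅ := by
      apply Finset.filter_eq_empty_iff.mpr
      intro π _
      rintro ⟨hp, h0⟩
      have hz : (⟨0, hn⟩ : Fin 2) = 0 := Fin.ext (by simp)
      rw [hz] at h0
      have hπ1 : π 1 = 1 := by
        have hne : π 1 ≠ 0 := by
          intro e
          have h2 := π.injective (e.trans h0.symm)
          exact absurd (congrArg Fin.val h2) (by simp)
        apply Fin.ext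
        have hlt := (π 1).isLt
        have hv : ((π 1 : Fin 2) : ℕ) ≠ 0 := fun e => hne (Fin.ext (by simpa using e))
        simp only [Fin.val_one]
        omega
      have hπ : π = 1 := by
        apply Equiv.ext
        intro x
        by_cases hx : x = 0
        · rw [hx]; exact h0
        · have hx1 : x = 1 := by
            apply Fin.ext
            have hlt := x.isLt
            have hv : (x : ℕ) ≠ 0 := fun e => hx (Fin.ext (by simpa using e))
            simp only [Fin.val_one]
            omega
          rw [hx1]; exact hπ1
      rw [hπ, StarHelper.pexc_one] at hp
      omega
    have hR : (Finset.univ.filter fun σ : Equiv.Perm (Fin (2 - 1)) =>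
        pexc σ = k ∧ ∀ i : Fin (2 - 1), (i : ℕ) = 0 → σ i = i) = ∅ := by
      apply Finset.filter_eq_empty_iff.mpr
      intro σ _
      rintro ⟨hp, -⟩
      rw [StarHelper.perm_small_eq_one (by norm_num) σ, StarHelper.pexc_one] at hp
      omega
    rw [hL, hR]
    simp
  · -- n = m + 3
    show (Finset.univ.filter fun π : Equiv.Perm (Fin (m+3)) =>
        pexc π = k ∧ π ⟨0, hn⟩ = ⟨0, hn⟩).card
      = (Finset.univ.filter fun σ : Equiv.Perm (Fin (m+2)) =>
          pexc σ = k ∧ ∀ i : Fin (m+2), (i : ℕ) = 0 → σ i = i).card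
        + (m+1) * W (m+1) (k-3)
    have hzero : (⟨0, hn⟩ : Fin (m+3)) = 0 := Fin.ext (by simp)
    simp only [hzero]
    have hcong : (Finset.univ.filter fun σ : Equiv.Perm (Fin (m+2)) =>
        pexc σ = k ∧ ∀ i : Fin (m+2), (i : ℕ) = 0 → σ i = i)
        = Finset.univ.filter fun σ : Equiv.Perm (Fin (m+2)) =>
          pexc σ = k ∧ σ 0 = 0 := by
      ext σ
      simp only [Finset.mem_filter, Finset.mem_univ, true_and]
      exact and_congr_right fun _ => StarHelper.fix0_iff σ
    rw [hcong]
    have hsplit := Finset.card_filter_add_card_filter_not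
      (s := Finset.univ.filter fun π : Equiv.Perm (Fin (m+3)) => pexc π = k ∧ π 0 = 0)
      (p := fun π => π (Fin.last (m+2)) = Fin.last (m+2))
    rw [Finset.filter_filter, Finset.filter_filter] at hsplit
    have hBne : (Finset.univ.filter fun π : Equiv.Perm (Fin (m+3)) =>
        (pexc π = k ∧ π 0 = 0) ∧ ¬ π (Fin.last (m+2)) = Fin.last (m+2))
        = Finset.univ.filter fun π : Equiv.Perm (Fin (m+3)) =>
        (pexc π = k ∧ π 0 = 0) ∧ π (Fin.last (m+2)) ≠ Fin.last (m+2) := rfl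
    rw [hBne] at hsplit
    have hA := StarHelper.partA' m k
    have hB := StarHelper.partB m k hk
    omega
end
end

section
/- Every permutation π of {1,…,n+k+1} with prefix exchange distance k fixes at least one element among n+1, n+2, …, n+k+1 (for n ≥ 1 and k ≥ 0). -/
open Equiv Finset Filter
open scoped Classical

noncomputable section

theorem stmt9 (n k : ℕ) (hn : 1 ≤ n) (π : Equiv.Perm (Fin (n + k + 1)))
    (h : pexc π = k) : ∃ i : Fin (n + k + 1), n ≤ (i : ℕ) ∧ π i = i := by
  by_contra hcon
  push_neg at hcon
  -- set of moved points
  set M : Finset (Fin (n+k+1)) := Finset.univ.filter (fun i => π i ≠ i) with hM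
  have hMsupp : M = π.support := by
    ext i; simp [hM, Equiv.Perm.mem_support]
  -- c1 + M.card = n+k+1
  have hc1M : c1 π + M.card = n+k+1 := by
    have := Finset.card_filter_add_card_filter_not
      (s := (Finset.univ : Finset (Fin (n+k+1)))) (p := fun i => π i = i)
    simpa [c1, hM, Finset.card_univ] using this
  -- 2 * c2 ≤ M.card
  have h2c2 : 2 * c2 π ≤ M.card := by
    rw [hMsupp, ← Equiv.Perm.sum_cycleType]
    have := Multiset.card_nsmul_le_sum (s := π.cycleType) 
      (fun x hx => Equiv.Perm.two_le_of_mem_cycleType hx)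
    simpa [c2, mul_comm] using this
  -- the set of large indices
  set S : Finset (Fin (n+k+1)) := Finset.univ.filter (fun i => n ≤ (i : ℕ)) with hS
  have hSsub : S ⊆ M := by
    intro i hi
    simp only [hS, Finset.mem_filter, Finset.mem_univ, true_and] at hi
    simp only [hM, Finset.mem_filter, Finset.mem_univ, true_and]
    exact hcon i hi
  have hScard : k + 1 ≤ S.card := by
    have hinj : ∀ a ∈ (Finset.univ : Finset (Fin (k+1))), ∀ b ∈ (Finset.univ : Finset (Fin (k+1))),
        (⟨n + a, by omega⟩ : Fin (n+k+1)) = ⟨n + b, by omega⟩ → a = b := by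
      intro a _ b _ hab
      have : n + (a : ℕ) = n + (b : ℕ) := congrArg Fin.val hab
      exact Fin.ext (by omega)
    have := Finset.card_le_card_of_injOn (f := fun j : Fin (k+1) => (⟨n + j, by omega⟩ : Fin (n+k+1)))
      (fun j _ => by simp [hS]) (t := S) hinj
    simpa using this
  unfold pexc at h
  split_ifs at h with hfix
  · -- first element fixed: pexc = n+k+1 + c2 - c1
    have hMc : k + 1 ≤ M.card := le_trans hScard (Finset.card_le_card hSsub)
    omega
  · -- first element moved
    push_neg at hfix
    obtain ⟨i0, hi0, hmov⟩ := hfix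
    have hi0M : i0 ∈ M := by
      simp only [hM, Finset.mem_filter, Finset.mem_univ, true_and]; exact hmov
    have hi0S : i0 ∉ S := by
      simp only [hS, Finset.mem_filter, Finset.mem_univ, true_and, hi0]; omega
    have hins : insert i0 S ⊆ M := by
      intro x hx
      rcases Finset.mem_insert.mp hx with rfl | hx
      · exact hi0M
      · exact hSsub hx
    have hMc : k + 2 ≤ M.card := by
      have := Finset.card_le_card hins
      rw [Finset.card_insert_of_notMem hi0S] at this
      omega
    have hc2pos : 1 ≤ c2 π := by
      rcases Nat.eq_zero_or_pos (c2 π) with h0 | h0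
      · exfalso
        have : π.cycleType = 0 := Multiset.card_eq_zero.mp h0
        have : π = 1 := Equiv.Perm.cycleType_eq_zero.mp this
        exact hmov (by simp [this])
      · exact h0
    omega
end
end
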